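/- arXiv:1910.02431 — 10 statements merged into one kernel-verified Lean document; each statement's English description precedes it below -/
import Mathlib

section
/- Let G be a connected graph of diameter at least 4. Then there exists a minimum edge dominating set of G that contains no leaf edges (edges incident to a vertex of degree 1). -/
open SimpleGraph

variable {V : Type*}

/-- Two edges (as unordered pairs) are adjacent: distinct and sharing an endpoint. -/
def eAdj (e f : Sym2 V) : Prop := e ≠ f ∧ ∃ v, v ∈ e ∧ v ∈ f

/-- `F` is an edge dominating set of `G`. -/
def IsEDS (G : SimpleGraph V) (F : Set (Sym2 V)) : Prop :=
  F ⊆ G.edgeSet ∧ ∀ e ∈ G.edgeSet, e ∉ F → ∃ f ∈ F, eAdj e f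

/-- `F` is a total edge dominating set of `G`. -/
def IsTEDS (G : SimpleGraph V) (F : Set (Sym2 V)) : Prop :=
  F ⊆ G.edgeSet ∧ ∀ e ∈ G.edgeSet, ∃ f ∈ F, eAdj e f

/-- The edge domination number γ'(G). -/
noncomputable def edsNum (G : SimpleGraph V) : ℕ :=
  sInf {n | ∃ F : Set (Sym2 V), IsEDS G F ∧ F.ncard = n}

/-- The total edge domination number γ'_t(G). -/
noncomputable def tedsNum (G : SimpleGraph V) : ℕ :=
  sInf {n | ∃ F : Set (Sym2 V), IsTEDS G F ∧ F.ncard = n}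

/-- A leaf edge: an edge with an endpoint of degree 1. -/
def IsLeafEdge (G : SimpleGraph V) [∀ v : V, Fintype (G.neighborSet v)] (e : Sym2 V) : Prop :=
  e ∈ G.edgeSet ∧ ∃ v ∈ e, G.degree v = 1

/-- A degree-1 vertex has a unique neighbor. -/
lemma uniq_nbr [Fintype V] [DecidableEq V] (G : SimpleGraph V) [DecidableRel G.Adj]
    {v u z : V} (hv : G.degree v = 1) (hu : G.Adj v u) (hz : G.Adj v z) : z = u := by
  obtain ⟨a, ha⟩ := Finset.card_eq_one.mp (hv : (G.neighborFinset v).card = 1)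
  have h2 : u ∈ G.neighborFinset v := by simpa using hu
  have h3 : z ∈ G.neighborFinset v := by simpa using hz
  rw [ha] at h2 h3
  simp at h2 h3; exact h3.trans h2.symm

/-- Every edge containing a degree-1 vertex `v` with neighbor `u` equals `s(u,v)`. -/
lemma edge_at_leaf [Fintype V] [DecidableEq V] (G : SimpleGraph V) [DecidableRel G.Adj]
    {v u : V} (hv : G.degree v = 1) (hu : G.Adj u v) {g : Sym2 V}
    (hg : g ∈ G.edgeSet) (hvg : v ∈ g) : g = s(u, v) := by
  induction g using Sym2.ind with
  | _ a b =>
    have hab : G.Adj a b := hg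
    rcases Sym2.mem_iff.mp hvg with h | h
    · subst h
      have := uniq_nbr G hv hu.symm hab
      subst this; exact Sym2.eq_swap
    · subst h
      have := uniq_nbr G hv hu.symm hab.symm
      subst this; rfl

/-- If `dist u x ≥ 2` then `u` has a neighbor of degree at least 2. -/
lemma exists_nbr_deg_two_of_dist [Fintype V] [DecidableEq V] (G : SimpleGraph V)
    [DecidableRel G.Adj] (hc : G.Connected) {u x : V} (h2 : 2 ≤ G.dist u x) :
    ∃ w, G.Adj u w ∧ 2 ≤ G.degree w := by
  obtain ⟨p, hp⟩ := (hc.preconnected u x).exists_walk_length_eq_dist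
  cases p with
  | nil => simp at hp; simp at h2
  | cons h q =>
    rename_i b
    cases q with
    | nil => simp at hp; omega
    | cons h' q' =>
      rename_i c
      refine ⟨b, h, ?_⟩
      have huc : u ≠ c := by
        rintro rfl
        have hle := G.dist_le q'
        simp [SimpleGraph.Walk.length_cons] at hp
        omega
      have hsub : ({u, c} : Finset V) ⊆ G.neighborFinset b := by
        intro z hz
        simp only [Finset.mem_insert, Finset.mem_singleton] at hz
        rcases hz with rfl | rfl
        · simpa using h.symm
        · simpa using h'
      calc 2 = ({u, c} : Finset V).card := (Finset.card_pair huc).symm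
        _ ≤ (G.neighborFinset b).card := Finset.card_le_card hsub
        _ = G.degree b := rfl

/-- Under diameter ≥ 4, a support vertex `u` (neighbor of a leaf `v`) has a
neighbor `w ≠ v` of degree ≥ 2. -/
lemma exists_good_nbr [Fintype V] [DecidableEq V] (G : SimpleGraph V) [DecidableRel G.Adj]
    (hc : G.Connected) (hdiam : 4 ≤ G.diam) {u v : V} (huv : G.Adj u v)
    (hv : G.degree v = 1) : ∃ w, G.Adj u w ∧ w ≠ v ∧ 2 ≤ G.degree w := by
  have : Nonempty V := hc.nonempty
  obtain ⟨x, y, hxy⟩ := G.exists_dist_eq_diam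
  have htri := hc.dist_triangle (u := x) (v := u) (w := y)
  have hxu : G.dist x u = G.dist u x := G.dist_comm ..
  have hkey : 2 ≤ G.dist u x ∨ 2 ≤ G.dist u y := by omega
  have main : ∀ z : V, 2 ≤ G.dist u z → ∃ w, G.Adj u w ∧ w ≠ v ∧ 2 ≤ G.degree w := by
    intro z hz
    obtain ⟨w, hw, hdw⟩ := exists_nbr_deg_two_of_dist G hc hz
    refine ⟨w, hw, fun hwv => ?_, hdw⟩
    rw [hwv, hv] at hdw; omega
  rcases hkey with h | h
  · exact main x h
  · exact main y h

theorem stmt6 {V : Type*} [Fintype V] [DecidableEq V] (G : SimpleGraph V) [DecidableRel G.Adj]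
    (hc : G.Connected) (hdiam : 4 ≤ G.diam) :
    ∃ F : Set (Sym2 V), IsEDS G F ∧ F.ncard = edsNum G ∧
      ∀ e ∈ F, ¬ IsLeafEdge G e := by
  classical
  -- the whole edge set is an EDS
  have hfull : IsEDS G G.edgeSet := ⟨subset_rfl, fun e he hne => absurd he hne⟩
  have hmem : edsNum G ∈ {n | ∃ F : Set (Sym2 V), IsEDS G F ∧ F.ncard = n} :=
    Nat.sInf_mem ⟨G.edgeSet.ncard, G.edgeSet, hfull, rfl⟩
  obtain ⟨F₀, hF₀, hF₀card⟩ := hmem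
  -- minimize the number of leaf edges among minimum EDSs
  set S : Set ℕ := {m | ∃ F : Set (Sym2 V), IsEDS G F ∧ F.ncard = edsNum G ∧
      {g ∈ F | IsLeafEdge G g}.ncard = m} with hS
  have hSne : S.Nonempty := ⟨_, F₀, hF₀, hF₀card, rfl⟩
  obtain ⟨F, hF, hFcard, hFleaf⟩ := Nat.sInf_mem hSne
  refine ⟨F, hF, hFcard, ?_⟩
  by_contra hbad
  push_neg at hbad
  obtain ⟨e, heF, heLeaf⟩ := hbad
  obtain ⟨heE, v, hve, hdegv⟩ := heLeaf
  -- get the other endpoint u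
  have hexu : ∃ u, G.Adj u v ∧ e = s(u, v) := by
    induction e using Sym2.ind with
    | _ a b =>
      have hab : G.Adj a b := heE
      rcases Sym2.mem_iff.mp hve with h | h
      · subst h; exact ⟨b, hab.symm, Sym2.eq_swap⟩
      · subst h; exact ⟨a, hab, rfl⟩
  obtain ⟨u, huv, rfl⟩ := hexu
  obtain ⟨w, huw, hwv, hdegw⟩ := exists_good_nbr G hc hdiam huv hdegv
  set f : Sym2 V := s(u, w) with hf
  have hfe : f ≠ s(u, v) := fun h => hwv (Sym2.congr_right.mp h)
  -- the swapped set
  set F' : Set (Sym2 V) := insert f (F \ {s(u, v)}) with hF'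
  -- F' is an EDS
  have hF'eds : IsEDS G F' := by
    constructor
    · intro g hg
      rcases hg with rfl | ⟨hgF, _⟩
      · exact huw
      · exact hF.1 hgF
    · intro g hg hgF'
      have hgf : g ≠ f := fun h => hgF' (h ▸ Set.mem_insert _ _)
      by_cases hge : g = s(u, v)
      · subst hge
        exact ⟨f, Set.mem_insert _ _, hgf, u, by simp, by simp [hf]⟩
      · have hgFn : g ∉ F := fun h => hgF' (Set.mem_insert_of_mem _ ⟨h, hge⟩)
        obtain ⟨h, hhF, hadj⟩ := hF.2 g hg hgFn
        by_cases hhe : h = s(u, v)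
        · subst hhe
          obtain ⟨hne, z, hzg, hze⟩ := hadj
          rcases Sym2.mem_iff.mp hze with rfl | rfl
          · exact ⟨f, Set.mem_insert _ _, hgf, z, hzg, by simp [hf]⟩
          · exact absurd (edge_at_leaf G hdegv huv hg hzg) hge
        · exact ⟨h, Set.mem_insert_of_mem _ ⟨hhF, hhe⟩, hadj⟩
  -- basic minimality: any EDS has ncard ≥ edsNum
  have hmin : ∀ F'' : Set (Sym2 V), IsEDS G F'' → edsNum G ≤ F''.ncard :=
    fun F'' h => Nat.sInf_le ⟨F'', h, rfl⟩
  have hFfin : F.Finite := Set.toFinite F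
  have hdiffcard : (F \ {s(u, v)}).ncard + 1 = F.ncard :=
    Set.ncard_diff_singleton_add_one heF hFfin
  -- f ∉ F
  have hfF : f ∉ F := by
    intro hfF
    have : F' = F \ {s(u, v)} := Set.insert_eq_of_mem ⟨hfF, hfe⟩
    have hle := hmin F' hF'eds
    rw [this] at hle
    omega
  -- F' has the same cardinality
  have hF'card : F'.ncard = edsNum G := by
    have hfnot : f ∉ F \ {s(u, v)} := fun h => hfF h.1
    rw [hF', Set.ncard_insert_of_notMem hfnot hFfin.diff]
    omega
  -- f is not a leaf edge
  have hfnotleaf : ¬ IsLeafEdge G f := by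
    rintro ⟨_, z, hzf, hdegz⟩
    have hdegu : 2 ≤ G.degree u := by
      have hsub : ({v, w} : Finset V) ⊆ G.neighborFinset u := by
        intro t ht
        simp only [Finset.mem_insert, Finset.mem_singleton] at ht
        rcases ht with rfl | rfl
        · simpa using huv
        · simpa using huw
      calc 2 = ({v, w} : Finset V).card := (Finset.card_pair (Ne.symm hwv)).symm
        _ ≤ (G.neighborFinset u).card := Finset.card_le_card hsub
        _ = G.degree u := rfl
    rcases Sym2.mem_iff.mp hzf with rfl | rfl <;> omega
  -- leaf edges of F' are strictly fewer
  have hsubL : {g ∈ F' | IsLeafEdge G g} ⊆ {g ∈ F | IsLeafEdge G g} \ {s(u, v)} := by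
    rintro g ⟨hgF', hgleaf⟩
    rcases hgF' with rfl | ⟨hgF, hge⟩
    · exact absurd hgleaf hfnotleaf
    · exact ⟨⟨hgF, hgleaf⟩, hge⟩
  have heinL : s(u, v) ∈ {g ∈ F | IsLeafEdge G g} := ⟨heF, heE, v, hve, hdegv⟩
  have hLfin : ({g ∈ F | IsLeafEdge G g} : Set (Sym2 V)).Finite := Set.toFinite _
  have hLcard : ({g ∈ F | IsLeafEdge G g} \ {s(u, v)}).ncard + 1
      = {g ∈ F | IsLeafEdge G g}.ncard := Set.ncard_diff_singleton_add_one heinL hLfin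
  have hlt : {g ∈ F' | IsLeafEdge G g}.ncard < {g ∈ F | IsLeafEdge G g}.ncard := by
    have := Set.ncard_le_ncard hsubL hLfin.diff
    omega
  have : sInf S ≤ {g ∈ F' | IsLeafEdge G g}.ncard :=
    Nat.sInf_le ⟨F', hF'eds, hF'card, rfl⟩
  omega
end

section
/- Let G be a connected graph of diameter at least 4. Then there exists a minimum total edge dominating set of G containing no leaf edges. -/
open SimpleGraph

variable {V : Type*}

/-- Connectivity closure: a set closed under adjacency containing a vertex is everything. -/
lemma my_closure {G : SimpleGraph V} (hc : G.Connected) (S : Set V) (u : V)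
    (hu : u ∈ S) (hS : ∀ x ∈ S, ∀ y, G.Adj x y → y ∈ S) : ∀ a, a ∈ S := by
  intro a
  obtain ⟨p⟩ := hc.preconnected a u
  induction p with
  | nil => exact hu
  | cons h p ih => exact hS _ (ih hu) _ h.symm

lemma my_deg_one_unique {G : SimpleGraph V} [Fintype V] [DecidableEq V] [DecidableRel G.Adj]
    {v a b : V} (h : G.degree v = 1) (ha : G.Adj v a) (hb : G.Adj v b) : a = b := by
  have := Finset.card_le_one.mp (le_of_eq h) a ((G.mem_neighborFinset _ _).mpr ha)
    b ((G.mem_neighborFinset _ _).mpr hb)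
  exact this

lemma my_two_le_degree {G : SimpleGraph V} [Fintype V] [DecidableEq V] [DecidableRel G.Adj]
    {v a b : V} (ha : G.Adj v a) (hb : G.Adj v b) (hab : a ≠ b) : 2 ≤ G.degree v := by
  rw [SimpleGraph.degree]
  exact Finset.one_lt_card.mpr ⟨a, (G.mem_neighborFinset _ _).mpr ha, b, (G.mem_neighborFinset _ _).mpr hb, hab⟩

/-- If all neighbors of `u` other than `w`, and all neighbors of `w` other than `u`,
have degree 1, then the diameter is at most 3 — contradiction with `4 ≤ diam`. -/
lemma my_diam3 {G : SimpleGraph V} [Fintype V] [DecidableEq V] [DecidableRel G.Adj]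
    (hc : G.Connected) (hdiam : 4 ≤ G.diam) {u w : V} (huw : G.Adj u w)
    (hu : ∀ x, G.Adj u x → x ≠ w → G.degree x = 1)
    (hw : ∀ x, G.Adj w x → x ≠ u → G.degree x = 1) : False := by
  have hne : Nonempty V := hc.nonempty
  set S : Set V := {a | a = u ∨ a = w ∨ G.Adj u a ∨ G.Adj w a} with hS
  have hclosed : ∀ x ∈ S, ∀ y, G.Adj x y → y ∈ S := by
    rintro x (rfl | rfl | hx | hx) y hxy
    · exact Or.inr (Or.inr (Or.inl hxy))
    · exact Or.inr (Or.inr (Or.inr hxy))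
    · by_cases hxw : x = w
      · subst hxw; exact Or.inr (Or.inr (Or.inr hxy))
      · have := my_deg_one_unique (hu x hx hxw) hxy hx.symm
        exact Or.inl this
    · by_cases hxu : x = u
      · subst hxu; exact Or.inr (Or.inr (Or.inl hxy))
      · have := my_deg_one_unique (hw x hx hxu) hxy hx.symm
        exact Or.inr (Or.inl this)
  have hall : ∀ a, a ∈ S := my_closure hc S u (Or.inl rfl) hclosed
  -- every vertex is within distance 1 of u or of w
  have hnear : ∀ a, G.dist a u ≤ 1 ∨ G.dist a w ≤ 1 := by
    intro a
    rcases hall a with rfl | rfl | h | h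
    · exact Or.inl (by simp [SimpleGraph.dist_self])
    · exact Or.inr (by simp [SimpleGraph.dist_self])
    · exact Or.inl (le_of_eq ((SimpleGraph.dist_eq_one_iff_adj).mpr h.symm))
    · exact Or.inr (le_of_eq ((SimpleGraph.dist_eq_one_iff_adj).mpr h.symm))
  have hduw : G.dist u w = 1 := (SimpleGraph.dist_eq_one_iff_adj).mpr huw
  have hdist3 : ∀ a b : V, G.dist a b ≤ 3 := by
    intro a b
    rcases hnear a with ha | ha <;> rcases hnear b with hb | hb
    · calc G.dist a b ≤ G.dist a u + G.dist u b := hc.dist_triangle (v := u)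
        _ ≤ 1 + 1 := by
            have := SimpleGraph.dist_comm (G := G) (u := u) (v := b)
            omega
        _ ≤ 3 := by omega
    · calc G.dist a b ≤ G.dist a u + G.dist u b := hc.dist_triangle (v := u)
        _ ≤ G.dist a u + (G.dist u w + G.dist w b) := by
            have := hc.dist_triangle (u := u) (v := w) (w := b)
            omega
        _ ≤ 1 + (1 + 1) := by
            have := SimpleGraph.dist_comm (G := G) (u := w) (v := b)
            omega
        _ ≤ 3 := by omega
    · calc G.dist a b ≤ G.dist a w + G.dist w b := hc.dist_triangle (v := w)
        _ ≤ G.dist a w + (G.dist w u + G.dist u b) := by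
            have := hc.dist_triangle (u := w) (v := u) (w := b)
            omega
        _ ≤ 1 + (1 + 1) := by
            have h1 := SimpleGraph.dist_comm (G := G) (u := u) (v := b)
            have h2 : G.dist w u = 1 := by rw [SimpleGraph.dist_comm]; exact hduw
            omega
        _ ≤ 3 := by omega
    · calc G.dist a b ≤ G.dist a w + G.dist w b := hc.dist_triangle (v := w)
        _ ≤ 1 + 1 := by
            have := SimpleGraph.dist_comm (G := G) (u := w) (v := b)
            omega
        _ ≤ 3 := by omega
  obtain ⟨a, b, hab⟩ := SimpleGraph.exists_dist_eq_diam (G := G)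
  have := hdist3 a b
  omega

theorem stmt7 {V : Type*} [Fintype V] [DecidableEq V] (G : SimpleGraph V) [DecidableRel G.Adj]
    (hc : G.Connected) (hdiam : 4 ≤ G.diam) :
    ∃ F : Set (Sym2 V), IsTEDS G F ∧ F.ncard = tedsNum G ∧
      ∀ e ∈ F, ¬ IsLeafEdge G e := by
  have hne : Nonempty V := hc.nonempty
  -- the full edge set is a TEDS
  have hTE : IsTEDS G G.edgeSet := by
    refine ⟨subset_rfl, ?_⟩
    intro e he
    induction e with
    | h a b =>
      rw [G.mem_edgeSet] at he
      have hab : a ≠ b := G.ne_of_adj he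
      have hz : ∃ z, (G.Adj a z ∧ z ≠ b) ∨ (G.Adj b z ∧ z ≠ a) := by
        by_contra hcon
        push_neg at hcon
        have hclosed : ∀ x ∈ ({a, b} : Set V), ∀ y, G.Adj x y → y ∈ ({a, b} : Set V) := by
          intro x hx y hxy
          simp only [Set.mem_insert_iff, Set.mem_singleton_iff] at hx ⊢
          rcases hx with rfl | rfl
          · exact Or.inr ((hcon y).1 hxy)
          · exact Or.inl ((hcon y).2 hxy)
        have hall := my_closure hc _ a (Set.mem_insert _ _) hclosed
        have hdist : ∀ x y : V, G.dist x y ≤ 1 := by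
          intro x y
          have hx := hall x; have hy := hall y
          simp only [Set.mem_insert_iff, Set.mem_singleton_iff] at hx hy
          rcases hx with rfl | rfl <;> rcases hy with rfl | rfl <;>
            simp [SimpleGraph.dist_self, (SimpleGraph.dist_eq_one_iff_adj).mpr he,
              (SimpleGraph.dist_eq_one_iff_adj).mpr he.symm]
        obtain ⟨x, y, hxy⟩ := SimpleGraph.exists_dist_eq_diam (G := G)
        have := hdist x y
        omega
      obtain ⟨z, ⟨hz1, hz2⟩ | ⟨hz1, hz2⟩⟩ := hz
      · exact ⟨s(a, z), G.mem_edgeSet.mpr hz1,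
          fun h => hz2 (Sym2.congr_right.mp h).symm, a, by simp, by simp⟩
      · refine ⟨s(b, z), G.mem_edgeSet.mpr hz1, fun h => ?_, b, by simp, by simp⟩
        rw [Sym2.eq_iff] at h
        rcases h with ⟨h1, h2⟩ | ⟨h1, h2⟩
        · exact hab h1
        · exact hz2 h1.symm
  -- tedsNum is attained
  have hTmem : tedsNum G ∈ {n | ∃ F : Set (Sym2 V), IsTEDS G F ∧ F.ncard = n} :=
    Nat.sInf_mem ⟨G.edgeSet.ncard, G.edgeSet, hTE, rfl⟩
  obtain ⟨F0, hF0, hcard0⟩ := hTmem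
  -- minimize number of leaf edges among minimum TEDSs
  set M : Set ℕ := {n | ∃ F : Set (Sym2 V), IsTEDS G F ∧ F.ncard = tedsNum G ∧
    {e ∈ F | IsLeafEdge G e}.ncard = n} with hM
  have hMmem : sInf M ∈ M := Nat.sInf_mem ⟨_, F0, hF0, hcard0, rfl⟩
  obtain ⟨F, hF, hcard, hleafcount⟩ := hMmem
  refine ⟨F, hF, hcard, ?_⟩
  by_contra hcon
  push_neg at hcon
  obtain ⟨e, heF, heleaf⟩ := hcon
  obtain ⟨heE, v, hve, hdegv⟩ := heleaf
  obtain ⟨u, rfl⟩ := Sym2.mem_iff_exists.mp hve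
  have hadjvu : G.Adj v u := G.mem_edgeSet.mp heE
  have hvu : v ≠ u := G.ne_of_adj hadjvu
  -- a neighbor g of e in F; it must share u
  obtain ⟨g, hgF, hge, c, hce, hcg⟩ := hF.2 _ heE
  have hgE : g ∈ G.edgeSet := hF.1 hgF
  have hug : u ∈ g := by
    rcases Sym2.mem_iff.mp hce with rfl | rfl
    · exfalso
      obtain ⟨z, rfl⟩ := Sym2.mem_iff_exists.mp hcg
      have hadj : G.Adj c z := G.mem_edgeSet.mp hgE
      have hzu : z = u := my_deg_one_unique hdegv hadj hadjvu
      exact hge (by rw [hzu])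
    · exact hcg
  obtain ⟨w, rfl⟩ := Sym2.mem_iff_exists.mp hug
  have hadjuw : G.Adj u w := G.mem_edgeSet.mp hgE
  have hwu : w ≠ u := (G.ne_of_adj hadjuw).symm
  have hwv : w ≠ v := by
    rintro rfl
    exact hge Sym2.eq_swap
  have hge' : s(v, u) ≠ s(u, w) := hge
  have hdegu : 2 ≤ G.degree u := my_two_le_degree hadjvu.symm hadjuw (Ne.symm hwv)
  -- find a non-leaf edge f adjacent to g = s(u,w)
  have hx : ∃ x, (G.Adj u x ∧ x ≠ w ∧ 2 ≤ G.degree x) ∨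
      (G.Adj w x ∧ x ≠ u ∧ 2 ≤ G.degree x) := by
    by_contra hcon2
    push_neg at hcon2
    refine my_diam3 hc hdiam hadjuw (fun x hx hxw => ?_) (fun x hx hxu => ?_)
    · have h1 : 1 ≤ G.degree x := by
        rw [← SimpleGraph.card_neighborFinset_eq_degree]
        exact Finset.card_pos.mpr ⟨u, (G.mem_neighborFinset _ _).mpr hx.symm⟩
      have := (hcon2 x).1 hx hxw
      omega
    · have h1 : 1 ≤ G.degree x := by
        rw [← SimpleGraph.card_neighborFinset_eq_degree]
        exact Finset.card_pos.mpr ⟨w, (G.mem_neighborFinset _ _).mpr hx.symm⟩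
      have := (hcon2 x).2 hx hxu
      omega
  obtain ⟨x, hx⟩ := hx
  obtain ⟨f, hfE, hfe, hfg, hfadjg, hfnotleaf⟩ :
      ∃ f, f ∈ G.edgeSet ∧ f ≠ s(v, u) ∧ f ≠ s(u, w) ∧ eAdj s(u, w) f ∧
        ¬ IsLeafEdge G f := by
    rcases hx with ⟨h1, h2, h3⟩ | ⟨h1, h2, h3⟩
    · have hxu : x ≠ u := (G.ne_of_adj h1).symm
      have hxv : x ≠ v := by
        rintro rfl
        omega
      refine ⟨s(u, x), G.mem_edgeSet.mpr h1, ?_, ?_, ⟨?_, u, by simp, by simp⟩, ?_⟩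
      · intro h
        rw [Sym2.eq_iff] at h
        rcases h with ⟨ha, hb⟩ | ⟨ha, hb⟩
        · exact hvu ha.symm
        · exact hxv hb
      · intro h; exact h2 (Sym2.congr_right.mp h)
      · intro h; exact h2 (Sym2.congr_right.mp h).symm
      · rintro ⟨-, z, hz, hdz⟩
        rcases Sym2.mem_iff.mp hz with rfl | rfl <;> omega
    · have hdegw : 2 ≤ G.degree w := my_two_le_degree hadjuw.symm h1 (Ne.symm h2)
      refine ⟨s(w, x), G.mem_edgeSet.mpr h1, ?_, ?_, ⟨?_, w, by simp, by simp⟩, ?_⟩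
      · intro h
        rw [Sym2.eq_iff] at h
        rcases h with ⟨ha, hb⟩ | ⟨ha, hb⟩
        · exact hwv ha
        · exact hwu ha
      · intro h
        rw [Sym2.eq_iff] at h
        rcases h with ⟨ha, hb⟩ | ⟨ha, hb⟩
        · exact hwu ha
        · exact h2 hb
      · intro h
        rw [Sym2.eq_iff] at h
        rcases h with ⟨ha, hb⟩ | ⟨ha, hb⟩
        · exact hwu ha.symm
        · exact h2 ha.symm
      · rintro ⟨-, z, hz, hdz⟩
        rcases Sym2.mem_iff.mp hz with rfl | rfl <;> omega
  -- key domination property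
  have key : ∀ h ∈ G.edgeSet, ∃ f', (f' ∈ F ∧ f' ≠ s(v, u) ∨ f' = f) ∧ eAdj h f' := by
    intro h hh
    obtain ⟨f0, hf0F, hadj0⟩ := hF.2 h hh
    by_cases hf0e : f0 = s(v, u)
    · subst hf0e
      obtain ⟨hne0, c, hch, hce0⟩ := hadj0
      have huh : u ∈ h := by
        rcases Sym2.mem_iff.mp hce0 with rfl | rfl
        · exfalso
          obtain ⟨z, rfl⟩ := Sym2.mem_iff_exists.mp hch
          have hadj : G.Adj c z := G.mem_edgeSet.mp hh
          have hzu : z = u := my_deg_one_unique hdegv hadj hadjvu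
          exact hne0 (by rw [hzu])
        · exact hch
      by_cases hhg : h = s(u, w)
      · subst hhg
        exact ⟨f, Or.inr rfl, hfadjg⟩
      · exact ⟨s(u, w), Or.inl ⟨hgF, Ne.symm hge'⟩, hhg, u, huh, by simp⟩
    · exact ⟨f0, Or.inl ⟨hf0F, hf0e⟩, hadj0⟩
  -- f cannot already be in F (else F \ {e} would be a smaller TEDS)
  have hfF : f ∉ F := by
    intro hfF
    have hTEDS' : IsTEDS G (F \ {s(v, u)}) := by
      refine ⟨(Set.diff_subset).trans hF.1, ?_⟩
      intro h hh
      obtain ⟨f', hf', hadj'⟩ := key h hh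
      rcases hf' with ⟨h1, h2⟩ | rfl
      · exact ⟨f', ⟨h1, h2⟩, hadj'⟩
      · exact ⟨f', ⟨hfF, hfe⟩, hadj'⟩
    have hle : tedsNum G ≤ (F \ {s(v, u)}).ncard :=
      Nat.sInf_le ⟨F \ {s(v, u)}, hTEDS', rfl⟩
    have hlt : (F \ {s(v, u)}).ncard < F.ncard :=
      Set.ncard_diff_singleton_lt_of_mem heF (Set.toFinite F)
    omega
  -- the swapped set
  set F' : Set (Sym2 V) := insert f (F \ {s(v, u)}) with hF'
  have hTEDS' : IsTEDS G F' := by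
    constructor
    · intro h hh
      rcases Set.mem_insert_iff.mp hh with rfl | ⟨h1, -⟩
      · exact hfE
      · exact hF.1 h1
    · intro h hh
      obtain ⟨f', hf', hadj'⟩ := key h hh
      rcases hf' with ⟨h1, h2⟩ | rfl
      · exact ⟨f', Or.inr ⟨h1, h2⟩, hadj'⟩
      · exact ⟨f', Or.inl rfl, hadj'⟩
  have hfF' : f ∉ F \ {s(v, u)} := fun h => hfF h.1
  have hcard' : F'.ncard = tedsNum G := by
    rw [hF', Set.ncard_def, Set.encard_exchange hfF heF, ← Set.ncard_def, hcard]
  -- leaf count strictly decreased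
  have hsub : {h ∈ F' | IsLeafEdge G h} ⊆ {h ∈ F | IsLeafEdge G h} \ {s(v, u)} := by
    rintro h ⟨hmem, hleaf⟩
    rcases Set.mem_insert_iff.mp hmem with rfl | ⟨h1, h2⟩
    · exact absurd hleaf hfnotleaf
    · exact ⟨⟨h1, hleaf⟩, h2⟩
  have hlt : {h ∈ F' | IsLeafEdge G h}.ncard < {h ∈ F | IsLeafEdge G h}.ncard := by
    calc {h ∈ F' | IsLeafEdge G h}.ncard
        ≤ ({h ∈ F | IsLeafEdge G h} \ {s(v, u)}).ncard :=
          Set.ncard_le_ncard hsub (Set.toFinite _)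
      _ < {h ∈ F | IsLeafEdge G h}.ncard :=
          Set.ncard_diff_singleton_lt_of_mem ⟨heF, heE, v, hve, hdegv⟩ (Set.toFinite _)
  have hMle : sInf M ≤ {h ∈ F' | IsLeafEdge G h}.ncard :=
    Nat.sInf_le ⟨F', hTEDS', hcard', rfl⟩
  omega
end

section
/- Let T be a tree of diameter exactly 4. Then γ'_t(T) = γ'(T). -/
open SimpleGraph

variable {V : Type*}

namespace Stmt8Aux

open SimpleGraph Walk

variable {V : Type*} {T : SimpleGraph V}


/-- In a tree, every path realizes the distance. -/
lemma path_length_eq_dist (hT : T.IsTree) {u v : V} (p : T.Walk u v) (hp : p.IsPath) :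
    p.length = T.dist u v := by
  obtain ⟨q, hq, hlen⟩ := (hT.isConnected u v).exists_path_of_dist
  have := hT.IsAcyclic.path_unique ⟨p, hp⟩ ⟨q, hq⟩
  rw [Subtype.mk_eq_mk] at this
  rw [this, hlen]

/-- Splitting a shortest walk at a support vertex gives shortest pieces. -/
lemma dist_split [DecidableEq V] (hconn : T.Connected) {u v : V} (p : T.Walk u v)
    (hl : p.length = T.dist u v) {w : V} (hw : w ∈ p.support) :
    T.dist u w = (p.takeUntil w hw).length ∧ T.dist w v = (p.dropUntil w hw).length := by
  have h1 : T.dist u w ≤ (p.takeUntil w hw).length := dist_le _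
  have h2 : T.dist w v ≤ (p.dropUntil w hw).length := dist_le _
  have h3 : (p.takeUntil w hw).length + (p.dropUntil w hw).length = p.length := by
    rw [← length_append, take_spec]
  have h4 : T.dist u v ≤ T.dist u w + T.dist w v := hconn.dist_triangle
  omega

lemma dist_add_of_mem_shortest [DecidableEq V] (hconn : T.Connected) {u v : V} (p : T.Walk u v)
    (hl : p.length = T.dist u v) {w : V} (hw : w ∈ p.support) :
    T.dist u w + T.dist w v = T.dist u v := by
  obtain ⟨h1, h2⟩ := dist_split hconn p hl hw
  rw [h1, h2, ← length_append, take_spec, hl]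

/-- Appending two paths with supports meeting only at the junction is a path. -/
lemma isPath_append {u v w : V} {p : T.Walk u v} {q : T.Walk v w} (hp : p.IsPath)
    (hq : q.IsPath) (hdisj : ∀ z, z ∈ p.support → z ∈ q.support → z = v) :
    (p.append q).IsPath := by
  rw [isPath_def, support_append]
  refine List.Nodup.append hp.support_nodup (hq.support_nodup.tail) ?_
  intro z hzp hzq
  have hzq' : z ∈ q.support := by
    rw [q.support_eq_cons]; exact List.mem_cons_of_mem _ hzq
  have hz : z = v := hdisj z hzp hzq'
  subst hz
  have := hq.support_nodup
  rw [q.support_eq_cons] at this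
  exact (List.nodup_cons.mp this).1 hzq

/-- Adjacent vertices have different distances from any vertex, in a tree. -/
lemma adj_dist_ne (hT : T.IsTree) (c : V) {a b : V} (hab : T.Adj a b) :
    T.dist c a ≠ T.dist c b := by
  classical
  obtain ⟨p, hp, hlen⟩ := (hT.isConnected c a).exists_path_of_dist
  by_cases hb : b ∈ p.support
  · have := dist_add_of_mem_shortest hT.isConnected p hlen hb
    have hba : T.dist b a = 1 := dist_eq_one_iff_adj.mpr hab.symm
    omega
  · have hq : (p.append (Walk.cons hab Walk.nil)).IsPath := by
      refine isPath_append hp (by simp [Walk.isPath_def, hab.ne]) ?_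
      intro z hzp hzq
      simp only [Walk.support_cons, Walk.support_nil, List.mem_cons, List.mem_singleton] at hzq
      rcases hzq with rfl | hz
      · rfl
      · rcases hz with rfl | hz
        · exact absurd hzp hb
        · simp at hz
    have := path_length_eq_dist hT _ hq
    rw [length_append] at this
    simp only [Walk.length_cons, Walk.length_nil] at this
    omega

/-- Two vertices on a common shortest walk from `c`: distance between them is the
difference of their distances to `c`. -/
lemma dist_on_geodesic [DecidableEq V] (hconn : T.Connected) {c v : V} (Q : T.Walk c v)
    (hQ : Q.length = T.dist c v) {w w' : V} (hw : w ∈ Q.support) (hw' : w' ∈ Q.support)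
    (hle : T.dist c w ≤ T.dist c w') : T.dist w w' = T.dist c w' - T.dist c w := by
  obtain ⟨h1a, h1b⟩ := dist_split hconn Q hQ hw
  have hsum3 : T.dist c w + T.dist w v = T.dist c v := dist_add_of_mem_shortest hconn Q hQ hw
  have hsum2 : T.dist c w' + T.dist w' v = T.dist c v := dist_add_of_mem_shortest hconn Q hQ hw'
  have hmem : w' ∈ (Q.takeUntil w hw).support ∨ w' ∈ (Q.dropUntil w hw).support := by
    rw [← mem_support_append_iff, take_spec]
    exact hw'
  rcases hmem with h | h
  · have hsum : T.dist c w' + T.dist w' w = T.dist c w :=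
      dist_add_of_mem_shortest hconn (Q.takeUntil w hw) h1a.symm h
    have h0 : T.dist w' w = 0 := by omega
    rw [dist_comm]
    omega
  · have hsum : T.dist w w' + T.dist w' v = T.dist w v :=
      dist_add_of_mem_shortest hconn (Q.dropUntil w hw) h1b.symm h
    omega

/-- Center of a diametral path in a diameter-4 tree has eccentricity ≤ 2. -/
lemma center_ecc_le_two (hT : T.IsTree) {x y c : V} (hxy : T.dist x y = 4)
    (hxc : T.dist x c = 2) (hcy : T.dist c y = 2) (hdle : ∀ u w : V, T.dist u w ≤ 4)
    (v : V) : T.dist c v ≤ 2 := by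
  classical
  have hconn := hT.isConnected
  by_contra hlt
  have hd : 3 ≤ T.dist c v := by omega
  obtain ⟨Q, hQ⟩ := hconn.exists_walk_length_eq_dist c v
  have hQp : Q.IsPath := Q.isPath_of_length_eq_dist hQ
  obtain ⟨P, hP⟩ := hconn.exists_walk_length_eq_dist c x
  obtain ⟨P', hP'⟩ := hconn.exists_walk_length_eq_dist c y
  have hcx : T.dist c x = 2 := by rw [dist_comm]; exact hxc
  -- key: Q cannot be support-disjoint (except at c) from a shortest path to x or y
  have key : ∀ {z : V}, T.dist c z = 2 → ∀ (R : T.Walk c z), R.length = T.dist c z →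
      (∀ t, t ∈ Q.support → t ∈ R.support → t = c) → False := by
    intro z hz2 R hR hdisj
    have hRp : R.IsPath := R.isPath_of_length_eq_dist hR
    have hpath : (Q.reverse.append R).IsPath := by
      refine isPath_append hQp.reverse hRp ?_
      intro t ht ht'
      rw [support_reverse, List.mem_reverse] at ht
      exact hdisj t ht ht'
    have hlen := path_length_eq_dist hT _ hpath
    rw [length_append, length_reverse] at hlen
    have h4 := hdle v z
    omega
  by_cases hPd : ∀ t, t ∈ Q.support → t ∈ P.support → t = c
  · exact key hcx P hP hPd
  by_cases hP'd : ∀ t, t ∈ Q.support → t ∈ P'.support → t = c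
  · exact key hcy P' hP' hP'd
  push_neg at hPd hP'd
  obtain ⟨w, hwQ, hwP, hwc⟩ := hPd
  obtain ⟨w', hw'Q, hw'P', hw'c⟩ := hP'd
  have hsumP : T.dist c w + T.dist w x = 2 := by
    rw [← hcx]; exact dist_add_of_mem_shortest hconn P hP hwP
  have hsumP' : T.dist c w' + T.dist w' y = 2 := by
    rw [← hcy]; exact dist_add_of_mem_shortest hconn P' hP' hw'P'
  have ha1 : 1 ≤ T.dist c w := by
    rcases Nat.eq_zero_or_pos (T.dist c w) with h | h
    · exact absurd ((hconn.dist_eq_zero_iff).mp h).symm hwc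
    · exact h
  have hb1 : 1 ≤ T.dist c w' := by
    rcases Nat.eq_zero_or_pos (T.dist c w') with h | h
    · exact absurd ((hconn.dist_eq_zero_iff).mp h).symm hw'c
    · exact h
  have t1 : T.dist x y ≤ T.dist x w + T.dist w y := hconn.dist_triangle
  have t2 : T.dist w y ≤ T.dist w w' + T.dist w' y := hconn.dist_triangle
  have hxw : T.dist x w = T.dist w x := SimpleGraph.dist_comm
  rcases le_total (T.dist c w) (T.dist c w') with h | h
  · have := dist_on_geodesic hconn Q hQ hwQ hw'Q h
    omega
  · have := dist_on_geodesic hconn Q hQ hw'Q hwQ h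
    rw [SimpleGraph.dist_comm (u := w') (v := w)] at this
    omega

/-- Existence of a center. -/
lemma exists_center (hT : T.IsTree) (hdiam : T.diam = 4) :
    ∃ x y c : V, T.dist x y = 4 ∧ T.dist x c = 2 ∧ T.dist c y = 2 ∧
      ∀ u w : V, T.dist u w ≤ 4 := by
  have hconn := hT.isConnected
  haveI : Nonempty V := hconn.nonempty
  have hne : T.ediam ≠ ⊤ := ediam_ne_top_of_diam_ne_zero (by rw [hdiam]; norm_num)
  have hdle : ∀ u w : V, T.dist u w ≤ 4 := fun u w => hdiam ▸ dist_le_diam hne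
  obtain ⟨x, y, hxy⟩ := exists_dist_eq_diam (G := T)
  rw [hdiam] at hxy
  obtain ⟨p, hp⟩ := hconn.exists_walk_length_eq_dist x y
  rw [hxy] at hp
  refine ⟨x, y, p.getVert 2, hxy, ?_⟩
  have a01 : T.Adj x (p.getVert 1) := by
    have := p.adj_getVert_succ (i := 0) (by omega)
    rwa [p.getVert_zero] at this
  have a12 : T.Adj (p.getVert 1) (p.getVert 2) := p.adj_getVert_succ (by omega)
  have a23 : T.Adj (p.getVert 2) (p.getVert 3) := p.adj_getVert_succ (by omega)
  have a34 : T.Adj (p.getVert 3) y := by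
    have := p.adj_getVert_succ (i := 3) (by omega)
    rwa [show p.getVert 4 = y from by rw [← hp]; exact p.getVert_length] at this
  have h1 : T.dist x (p.getVert 2) ≤ 2 := by
    calc T.dist x (p.getVert 2) ≤ T.dist x (p.getVert 1) + T.dist (p.getVert 1) (p.getVert 2) :=
          hconn.dist_triangle
    _ ≤ 2 := by
        rw [dist_eq_one_iff_adj.mpr a01, dist_eq_one_iff_adj.mpr a12]
  have h2 : T.dist (p.getVert 2) y ≤ 2 := by
    calc T.dist (p.getVert 2) y ≤ T.dist (p.getVert 2) (p.getVert 3) + T.dist (p.getVert 3) y :=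
          hconn.dist_triangle
    _ ≤ 2 := by
        rw [dist_eq_one_iff_adj.mpr a23, dist_eq_one_iff_adj.mpr a34]
  have h3 : T.dist x y ≤ T.dist x (p.getVert 2) + T.dist (p.getVert 2) y := hconn.dist_triangle
  refine ⟨?_, ?_, hdle⟩ <;> omega

/-- Every vertex at distance 2 from the center has a unique neighbor,
which is at distance 1 from the center. -/
lemma parent (hT : T.IsTree) {c : V} (hle2 : ∀ v : V, T.dist c v ≤ 2)
    {v : V} (hv : T.dist c v = 2) :
    ∃ u, T.Adj u v ∧ T.dist c u = 1 ∧ ∀ w, T.Adj v w → w = u := by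
  have hconn := hT.isConnected
  obtain ⟨p, hp⟩ := hconn.exists_walk_length_eq_dist c v
  rw [hv] at hp
  have a01 : T.Adj c (p.getVert 1) := by
    have := p.adj_getVert_succ (i := 0) (by omega)
    rwa [p.getVert_zero] at this
  have a12 : T.Adj (p.getVert 1) v := by
    have := p.adj_getVert_succ (i := 1) (by omega)
    rwa [show p.getVert 2 = v from by rw [← hp]; exact p.getVert_length] at this
  set u := p.getVert 1 with hu
  have hdu : T.dist c u = 1 := dist_eq_one_iff_adj.mpr a01
  refine ⟨u, a12, hdu, ?_⟩
  intro w hw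
  have hw2 : T.dist c w ≤ 2 := hle2 w
  have hwne : T.dist c w ≠ 2 := by
    intro h
    exact adj_dist_ne hT c hw (by rw [hv, h])
  have hwne0 : T.dist c w ≠ 0 := by
    intro h
    have hwc : c = w := (hconn.dist_eq_zero_iff).mp h
    subst hwc
    have : T.dist c v = 1 := by
      rw [SimpleGraph.dist_comm]; exact dist_eq_one_iff_adj.mpr hw
    omega
  have hdw : T.dist c w = 1 := by omega
  have acw : T.Adj c w := dist_eq_one_iff_adj.mp hdw
  by_contra hne
  -- two distinct paths from c to v
  have hcu : c ≠ u := a01.ne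
  have hcv : c ≠ v := by intro h; rw [h, SimpleGraph.dist_self] at hv; omega
  have huv : u ≠ v := by intro h; rw [h, hv] at hdu; omega
  have hcw : c ≠ w := acw.ne
  have hwv : w ≠ v := by intro h; rw [h, hv] at hdw; omega
  have hp1 : (Walk.cons a01 (Walk.cons a12 Walk.nil)).IsPath := by
    simp [Walk.isPath_def, hcu, hcv, huv]
  have hp2 : (Walk.cons acw (Walk.cons hw.symm Walk.nil)).IsPath := by
    simp [Walk.isPath_def, hcw, hcv, hwv]
  have := hT.IsAcyclic.path_unique ⟨_, hp1⟩ ⟨_, hp2⟩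
  rw [Subtype.mk_eq_mk] at this
  have := congrArg (fun q : T.Walk c v => q.getVert 1) this
  simp only [Walk.getVert_cons_succ, Walk.getVert_zero] at this
  exact hne (this.symm)

end Stmt8Aux

theorem stmt8 {V : Type*} [Fintype V] (T : SimpleGraph V)
    (hT : T.IsTree) (hdiam : T.diam = 4) :
    tedsNum T = edsNum T := by
  classical
  have hconn := hT.isConnected
  obtain ⟨x, y, c, hxy, hxc, hcy, hdle⟩ := Stmt8Aux.exists_center hT hdiam
  have hle2 : ∀ v, T.dist c v ≤ 2 := Stmt8Aux.center_ecc_le_two hT hxy hxc hcy hdle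
  have hcx : T.dist c x = 2 := by rw [SimpleGraph.dist_comm]; exact hxc
  set S : Set V := {u | T.Adj c u ∧ ∃ ℓ, T.Adj u ℓ ∧ T.dist c ℓ = 2} with hSdef
  obtain ⟨a, hax, hda, hauniq⟩ := Stmt8Aux.parent hT hle2 hcx
  obtain ⟨b, hby, hdb, hbuniq⟩ := Stmt8Aux.parent hT hle2 hcy
  have haS : a ∈ S := ⟨dist_eq_one_iff_adj.mp hda, x, hax, hcx⟩
  have hbS : b ∈ S := ⟨dist_eq_one_iff_adj.mp hdb, y, hby, hcy⟩
  have hab : a ≠ b := by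
    intro h; subst h
    have t : T.dist x y ≤ T.dist x a + T.dist a y := hconn.dist_triangle
    have h1 : T.dist x a = 1 := dist_eq_one_iff_adj.mpr hax.symm
    have h2 : T.dist a y = 1 := dist_eq_one_iff_adj.mpr hby
    omega
  have hS1 : ∀ u ∈ S, T.dist c u = 1 := fun u hu => dist_eq_one_iff_adj.mpr hu.1
  set F0 : Set (Sym2 V) := (fun u => s(c, u)) '' S with hF0def
  have hinjS : Set.InjOn (fun u => s(c, u)) S := by
    intro u hu u' hu' h
    simp only [Sym2.eq_iff] at h
    rcases h with ⟨-, h⟩ | ⟨h1, h2⟩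
    · exact h
    · exact absurd h1.symm hu'.1.ne'
  have hF0sub : F0 ⊆ T.edgeSet := by
    rintro f ⟨u, hu, rfl⟩
    exact (mem_edgeSet T).mpr hu.1
  have hF0card : F0.ncard = S.ncard := Set.ncard_image_of_injOn hinjS
  -- main domination helper
  have hmain : ∀ p q : V, T.Adj p q → T.dist c p < T.dist c q →
      ∃ f ∈ F0, eAdj s(p, q) f := by
    intro p q hpq hlt
    have hq2 : T.dist c q ≤ 2 := hle2 q
    have htri : T.dist c q ≤ T.dist c p + 1 := by
      have h := hconn.dist_triangle (u := c) (v := p) (w := q)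
      rwa [dist_eq_one_iff_adj.mpr hpq] at h
    have hcases : T.dist c p = 0 ∨ (T.dist c p = 1 ∧ T.dist c q = 2) := by omega
    rcases hcases with h0 | ⟨h1, h2⟩
    · have hpc : c = p := hconn.dist_eq_zero_iff.mp h0
      subst hpc
      have hqc : q ≠ c := hpq.ne'
      by_cases hqa : q = a
      · refine ⟨s(c, b), ⟨b, hbS, rfl⟩, ?_, c, by simp, by simp⟩
        intro h
        rw [Sym2.eq_iff] at h
        rcases h with ⟨-, h⟩ | ⟨-, h⟩
        · rw [hqa] at h; exact hab h
        · exact hqc h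
      · refine ⟨s(c, a), ⟨a, haS, rfl⟩, ?_, c, by simp, by simp⟩
        intro h
        rw [Sym2.eq_iff] at h
        rcases h with ⟨-, h⟩ | ⟨-, h⟩
        · exact hqa h
        · exact hqc h
    · have hacp : T.Adj c p := dist_eq_one_iff_adj.mp h1
      obtain ⟨u, huq, hdu, huniq⟩ := Stmt8Aux.parent hT hle2 h2
      have hpS : p ∈ S := ⟨hacp, q, hpq, h2⟩
      refine ⟨s(c, p), ⟨p, hpS, rfl⟩, ?_, p, by simp, by simp⟩
      intro h
      rw [Sym2.eq_iff] at h
      rcases h with ⟨h', -⟩ | ⟨-, h'⟩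
      · exact hacp.ne' h'
      · rw [h', SimpleGraph.dist_self] at h2; omega
  have hTEDS : IsTEDS T F0 := by
    refine ⟨hF0sub, ?_⟩
    intro e he
    induction e using Sym2.ind with
    | _ p q =>
      rw [mem_edgeSet] at he
      have hne := Stmt8Aux.adj_dist_ne hT c he
      rcases hne.lt_or_gt with h | h
      · exact hmain p q he h
      · rw [Sym2.eq_swap]
        exact hmain q p he.symm h
  -- lower bound
  have hlower : ∀ F : Set (Sym2 V), IsEDS T F → S.ncard ≤ F.ncard := by
    intro F hF
    have key1 : ∀ u ∈ S, ∃ f, f ∈ F ∧ u ∈ f := by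
      intro u hu
      obtain ⟨hcu, ℓ, huℓ, hℓ2⟩ := hu
      obtain ⟨u', hu'ℓ, hdu', huniq⟩ := Stmt8Aux.parent hT hle2 hℓ2
      have huu' : u = u' := huniq u huℓ.symm
      subst huu'
      have he : s(u, ℓ) ∈ T.edgeSet := (mem_edgeSet T).mpr huℓ
      by_cases hin : s(u, ℓ) ∈ F
      · exact ⟨_, hin, by simp⟩
      · obtain ⟨f, hfF, hne, z, hz1, hz2⟩ := hF.2 _ he hin
        rw [Sym2.mem_iff] at hz1
        rcases hz1 with rfl | rfl
        · exact ⟨f, hfF, hz2⟩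
        · exfalso
          have hfe : f ∈ T.edgeSet := hF.1 hfF
          obtain ⟨z', rfl⟩ := Sym2.mem_iff_exists.mp hz2
          rw [mem_edgeSet] at hfe
          have hz'u : z' = u := huniq z' hfe
          subst hz'u
          exact hne (Sym2.eq_swap).symm
    set g : V → Sym2 V := fun u => if h : ∃ f, f ∈ F ∧ u ∈ f then h.choose else s(u, u)
      with hgdef
    have hgmem : ∀ u ∈ S, g u ∈ F ∧ u ∈ g u := by
      intro u hu
      have h := key1 u hu
      simp only [hgdef, dif_pos h]
      exact ⟨h.choose_spec.1, h.choose_spec.2⟩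
    refine Set.ncard_le_ncard_of_injOn g (fun u hu => (hgmem u hu).1) ?_ (Set.toFinite F)
    intro u hu u' hu' heq
    by_contra hnuu
    have h1 : u ∈ g u := (hgmem u hu).2
    have h2 : u' ∈ g u := heq ▸ (hgmem u' hu').2
    have hfe : g u ∈ T.edgeSet := hF.1 (hgmem u hu).1
    obtain ⟨z, hz⟩ := Sym2.mem_iff_exists.mp h1
    rw [hz, Sym2.mem_iff] at h2
    rcases h2 with h2 | h2
    · exact hnuu h2.symm
    · subst h2
      rw [hz, mem_edgeSet] at hfe
      exact Stmt8Aux.adj_dist_ne hT c hfe (by rw [hS1 u hu, hS1 u' hu'])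
  -- assemble
  have hted_le : tedsNum T ≤ S.ncard := Nat.sInf_le ⟨F0, hTEDS, hF0card⟩
  have hTset : (tedsNum T) ∈ {n | ∃ F, IsTEDS T F ∧ F.ncard = n} :=
    Nat.sInf_mem ⟨S.ncard, F0, hTEDS, hF0card⟩
  obtain ⟨Ft, hFt, hFtcard⟩ := hTset
  have hFtEDS : IsEDS T Ft := ⟨hFt.1, fun e he _ => hFt.2 e he⟩
  have heds_le : edsNum T ≤ tedsNum T := Nat.sInf_le ⟨Ft, hFtEDS, hFtcard⟩
  have hEset : (edsNum T) ∈ {n | ∃ F, IsEDS T F ∧ F.ncard = n} :=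
    Nat.sInf_mem ⟨Ft.ncard, Ft, hFtEDS, rfl⟩
  obtain ⟨Fe, hFe, hFecard⟩ := hEset
  have hge : S.ncard ≤ edsNum T := hFecard ▸ hlower Fe hFe
  omega
end

section
/- Let T be a tree of diameter exactly 5. Then γ'_t(T) = γ'(T) or γ'_t(T) = γ'(T) + 1. -/
open SimpleGraph

variable {V : Type*}

namespace TreeAux
variable {T : SimpleGraph V}

lemma walk_eq (hT : T.IsTree) {a b : V} {p q : T.Walk a b} (hp : p.IsPath) (hq : q.IsPath) :
    p = q := by
  obtain ⟨r, -, hr⟩ := hT.existsUnique_path a b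
  rw [hr p hp, hr q hq]

lemma len_dist (hT : T.IsTree) {a b : V} (p : T.Walk a b) (hp : p.IsPath) :
    p.length = T.dist a b := by
  letI := Classical.decEq V
  obtain ⟨q, hq⟩ := hT.isConnected.exists_walk_length_eq_dist a b
  have h1 : q.bypass.IsPath := q.bypass_isPath
  have h2 := walk_eq hT hp h1
  have h3 : q.bypass.length ≤ q.length := q.length_bypass_le
  have h4 : T.dist a b ≤ p.length := SimpleGraph.dist_le p
  rw [h2] at h4 ⊢
  omega

lemma dist_of_path (hT : T.IsTree) {a b : V} (p : T.Walk a b) (hp : p.IsPath) {n : ℕ}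
    (hn : p.length = n) : T.dist a b = n := by
  rw [← len_dist hT p hp, hn]

lemma exists_split (S : Set V) [DecidablePred (· ∈ S)] {w x : V} (q : T.Walk w x)
    (hx : x ∈ S) :
    ∃ m, m ∈ S ∧ ∃ (r : T.Walk w m) (r' : T.Walk m x),
      r.append r' = q ∧ ∀ z ∈ r.support, z ∈ S → z = m := by
  induction q with
  | nil => exact ⟨_, hx, Walk.nil, Walk.nil, rfl, by simp⟩
  | @cons u c d h q ih =>
    by_cases hw : u ∈ S
    · exact ⟨u, hw, Walk.nil, Walk.cons h q, rfl, by simp⟩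
    · obtain ⟨m, hm, r, r', hr, hlast⟩ := ih hx
      refine ⟨m, hm, Walk.cons h r, r', by rw [Walk.cons_append, hr], ?_⟩
      intro z hz hzS
      rcases List.mem_cons.mp (by simpa using hz) with h1 | h1
      · exact absurd (h1 ▸ hzS) hw
      · exact hlast z h1 hzS

lemma isPath_append {a b c : V} {p : T.Walk a b} {q : T.Walk b c}
    (hp : p.IsPath) (hq : q.IsPath) (hdisj : ∀ z, z ∈ p.support → z ∈ q.support → z = b) :
    (p.append q).IsPath := by
  rw [Walk.isPath_def, Walk.support_append]
  refine List.Nodup.append hp.support_nodup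
    (hq.support_nodup.sublist (List.tail_sublist _)) ?_
  intro z hzp hzq
  have hz := hdisj z hzp (List.mem_of_mem_tail hzq)
  subst hz
  have h1 : q.support = z :: q.support.tail := (Walk.support_eq_cons q)
  have := hq.support_nodup
  rw [h1] at this
  exact (List.nodup_cons.mp this).1 hzq

lemma median (hT : T.IsTree) {x y : V} (p : T.Walk x y) (hp : p.IsPath) (w : V) :
    ∃ m ∈ p.support,
      T.dist w x = T.dist w m + T.dist m x ∧ T.dist w y = T.dist w m + T.dist m y := by
  classical
  obtain ⟨q0⟩ := hT.isConnected w x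
  have hqp : q0.bypass.IsPath := q0.bypass_isPath
  obtain ⟨m, hmS, r, r', hr, hlast⟩ :=
    exists_split {z | z ∈ p.support} q0.bypass (by simp)
  have hrp : r.IsPath := Walk.IsPath.of_append_left (hr ▸ hqp)
  have hm : m ∈ p.support := hmS
  have hdwm : T.dist w m = r.length := (dist_of_path hT r hrp rfl).symm ▸ rfl
  refine ⟨m, hm, ?_, ?_⟩
  · -- via reversed takeUntil
    have t' : T.Walk m x := (p.takeUntil m hm).reverse
    have ht' : (p.takeUntil m hm).reverse.IsPath := (hp.takeUntil hm).reverse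
    have hap : (r.append (p.takeUntil m hm).reverse).IsPath := by
      refine isPath_append hrp ht' ?_
      intro z hz1 hz2
      refine hlast z hz1 ?_
      have : z ∈ (p.takeUntil m hm).support := by
        rwa [Walk.support_reverse, List.mem_reverse] at hz2
      exact Walk.support_takeUntil_subset _ hm this
    have h1 := dist_of_path hT _ hap rfl
    rw [Walk.length_append] at h1
    have h2 := dist_of_path hT _ ht' rfl
    rw [Walk.length_reverse] at h1 h2
    rw [h1, h2, ← dist_of_path hT r hrp rfl]
  · have ht : (p.dropUntil m hm).IsPath := hp.dropUntil hm
    have hap : (r.append (p.dropUntil m hm)).IsPath := by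
      refine isPath_append hrp ht ?_
      intro z hz1 hz2
      exact hlast z hz1 (Walk.support_dropUntil_subset _ hm hz2)
    have h1 := dist_of_path hT _ hap rfl
    rw [Walk.length_append] at h1
    have h2 := dist_of_path hT _ ht rfl
    rw [h1, h2, ← dist_of_path hT r hrp rfl]

lemma path_of_dist (hT : T.IsTree) (a b : V) :
    ∃ q : T.Walk a b, q.IsPath ∧ q.length = T.dist a b := by
  letI := Classical.decEq V
  obtain ⟨q, hq⟩ := hT.isConnected.exists_walk_length_eq_dist a b
  refine ⟨q.bypass, q.bypass_isPath, ?_⟩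
  have h3 : q.bypass.length ≤ q.length := q.length_bypass_le
  have h4 : T.dist a b ≤ q.bypass.length := SimpleGraph.dist_le q.bypass
  omega

lemma walk_destruct {a b : V} {n : ℕ} (p : T.Walk a b) (h : p.length = n + 1) :
    ∃ (c : V) (hc : T.Adj a c) (q : T.Walk c b), p = Walk.cons hc q ∧ q.length = n := by
  cases p with
  | nil => simp at h
  | cons hc q => exact ⟨_, hc, q, rfl, by simpa using h⟩

lemma eq_of_dist_zero (hT : T.IsTree) {a b : V} (h : T.dist a b = 0) : a = b := by
  obtain ⟨q, -, hq⟩ := path_of_dist hT a b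
  have hq0 : q.length = 0 := by omega
  exact Walk.eq_of_length_eq_zero hq0

lemma dist_path1 (hT : T.IsTree) {a b : V} (h : T.dist a b = 1) : T.Adj a b := by
  obtain ⟨q, -, hq⟩ := path_of_dist hT a b
  rw [h] at hq
  obtain ⟨c, hc, q', rfl, hq'⟩ := walk_destruct q hq
  have := Walk.eq_of_length_eq_zero hq'
  exact this ▸ hc

lemma dist_path2 (hT : T.IsTree) {a b : V} (h : T.dist a b = 2) :
    ∃ t, T.Adj a t ∧ T.Adj t b ∧ a ≠ b := by
  obtain ⟨q, -, hq⟩ := path_of_dist hT a b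
  rw [h] at hq
  obtain ⟨c, hc, q', rfl, hq'⟩ := walk_destruct q hq
  obtain ⟨d, hd, q'', rfl, hq''⟩ := walk_destruct q' hq'
  have hdb := Walk.eq_of_length_eq_zero hq''
  subst hdb
  exact ⟨c, hc, hd, fun hab => by subst hab; simp [SimpleGraph.dist_self] at h⟩

lemma adj_dist_one (hT : T.IsTree) {a b : V} (h : T.Adj a b) : T.dist a b = 1 :=
  dist_of_path hT (Walk.cons h Walk.nil) (by simp [h.ne]) rfl

lemma no_sibling_adj (hT : T.IsTree) {u a b : V} (h1 : T.Adj u a) (h2 : T.Adj u b)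
    (h3 : T.Adj a b) : False := by
  have hd1 : T.dist u b = 1 := adj_dist_one hT h2
  have hd2 : T.dist u b = 2 :=
    dist_of_path hT (Walk.cons h1 (Walk.cons h3 Walk.nil))
      (by simp [Walk.cons_isPath_iff, h1.ne, h2.ne, h3.ne]) rfl
  omega

lemma no_cross_adj (hT : T.IsTree) {u v a b : V} (huv : T.Adj u v) (ha : T.Adj u a)
    (hav : a ≠ v) (hb : T.Adj v b) (hbu : b ≠ u) (hab : T.Adj a b) : False := by
  have hP1 : (Walk.cons huv (Walk.cons hb Walk.nil) : T.Walk u b).IsPath := by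
    simp [Walk.cons_isPath_iff, huv.ne, hb.ne, Ne.symm hbu]
  have hP2 : (Walk.cons ha (Walk.cons hab Walk.nil) : T.Walk u b).IsPath := by
    simp [Walk.cons_isPath_iff, ha.ne, hab.ne, Ne.symm hbu]
  have := congrArg Walk.support (walk_eq hT hP1 hP2)
  simp at this
  exact hav this.symm

lemma leaf_unique (hT : T.IsTree) {u v ℓ : V} (huv : T.Adj u v)
    (hF1 : ∀ w, T.dist w u ≤ 2 ∨ T.dist w v ≤ 2)
    (hl2 : T.dist ℓ u = 2) (hlv : ¬ T.Adj ℓ v) :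
    ∃ a, T.Adj u a ∧ T.Adj a ℓ ∧ ∀ z, T.Adj ℓ z → z = a := by
  obtain ⟨a, h1, h2, hlune⟩ := dist_path2 hT hl2
  have hlu : ¬ T.Adj ℓ u := fun h => by have := adj_dist_one hT h; omega
  have hlvne : ℓ ≠ v := by
    rintro rfl
    have := adj_dist_one hT huv.symm; omega
  have hav : a ≠ v := fun h => hlv (h ▸ h1)
  have key2 : ∀ z, T.Adj ℓ z → T.Adj z u → z = a := by
    intro z hz hadj
    have hP1 : (Walk.cons h1 (Walk.cons h2 Walk.nil) : T.Walk ℓ u).IsPath := by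
      simp [Walk.cons_isPath_iff, h1.ne, h2.ne, hlune]
    have hP2 : (Walk.cons hz (Walk.cons hadj Walk.nil) : T.Walk ℓ u).IsPath := by
      simp [Walk.cons_isPath_iff, hz.ne, hadj.ne, hlune]
    have := congrArg Walk.support (walk_eq hT hP2 hP1)
    simpa using this
  refine ⟨a, h2.symm, h1.symm, ?_⟩
  intro z hz
  by_contra hza
  have hzu : z ≠ u := fun h => hlu (h ▸ hz)
  have hzv : z ≠ v := fun h => hlv (h ▸ hz)
  rcases hF1 z with hc | hc
  · have h3 : T.dist z u = 0 ∨ T.dist z u = 1 ∨ T.dist z u = 2 := by omega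
    rcases h3 with h3 | h3 | h3
    · exact hzu (eq_of_dist_zero hT h3)
    · exact hza (key2 z hz (dist_path1 hT h3))
    · obtain ⟨t, ht1, ht2, -⟩ := dist_path2 hT h3
      have hlt : ℓ ≠ t := fun h => hlu (h ▸ ht2)
      have : T.dist ℓ u = 3 :=
        dist_of_path hT (Walk.cons hz (Walk.cons ht1 (Walk.cons ht2 Walk.nil)))
          (by simp [Walk.cons_isPath_iff, hz.ne, ht1.ne, ht2.ne, hzu, hlt, hlune]) rfl
      omega
  · have h3 : T.dist z v = 0 ∨ T.dist z v = 1 ∨ T.dist z v = 2 := by omega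
    rcases h3 with h3 | h3 | h3
    · exact hzv (eq_of_dist_zero hT h3)
    · have hadj := dist_path1 hT h3
      have : T.dist ℓ u = 3 :=
        dist_of_path hT (Walk.cons hz (Walk.cons hadj (Walk.cons huv.symm Walk.nil)))
          (by simp [Walk.cons_isPath_iff, hz.ne, hadj.ne, huv.ne', hzu, hlvne, hlune]) rfl
      omega
    · obtain ⟨t, ht1, ht2, -⟩ := dist_path2 hT h3
      by_cases htu : t = u
      · subst htu
        exact hza (key2 z hz ht1)
      · have hlt : ℓ ≠ t := fun h => hlv (h ▸ ht2)
        have : T.dist ℓ u = 4 :=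
          dist_of_path hT
            (Walk.cons hz (Walk.cons ht1 (Walk.cons ht2 (Walk.cons huv.symm Walk.nil))))
            (by simp [Walk.cons_isPath_iff, hz.ne, ht1.ne, ht2.ne, huv.ne', htu, hzv, hzu,
              hlt, hlvne, hlune]) rfl
        omega

/-- The set of non-leaf neighbors of `u` other than `v`. -/
def Aset (T : SimpleGraph V) (u v : V) : Set V :=
  {a | T.Adj u a ∧ a ≠ v ∧ ∃ w, T.Adj a w ∧ w ≠ u}

lemma classify_side (hT : T.IsTree) {u v s t : V} (huv : T.Adj u v)
    (hF1 : ∀ w, T.dist w u ≤ 2 ∨ T.dist w v ≤ 2)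
    (hst : T.Adj s t) (hc : T.dist s u ≤ 2) :
    s = u ∨ s = v ∨ T.Adj u s ∨ T.Adj v s ∨ T.Adj u t := by
  have h3 : T.dist s u = 0 ∨ T.dist s u = 1 ∨ T.dist s u = 2 := by omega
  rcases h3 with h3 | h3 | h3
  · exact Or.inl (eq_of_dist_zero hT h3)
  · exact Or.inr (Or.inr (Or.inl (dist_path1 hT h3).symm))
  · by_cases hsv : T.Adj s v
    · exact Or.inr (Or.inr (Or.inr (Or.inl hsv.symm)))
    · obtain ⟨a, -, -, huniq⟩ := leaf_unique hT huv hF1 h3 hsv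
      obtain ⟨a', -, ha'2, huniq'⟩ := leaf_unique hT huv hF1 h3 hsv
      -- t = a and the neighbor a is adjacent to u
      obtain ⟨a'', ha''1, ha''2, huniq''⟩ := leaf_unique hT huv hF1 h3 hsv
      have ht := huniq'' t hst
      exact Or.inr (Or.inr (Or.inr (Or.inr (ht ▸ ha''1))))

lemma classify (hT : T.IsTree) {u v s t : V} (huv : T.Adj u v)
    (hF1 : ∀ w, T.dist w u ≤ 2 ∨ T.dist w v ≤ 2)
    (hst : T.Adj s t) :
    s = u ∨ s = v ∨ T.Adj u s ∨ T.Adj v s ∨ T.Adj u t ∨ T.Adj v t := by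
  rcases hF1 s with hc | hc
  · rcases classify_side hT huv hF1 hst hc with h | h | h | h | h
    · exact Or.inl h
    · exact Or.inr (Or.inl h)
    · exact Or.inr (Or.inr (Or.inl h))
    · exact Or.inr (Or.inr (Or.inr (Or.inl h)))
    · exact Or.inr (Or.inr (Or.inr (Or.inr (Or.inl h))))
  · have hF1' : ∀ w, T.dist w v ≤ 2 ∨ T.dist w u ≤ 2 := fun w => (hF1 w).symm
    rcases classify_side hT huv.symm hF1' hst hc with h | h | h | h | h
    · exact Or.inr (Or.inl h)
    · exact Or.inl h
    · exact Or.inr (Or.inr (Or.inr (Or.inl h)))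
    · exact Or.inr (Or.inr (Or.inl h))
    · exact Or.inr (Or.inr (Or.inr (Or.inr (Or.inr h))))

lemma mem_of_eds (hT : T.IsTree) {u v : V} (huv : T.Adj u v)
    (hF1 : ∀ w, T.dist w u ≤ 2 ∨ T.dist w v ≤ 2)
    {F : Set (Sym2 V)} (hF : IsEDS T F) {c : V} (hc : c ∈ Aset T u v) :
    ∃ f ∈ F, c ∈ f := by
  obtain ⟨hcu, hcv, w, hw1, hw2⟩ := hc
  have hwu : ¬ T.Adj w u := fun h => no_sibling_adj hT hcu h.symm hw1
  have hdw2 : T.dist w u = 2 :=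
    dist_of_path hT (Walk.cons hw1.symm (Walk.cons hcu.symm Walk.nil))
      (by simp [Walk.cons_isPath_iff, hw1.ne', hcu.ne', hw2]) rfl
  have hwv : ¬ T.Adj w v := fun h => no_cross_adj hT huv hcu hcv h.symm hw2 hw1
  obtain ⟨a, -, -, huniq⟩ := leaf_unique hT huv hF1 hdw2 hwv
  have huniqc : ∀ z, T.Adj w z → z = c :=
    fun z hz => (huniq z hz).trans (huniq c hw1.symm).symm
  have heE : s(c, w) ∈ T.edgeSet := T.mem_edgeSet.mpr hw1
  by_cases he : s(c, w) ∈ F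
  · exact ⟨_, he, Sym2.mem_mk_left c w⟩
  · obtain ⟨f, hfF, hne, z, hz1, hz2⟩ := hF.2 _ heE he
    rcases Sym2.mem_iff.mp hz1 with rfl | rfl
    · exact ⟨f, hfF, hz2⟩
    · obtain ⟨b, rfl⟩ := Sym2.mem_iff_exists.mp hz2
      have hb : T.Adj z b := T.mem_edgeSet.mp (hF.1 hfF)
      have := huniqc b hb
      subst this
      exact absurd (Sym2.eq_swap) hne

lemma teds_side {u v a₀ : V} (ha₀ : a₀ ∈ Aset T u v) (huv : T.Adj u v)
    {F : Set (Sym2 V)} (hmemuv : s(u, v) ∈ F)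
    (hmemA : ∀ a ∈ Aset T u v, s(u, a) ∈ F)
    {s t : V} (hst : T.Adj s t) (hs : s = u ∨ (T.Adj u s ∧ s ≠ v ∧ t ≠ u)) :
    ∃ f ∈ F, eAdj s(s, t) f := by
  rcases hs with rfl | ⟨hus, hsv, htu⟩
  · by_cases htv : t = v
    · subst htv
      refine ⟨s(s, a₀), hmemA a₀ ha₀, ?_, s, Sym2.mem_mk_left _ _, Sym2.mem_mk_left _ _⟩
      have h1 : a₀ ≠ t := ha₀.2.1
      have h2 : s ≠ a₀ := ha₀.1.ne
      simp [Sym2.eq_iff, huv.ne, h2]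
      rintro rfl
      exact h1 rfl
    · refine ⟨s(s, v), hmemuv, ?_, s, Sym2.mem_mk_left _ _, Sym2.mem_mk_left _ _⟩
      simp [Sym2.eq_iff, htv, hst.ne']
  · have hsA : s ∈ Aset T u v := ⟨hus, hsv, t, hst, htu⟩
    refine ⟨s(u, s), hmemA s hsA, ?_, s, Sym2.mem_mk_left _ _, Sym2.mem_mk_right _ _⟩
    simp [Sym2.eq_iff, htu, fun h : s = u => hus.ne' h]

lemma eds_side {u v a₀ : V} (ha₀ : a₀ ∈ Aset T u v) (huv : T.Adj u v)
    {F₀ : Set (Sym2 V)} (hmemA : ∀ a ∈ Aset T u v, s(u, a) ∈ F₀)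
    {s t : V} (hst : T.Adj s t) (he : s(s, t) ∉ F₀)
    (hs : s = u ∨ (T.Adj u s ∧ s ≠ v ∧ t ≠ u)) :
    ∃ f ∈ F₀, eAdj s(s, t) f := by
  rcases hs with rfl | ⟨hus, hsv, htu⟩
  · have hta₀ : t ≠ a₀ := by rintro rfl; exact he (hmemA _ ha₀)
    have h2 : s ≠ a₀ := ha₀.1.ne
    refine ⟨s(s, a₀), hmemA a₀ ha₀, ?_, s, Sym2.mem_mk_left _ _, Sym2.mem_mk_left _ _⟩
    simp [Sym2.eq_iff, hta₀, h2]
  · have hsA : s ∈ Aset T u v := ⟨hus, hsv, t, hst, htu⟩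
    refine ⟨s(u, s), hmemA s hsA, ?_, s, Sym2.mem_mk_left _ _, Sym2.mem_mk_right _ _⟩
    simp [Sym2.eq_iff, htu, fun h : s = u => hus.ne' h]

end TreeAux

open TreeAux in
theorem stmt9 {V : Type*} [Fintype V] (T : SimpleGraph V)
    (hT : T.IsTree) (hdiam : T.diam = 5) :
    tedsNum T = edsNum T ∨ tedsNum T = edsNum T + 1 := by
  classical
  have hconn := hT.isConnected
  have hnonempty : Nonempty V := hconn.nonempty
  have hediam : T.ediam ≠ ⊤ := ediam_ne_top_of_diam_ne_zero (by omega)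
  have hdistle : ∀ a b : V, T.dist a b ≤ 5 := fun a b => hdiam ▸ dist_le_diam hediam
  obtain ⟨x, y, hxy⟩ := exists_dist_eq_diam (G := T)
  rw [hdiam] at hxy
  obtain ⟨p, hp, hplen⟩ := path_of_dist hT x y
  rw [hxy] at hplen
  obtain ⟨x1, h01, p1, rfl, hp1len⟩ := walk_destruct p hplen
  obtain ⟨x2, h12, p2, rfl, hp2len⟩ := walk_destruct p1 hp1len
  obtain ⟨x3, h23, p3, rfl, hp3len⟩ := walk_destruct p2 hp2len
  obtain ⟨x4, h34, p4, rfl, hp4len⟩ := walk_destruct p3 hp3len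
  obtain ⟨x5, h45, p5, rfl, hp5len⟩ := walk_destruct p4 hp4len
  have h5y : x5 = y := Walk.eq_of_length_eq_zero hp5len
  subst h5y
  have hp5nil : p5 = Walk.nil := Walk.nil_iff_eq_nil.mp (Walk.length_eq_zero_iff.mp hp5len)
  subst hp5nil
  have hp' := hp
  simp [Walk.cons_isPath_iff] at hp'
  obtain ⟨⟨⟨⟨n45, n34, n35⟩, n23, n24, n25⟩, n12, n13, n14, n15⟩, n01, n02, n03, n04, n05⟩ := hp'
  -- distances along the path
  have d01 : T.dist x x1 = 1 := adj_dist_one hT h01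
  have d12 : T.dist x1 x2 = 1 := adj_dist_one hT h12
  have d23 : T.dist x2 x3 = 1 := adj_dist_one hT h23
  have d34 : T.dist x3 x4 = 1 := adj_dist_one hT h34
  have d45 : T.dist x4 x5 = 1 := adj_dist_one hT h45
  have d02 : T.dist x x2 = 2 :=
    dist_of_path hT (Walk.cons h01 (Walk.cons h12 Walk.nil))
      (by simp [Walk.cons_isPath_iff, n01, n02, n12]) rfl
  have d03 : T.dist x x3 = 3 :=
    dist_of_path hT (Walk.cons h01 (Walk.cons h12 (Walk.cons h23 Walk.nil)))
      (by simp [Walk.cons_isPath_iff, n01, n02, n03, n12, n13, n23]) rfl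
  have d04 : T.dist x x4 = 4 :=
    dist_of_path hT (Walk.cons h01 (Walk.cons h12 (Walk.cons h23 (Walk.cons h34 Walk.nil))))
      (by simp [Walk.cons_isPath_iff, n01, n02, n03, n04, n12, n13, n14, n23, n24, n34]) rfl
  have d15 : T.dist x1 x5 = 4 :=
    dist_of_path hT (Walk.cons h12 (Walk.cons h23 (Walk.cons h34 (Walk.cons h45 Walk.nil))))
      (by simp [Walk.cons_isPath_iff, n12, n13, n14, n15, n23, n24, n25, n34, n35, n45]) rfl
  have d25 : T.dist x2 x5 = 3 :=
    dist_of_path hT (Walk.cons h23 (Walk.cons h34 (Walk.cons h45 Walk.nil)))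
      (by simp [Walk.cons_isPath_iff, n23, n24, n25, n34, n35, n45]) rfl
  have d35 : T.dist x3 x5 = 2 :=
    dist_of_path hT (Walk.cons h34 (Walk.cons h45 Walk.nil))
      (by simp [Walk.cons_isPath_iff, n34, n35, n45]) rfl
  -- every vertex is within distance 2 of the central edge
  have hF1 : ∀ w, T.dist w x2 ≤ 2 ∨ T.dist w x3 ≤ 2 := by
    intro w
    obtain ⟨m, hm, hmx, hmy⟩ := median hT _ hp w
    have hwx := hdistle w x
    have hwy := hdistle w x5
    simp [Walk.support_cons] at hm
    have tri2 : T.dist w x2 ≤ T.dist w m + T.dist m x2 := hconn.dist_triangle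
    have tri3 : T.dist w x3 ≤ T.dist w m + T.dist m x3 := hconn.dist_triangle
    rcases hm with hm|hm|hm|hm|hm|hm <;> rw [hm] at hmx hmy tri2 tri3
    · left
      have e1 : T.dist x x = 0 := SimpleGraph.dist_self
      have e2 : T.dist x x5 = 5 := hxy
      have e3 : T.dist x x2 = 2 := d02
      omega
    · left
      have e1 : T.dist x1 x = 1 := by rw [SimpleGraph.dist_comm]; exact d01
      have e2 : T.dist x1 x5 = 4 := d15
      have e3 : T.dist x1 x2 = 1 := d12
      omega
    · left
      have e1 : T.dist x2 x = 2 := by rw [SimpleGraph.dist_comm]; exact d02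
      have e2 : T.dist x2 x5 = 3 := d25
      have e3 : T.dist x2 x2 = 0 := SimpleGraph.dist_self
      omega
    · right
      have e1 : T.dist x3 x = 3 := by rw [SimpleGraph.dist_comm]; exact d03
      have e2 : T.dist x3 x5 = 2 := d35
      have e3 : T.dist x3 x3 = 0 := SimpleGraph.dist_self
      omega
    · right
      have e1 : T.dist x4 x = 4 := by rw [SimpleGraph.dist_comm]; exact d04
      have e2 : T.dist x4 x5 = 1 := d45
      have e3 : T.dist x4 x3 = 1 := by rw [SimpleGraph.dist_comm]; exact d34
      omega
    · right
      have e1 : T.dist x5 x = 5 := by rw [SimpleGraph.dist_comm]; exact hxy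
      have e2 : T.dist x5 x5 = 0 := SimpleGraph.dist_self
      have e3 : T.dist x5 x3 = 2 := by rw [SimpleGraph.dist_comm]; exact d35
      omega
  have hF1sym : ∀ w, T.dist w x3 ≤ 2 ∨ T.dist w x2 ≤ 2 := fun w => (hF1 w).symm
  -- the two sides
  set A : Set V := Aset T x2 x3 with hA
  set B : Set V := Aset T x3 x2 with hB
  have ha0 : x1 ∈ A := ⟨h12.symm, n13, x, h01.symm, n02⟩
  have hb0 : x4 ∈ B := ⟨h34, fun h => n24 h.symm, x5, h45, fun h => n35 h.symm⟩
  set F0 : Set (Sym2 V) := (fun a => s(x2, a)) '' A ∪ (fun b => s(x3, b)) '' B with hF0def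
  set Fone : Set (Sym2 V) := insert s(x2, x3) F0 with hFonedef
  have hmemA0 : ∀ a ∈ A, s(x2, a) ∈ F0 := fun a ha => Set.mem_union_left _ ⟨a, ha, rfl⟩
  have hmemB0 : ∀ b ∈ B, s(x3, b) ∈ F0 := fun b hb => Set.mem_union_right _ ⟨b, hb, rfl⟩
  have hmemA1 : ∀ a ∈ A, s(x2, a) ∈ Fone := fun a ha => Set.mem_insert_of_mem _ (hmemA0 a ha)
  have hmemB1 : ∀ b ∈ B, s(x3, b) ∈ Fone := fun b hb => Set.mem_insert_of_mem _ (hmemB0 b hb)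
  have hmemuv1 : s(x2, x3) ∈ Fone := Set.mem_insert _ _
  have hmemvu1 : s(x3, x2) ∈ Fone := by rw [Sym2.eq_swap]; exact hmemuv1
  have hF0sub : F0 ⊆ T.edgeSet := by
    rintro e (⟨a, ha, rfl⟩ | ⟨b, hb, rfl⟩)
    · exact T.mem_edgeSet.mpr ha.1
    · exact T.mem_edgeSet.mpr hb.1
  have hFonesub : Fone ⊆ T.edgeSet := by
    rintro e (rfl | he)
    · exact T.mem_edgeSet.mpr h23
    · exact hF0sub he
  -- total edge domination
  have hTEDS : IsTEDS T Fone := by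
    refine ⟨hFonesub, fun e he => ?_⟩
    induction e using Sym2.ind with
    | _ s t =>
      have hst : T.Adj s t := T.mem_edgeSet.mp he
      by_cases hs2 : s = x2
      · exact teds_side ha0 h23 hmemuv1 hmemA1 hst (Or.inl hs2)
      by_cases hs3 : s = x3
      · exact teds_side hb0 h23.symm hmemvu1 hmemB1 hst (Or.inl hs3)
      by_cases ht2 : t = x2
      · rw [Sym2.eq_swap]
        exact teds_side ha0 h23 hmemuv1 hmemA1 hst.symm (Or.inl ht2)
      by_cases ht3 : t = x3
      · rw [Sym2.eq_swap]
        exact teds_side hb0 h23.symm hmemvu1 hmemB1 hst.symm (Or.inl ht3)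
      rcases classify hT h23 hF1 hst with h|h|h|h|h|h
      · exact absurd h hs2
      · exact absurd h hs3
      · exact teds_side ha0 h23 hmemuv1 hmemA1 hst (Or.inr ⟨h, hs3, ht2⟩)
      · exact teds_side hb0 h23.symm hmemvu1 hmemB1 hst (Or.inr ⟨h, hs2, ht3⟩)
      · rw [Sym2.eq_swap]
        exact teds_side ha0 h23 hmemuv1 hmemA1 hst.symm (Or.inr ⟨h, ht3, hs2⟩)
      · rw [Sym2.eq_swap]
        exact teds_side hb0 h23.symm hmemvu1 hmemB1 hst.symm (Or.inr ⟨h, ht2, hs3⟩)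
  -- edge domination by F0
  have hEDS0 : IsEDS T F0 := by
    refine ⟨hF0sub, fun e he hne => ?_⟩
    induction e using Sym2.ind with
    | _ s t =>
      have hst : T.Adj s t := T.mem_edgeSet.mp he
      have hne' : s(t, s) ∉ F0 := by rwa [Sym2.eq_swap]
      by_cases hs2 : s = x2
      · exact eds_side ha0 h23 hmemA0 hst hne (Or.inl hs2)
      by_cases hs3 : s = x3
      · exact eds_side hb0 h23.symm hmemB0 hst hne (Or.inl hs3)
      by_cases ht2 : t = x2
      · rw [Sym2.eq_swap]
        exact eds_side ha0 h23 hmemA0 hst.symm hne' (Or.inl ht2)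
      by_cases ht3 : t = x3
      · rw [Sym2.eq_swap]
        exact eds_side hb0 h23.symm hmemB0 hst.symm hne' (Or.inl ht3)
      rcases classify hT h23 hF1 hst with h|h|h|h|h|h
      · exact absurd h hs2
      · exact absurd h hs3
      · exact eds_side ha0 h23 hmemA0 hst hne (Or.inr ⟨h, hs3, ht2⟩)
      · exact eds_side hb0 h23.symm hmemB0 hst hne (Or.inr ⟨h, hs2, ht3⟩)
      · rw [Sym2.eq_swap]
        exact eds_side ha0 h23 hmemA0 hst.symm hne' (Or.inr ⟨h, ht3, hs2⟩)
      · rw [Sym2.eq_swap]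
        exact eds_side hb0 h23.symm hmemB0 hst.symm hne' (Or.inr ⟨h, ht2, hs3⟩)
  -- cardinalities
  have hcard0 : F0.ncard ≤ A.ncard + B.ncard := by
    refine le_trans (Set.ncard_union_le _ _) ?_
    exact add_le_add (Set.ncard_image_le A.toFinite) (Set.ncard_image_le B.toFinite)
  have hcard1 : Fone.ncard ≤ A.ncard + B.ncard + 1 := by
    refine le_trans (Set.ncard_insert_le _ _) ?_
    omega
  -- lower bound: every EDS has at least |A| + |B| edges
  have hdisjAB : Disjoint A B := by
    rw [Set.disjoint_left]
    intro c hcA hcB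
    exact no_sibling_adj hT hcA.1.symm hcB.1.symm h23
  have hlow : ∀ F : Set (Sym2 V), IsEDS T F → A.ncard + B.ncard ≤ F.ncard := by
    intro F hF
    have hAB : ∀ c ∈ A ∪ B, ∃ f ∈ F, c ∈ f := by
      rintro c (hc | hc)
      · exact mem_of_eds hT h23 hF1 hF hc
      · exact mem_of_eds hT h23.symm hF1sym hF hc
    have hchoice : ∀ c, ∃ f, c ∈ A ∪ B → f ∈ F ∧ c ∈ f := by
      intro c
      by_cases hc : c ∈ A ∪ B
      · obtain ⟨f, hf1, hf2⟩ := hAB c hc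
        exact ⟨f, fun _ => ⟨hf1, hf2⟩⟩
      · exact ⟨s(c, c), fun h => absurd h hc⟩
    choose g hg using hchoice
    have hinj : Set.InjOn g (A ∪ B) := by
      intro c1 h1 c2 h2 heq
      by_contra hne12
      obtain ⟨hgF1, hgm1⟩ := hg c1 h1
      obtain ⟨hgF2, hgm2⟩ := hg c2 h2
      rw [heq] at hgm1
      -- g c2 contains both c1 and c2, so it is the edge s(c1, c2)
      obtain ⟨d, hd⟩ := Sym2.mem_iff_exists.mp hgm1
      rw [hd] at hgm2
      rcases Sym2.mem_iff.mp hgm2 with h' | h'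
      · exact hne12 h'.symm
      subst h'
      have hadj : T.Adj c1 c2 := T.mem_edgeSet.mp (hF.1 (hd ▸ hgF2))
      rcases h1 with h1 | h1 <;> rcases h2 with h2 | h2
      · exact no_sibling_adj hT h1.1 h2.1 hadj
      · exact no_cross_adj hT h23 h1.1 h1.2.1 h2.1 h2.2.1 hadj
      · exact no_cross_adj hT h23 h2.1 h2.2.1 h1.1 h1.2.1 hadj.symm
      · exact no_sibling_adj hT h1.1 h2.1 hadj
    have himsub : g '' (A ∪ B) ⊆ F := by
      rintro f ⟨c, hc, rfl⟩
      exact (hg c hc).1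
    have h1 : (A ∪ B).ncard = (g '' (A ∪ B)).ncard := (Set.ncard_image_of_injOn hinj).symm
    have h2 : (g '' (A ∪ B)).ncard ≤ F.ncard := Set.ncard_le_ncard himsub F.toFinite
    have h3 : (A ∪ B).ncard = A.ncard + B.ncard :=
      Set.ncard_union_eq hdisjAB A.toFinite B.toFinite
    omega
  -- put everything together
  have hteds_le : tedsNum T ≤ Fone.ncard := Nat.sInf_le ⟨Fone, hTEDS, rfl⟩
  have heds_ge : A.ncard + B.ncard ≤ edsNum T := by
    refine le_csInf ⟨F0.ncard, F0, hEDS0, rfl⟩ ?_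
    rintro n ⟨F, hF, rfl⟩
    exact hlow F hF
  have heds_le_teds : edsNum T ≤ tedsNum T := by
    have hmem : tedsNum T ∈ {n | ∃ F : Set (Sym2 V), IsTEDS T F ∧ F.ncard = n} :=
      Nat.sInf_mem ⟨Fone.ncard, Fone, hTEDS, rfl⟩
    obtain ⟨F, hF, hFc⟩ := hmem
    exact Nat.sInf_le ⟨F, ⟨hF.1, fun e he _ => hF.2 e he⟩, hFc⟩
  omega
end

section
/- Let T be a tree with γ'_t(T) = 2·γ'(T). Then T contains no path u-v-w (three consecutive vertices) in which all three of u, v, w are support vertices. -/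
open SimpleGraph

variable {V : Type*}

/-- A support vertex: a vertex adjacent to a leaf. -/
def IsSupport (G : SimpleGraph V) [∀ v : V, Fintype (G.neighborSet v)] (v : V) : Prop :=
  ∃ u : V, G.Adj v u ∧ G.degree u = 1

lemma unique_leaf_edge {V : Type*} [Fintype V] [DecidableEq V] (T : SimpleGraph V)
    [DecidableRel T.Adj] {x x' : V} (hadj : T.Adj x x') (hdeg : T.degree x' = 1)
    {f : Sym2 V} (hf : f ∈ T.edgeSet) (hx' : x' ∈ f) : f = s(x, x') := by
  have huniq : ∀ y ∈ T.neighborFinset x', y = x := by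
    intro y hy
    have hx : x ∈ T.neighborFinset x' := by
      rw [SimpleGraph.mem_neighborFinset]; exact hadj.symm
    exact Finset.card_le_one.mp (le_of_eq hdeg) y hy x hx
  induction f with
  | _ a b =>
    rw [SimpleGraph.mem_edgeSet] at hf
    rcases Sym2.mem_iff.mp hx' with rfl | rfl
    · have hb : b = x := huniq b (by rw [SimpleGraph.mem_neighborFinset]; exact hf)
      subst hb; exact Sym2.eq_swap
    · have ha : a = x := huniq a (by rw [SimpleGraph.mem_neighborFinset]; exact hf.symm)
      subst ha; rfl

lemma support_mem_eds {V : Type*} [Fintype V] [DecidableEq V] (T : SimpleGraph V)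
    [DecidableRel T.Adj] {F : Set (Sym2 V)} (hF : IsEDS T F) {x x' : V}
    (hadj : T.Adj x x') (hdeg : T.degree x' = 1) : ∃ f ∈ F, x ∈ f := by
  have hℓ : s(x, x') ∈ T.edgeSet := hadj
  by_cases hmem : s(x, x') ∈ F
  · exact ⟨_, hmem, Sym2.mem_mk_left x x'⟩
  · obtain ⟨f, hfF, hne, y, hy1, hy2⟩ := hF.2 _ hℓ hmem
    rcases Sym2.mem_iff.mp hy1 with rfl | rfl
    · exact ⟨f, hfF, hy2⟩
    · exact absurd (unique_leaf_edge T hadj hdeg (hF.1 hfF) hy2).symm hne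

lemma two_le_degree {V : Type*} [Fintype V] [DecidableEq V] (T : SimpleGraph V)
    [DecidableRel T.Adj] {x a b : V} (h1 : T.Adj x a) (h2 : T.Adj x b) (hab : a ≠ b) :
    2 ≤ T.degree x := by
  have hsub : ({a, b} : Finset V) ⊆ T.neighborFinset x := by
    intro y hy
    rcases Finset.mem_insert.mp hy with rfl | hy
    · rwa [SimpleGraph.mem_neighborFinset]
    · rw [Finset.mem_singleton] at hy; subst hy
      rwa [SimpleGraph.mem_neighborFinset]
  calc 2 = ({a, b} : Finset V).card := (Finset.card_pair hab).symm
    _ ≤ (T.neighborFinset x).card := Finset.card_le_card hsub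

lemma key_lemma {V : Type*} [Fintype V] [DecidableEq V] (T : SimpleGraph V)
    {F0 : Set (Sym2 V)} (hF0 : IsTEDS T F0)
    {F : Set (Sym2 V)} (hF : IsEDS T F) (hFcard : F.ncard = edsNum T)
    {f1 f2 g : Sym2 V} (hf1 : f1 ∈ F) (hf2 : f2 ∈ F) (hne : f1 ≠ f2)
    (hg : g ∈ T.edgeSet) (ha1 : eAdj f1 g) (ha2 : eAdj f2 g) :
    tedsNum T ≠ 2 * edsNum T := by
  classical
  set φ : Sym2 V → Sym2 V := fun f =>
    if f = f1 ∨ f = f2 then g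
    else if hf : f ∈ T.edgeSet then (hF0.2 f hf).choose else g with hφ
  have hφ1 : φ f1 = g := by simp [hφ]
  have hφ2 : φ f2 = g := by simp [hφ]
  have hφmem : ∀ f ∈ F, φ f ∈ T.edgeSet ∧ eAdj f (φ f) := by
    intro f hf
    by_cases hc : f = f1 ∨ f = f2
    · simp only [hφ, if_pos hc]
      refine ⟨hg, ?_⟩
      rcases hc with rfl | rfl
      exacts [ha1, ha2]
    · have hfe : f ∈ T.edgeSet := hF.1 hf
      simp only [hφ, if_neg hc, dif_pos hfe]
      obtain ⟨hmem, hadj⟩ := (hF0.2 f hfe).choose_spec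
      exact ⟨hF0.1 hmem, hadj⟩
  set N := φ '' F with hN
  set S := F ∪ N with hS
  have hSteds : IsTEDS T S := by
    constructor
    · rintro e (he | ⟨f, hfF, rfl⟩)
      · exact hF.1 he
      · exact (hφmem f hfF).1
    · intro e he
      by_cases heF : e ∈ F
      · exact ⟨φ e, Or.inr ⟨e, heF, rfl⟩, (hφmem e heF).2⟩
      · obtain ⟨f, hfF, hadj⟩ := hF.2 e he heF
        exact ⟨f, Or.inl hfF, hadj⟩
  have hNcard : N.ncard ≤ F.ncard - 1 := by
    have himg : N = φ '' (F \ {f2}) := by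
      apply subset_antisymm
      · rintro _ ⟨f, hfF, rfl⟩
        by_cases hff : f = f2
        · subst hff
          exact ⟨f1, ⟨hf1, by simp [hne]⟩, by rw [hφ1, hφ2]⟩
        · exact ⟨f, ⟨hfF, by simp [hff]⟩, rfl⟩
      · exact Set.image_mono Set.diff_subset
    rw [himg]
    calc (φ '' (F \ {f2})).ncard ≤ (F \ {f2}).ncard := Set.ncard_image_le (Set.toFinite _)
      _ = F.ncard - 1 := Set.ncard_diff_singleton_of_mem hf2
  have hFpos : 0 < F.ncard := (Set.ncard_pos (Set.toFinite F)).mpr ⟨f1, hf1⟩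
  have hle : tedsNum T ≤ S.ncard := Nat.sInf_le ⟨S, hSteds, rfl⟩
  have hS2 : S.ncard ≤ F.ncard + N.ncard := Set.ncard_union_le F N
  intro heq
  omega

theorem stmt12 {V : Type*} [Fintype V] [DecidableEq V] (T : SimpleGraph V) [DecidableRel T.Adj]
    (hT : T.IsTree) (hTED : ∃ F : Set (Sym2 V), IsTEDS T F)
    (h : tedsNum T = 2 * edsNum T) :
    ¬ ∃ u v w : V, T.Adj u v ∧ T.Adj v w ∧ u ≠ w ∧
        IsSupport T u ∧ IsSupport T v ∧ IsSupport T w := by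
  rintro ⟨u, v, w, huv, hvw, huw, ⟨u', hu'adj, hu'deg⟩, ⟨v', hv'adj, hv'deg⟩,
    ⟨w', hw'adj, hw'deg⟩⟩
  obtain ⟨F0, hF0⟩ := hTED
  have hEDS0 : IsEDS T F0 := ⟨hF0.1, fun e he _ => hF0.2 e he⟩
  have hmemInf : edsNum T ∈ {n | ∃ F : Set (Sym2 V), IsEDS T F ∧ F.ncard = n} :=
    Nat.sInf_mem ⟨_, F0, hEDS0, rfl⟩
  obtain ⟨F, hF, hFcard⟩ := hmemInf
  -- basic distinctness facts
  have huvne : u ≠ v := huv.ne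
  have hvwne : v ≠ w := hvw.ne
  have hdegv : 2 ≤ T.degree v := two_le_degree T huv.symm hvw huw
  have hvu' : v ≠ u' := fun hh => by rw [← hh] at hu'deg; omega
  have hvw' : v ≠ w' := fun hh => by rw [← hh] at hw'deg; omega
  have hdegu : 2 ≤ T.degree u := two_le_degree T huv hu'adj hvu'
  have hdegw : 2 ≤ T.degree w := two_le_degree T hvw.symm hw'adj hvw'
  have huv' : u ≠ v' := fun hh => by rw [hh] at hdegu; omega
  have hwv' : w ≠ v' := fun hh => by rw [hh] at hdegw; omega
  have hu'v : u' ≠ v := fun hh => hvu' hh.symm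
  -- edges
  have heuv : s(u, v) ∈ T.edgeSet := huv
  have hevw : s(v, w) ∈ T.edgeSet := hvw
  have hevv' : s(v, v') ∈ T.edgeSet := hv'adj
  have heuu' : s(u, u') ∈ T.edgeSet := hu'adj
  -- Sym2 inequalities
  have n1 : s(u, v) ≠ s(v, w) := by
    rw [Ne, Sym2.eq_iff]; push_neg
    exact ⟨fun h1 => absurd h1 huvne, fun h1 => absurd h1 huw⟩
  have n2 : s(v, v') ≠ s(u, v) := by
    rw [Ne, Sym2.eq_iff]; push_neg
    exact ⟨fun hh => absurd hh.symm huvne, fun _ hh => huv' hh.symm⟩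
  have n3 : s(v, v') ≠ s(v, w) := by
    rw [Ne, Sym2.eq_iff]; push_neg
    exact ⟨fun _ h2 => hwv' h2.symm, fun h1 => absurd h1 hvwne⟩
  have n4 : s(u, u') ≠ s(u, v) := by
    rw [Ne, Sym2.eq_iff]; push_neg
    exact ⟨fun _ h2 => hu'v h2, fun h1 => absurd h1 huvne⟩
  have hwnuv : w ∉ s(u, v) := by
    rw [Sym2.mem_iff]; push_neg
    exact ⟨fun hh => huw hh.symm, fun hh => hvwne hh.symm⟩
  -- edges of F at u, v, w
  obtain ⟨eu, heuF, hueu⟩ := support_mem_eds T hF hu'adj hu'deg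
  obtain ⟨ev, hevF, hvev⟩ := support_mem_eds T hF hv'adj hv'deg
  obtain ⟨ew, hewF, hwew⟩ := support_mem_eds T hF hw'adj hw'deg
  have key' : ∀ f1 ∈ F, ∀ f2 ∈ F, f1 ≠ f2 → ∀ g ∈ T.edgeSet,
      eAdj f1 g → eAdj f2 g → False := fun f1 h1 f2 h2 hne g hg a1 a2 =>
    key_lemma T hF0 hF hFcard h1 h2 hne hg a1 a2 h
  by_cases h1 : eu = s(u, v)
  · by_cases h2 : ew = s(v, w)
    · -- pair (uv, vw), g = s(v,v')
      refine key' eu heuF ew hewF ?_ (s(v, v')) hevv' ?_ ?_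
      · rw [h1, h2]; exact n1
      · exact ⟨by rw [h1]; exact fun hh => n2 hh.symm, v, by rw [h1]; simp, by simp⟩
      · exact ⟨by rw [h2]; exact fun hh => n3 hh.symm, v, by rw [h2]; simp, by simp⟩
    · -- pair (uv, ew), g = s(v,w)
      refine key' eu heuF ew hewF ?_ (s(v, w)) hevw ?_ ?_
      · intro hh; rw [h1] at hh; exact hwnuv (hh ▸ hwew)
      · exact ⟨by rw [h1]; exact n1, v, by rw [h1]; simp, by simp⟩
      · exact ⟨h2, w, hwew, by simp⟩
  · by_cases h2 : ev = s(u, v)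
    · by_cases h3 : eu = s(u, u')
      · by_cases h4 : ew = s(v, w)
        · -- pair (uv, vw), g = s(v,v')
          refine key' ev hevF ew hewF ?_ (s(v, v')) hevv' ?_ ?_
          · rw [h2, h4]; exact n1
          · exact ⟨by rw [h2]; exact fun hh => n2 hh.symm, v, by rw [h2]; simp, by simp⟩
          · exact ⟨by rw [h4]; exact fun hh => n3 hh.symm, v, by rw [h4]; simp, by simp⟩
        · -- pair (uv, ew), g = s(v,w)
          refine key' ev hevF ew hewF ?_ (s(v, w)) hevw ?_ ?_
          · intro hh; rw [h2] at hh; exact hwnuv (hh ▸ hwew)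
          · exact ⟨by rw [h2]; exact n1, v, by rw [h2]; simp, by simp⟩
          · exact ⟨h4, w, hwew, by simp⟩
      · -- pair (eu, uv), g = s(u,u')
        refine key' eu heuF ev hevF ?_ (s(u, u')) heuu' ?_ ?_
        · intro hh; rw [hh, h2] at h1; exact h1 rfl
        · exact ⟨h3, u, hueu, by simp⟩
        · exact ⟨by rw [h2]; exact fun hh => n4 hh.symm, u, by rw [h2]; simp, by simp⟩
    · -- pair (eu, ev), g = s(u,v)
      refine key' eu heuF ev hevF ?_ (s(u, v)) heuv ?_ ?_
      · intro hh
        apply h1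
        rw [← (Sym2.mem_and_mem_iff huvne).mp ⟨hueu, hh ▸ hvev⟩]
      · exact ⟨h1, u, hueu, by simp⟩
      · exact ⟨h2, v, hvev, by simp⟩
end

section
/- Let T be a tree with γ'_t(T) = γ'(T), and let F_t be a minimum total edge dominating set of T. Then every connected component of the subgraph of T induced by the edge set F_t is a star with at least one edge (i.e., the component contains no path on 4 vertices). -/
open SimpleGraph

variable {V : Type*}

theorem stmt13 {V : Type*} [Fintype V] (T : SimpleGraph V)
    (hT : T.IsTree) (h : tedsNum T = edsNum T)
    (Ft : Set (Sym2 V)) (hFt : IsTEDS T Ft) (hmin : Ft.ncard = tedsNum T) :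
    ¬ ∃ a b c d : V, s(a, b) ∈ Ft ∧ s(b, c) ∈ Ft ∧ s(c, d) ∈ Ft ∧
        a ≠ c ∧ a ≠ d ∧ b ≠ d := by
  rintro ⟨a, b, c, d, hab, hbc, hcd, hac, had, hbd⟩
  obtain ⟨hsub, hdom⟩ := hFt
  have hfin : Ft.Finite := Set.toFinite Ft
  have hab' : a ≠ b := (T.mem_edgeSet.mp (hsub hab)).ne
  have hcd' : c ≠ d := (T.mem_edgeSet.mp (hsub hcd)).ne
  -- F' = Ft \ {s(b,c)} is an edge dominating set
  set F' : Set (Sym2 V) := Ft \ {s(b, c)} with hF'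
  have habne : s(a, b) ≠ s(b, c) := by
    simp only [ne_eq, Sym2.eq_iff]; rintro (⟨rfl, -⟩ | ⟨h1, -⟩)
    exacts [hab' rfl, hac h1]
  have hcdne : s(c, d) ≠ s(b, c) := by
    simp only [ne_eq, Sym2.eq_iff]; rintro (⟨-, h1⟩ | ⟨-, h1⟩)
    exacts [hcd' h1.symm, hbd h1.symm]
  have habF' : s(a, b) ∈ F' := ⟨hab, habne⟩
  have hcdF' : s(c, d) ∈ F' := ⟨hcd, hcdne⟩
  have hEDS : IsEDS T F' := by
    constructor
    · exact fun e he => hsub he.1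
    · intro e he heF'
      by_cases hebc : e = s(b, c)
      · subst hebc
        exact ⟨s(a, b), habF', habne.symm, b, by simp, by simp⟩
      · have henF : e ∉ Ft := fun heF => heF' ⟨heF, hebc⟩
        obtain ⟨f, hf, hadj⟩ := hdom e he
        by_cases hfbc : f = s(b, c)
        · subst hfbc
          obtain ⟨hne, v, hve, hvf⟩ := hadj
          rw [Sym2.mem_iff] at hvf
          rcases hvf with hvb | hvc
          · exact ⟨s(a, b), habF', fun e' => henF (e' ▸ hab), v, hve, by simp [hvb]⟩
          · exact ⟨s(c, d), hcdF', fun e' => henF (e' ▸ hcd), v, hve, by simp [hvc]⟩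
        · exact ⟨f, ⟨hf, hfbc⟩, hadj⟩
  have hcard : F'.ncard = Ft.ncard - 1 := Set.ncard_diff_singleton_of_mem hbc
  have hpos : 1 ≤ Ft.ncard := (Set.ncard_pos hfin).mpr ⟨_, hbc⟩
  have hle : edsNum T ≤ F'.ncard := Nat.sInf_le ⟨F', hEDS, rfl⟩
  omega
end

section
/- Let T be a tree with an edge e, and suppose the sets F₁(T,e) (TED-sets containing e), F₀(T,e) (TED-sets not containing e), F_{1̄}(T,e) (edge dominating sets in which e is the unique edge with no neighbor in the set), and F_{0̄}(T,e) (total edge dominating sets of T − e not dominating e) are all nonempty. Then γ'₁(T,e) ≤ γ'₀(T,e) + 1, γ'₁(T,e) ≤ γ'_{1̄}(T,e) + 1, γ'₁(T,e) ≤ γ'_{0̄}(T,e) + 2, and γ'_{1̄}(T,e) ≤ γ'_{0̄}(T,e) + 1, where each γ' is the minimum cardinality over the corresponding family. -/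
open SimpleGraph

variable {V : Type*}

/-- γ'₁: minimum size of a TED-set containing `e` (∞ if none exists). -/
noncomputable def g1 (G : SimpleGraph V) (e : Sym2 V) : ℕ∞ :=
  sInf {n : ℕ∞ | ∃ F : Set (Sym2 V), IsTEDS G F ∧ e ∈ F ∧ F.Finite ∧ (F.ncard : ℕ∞) = n}

/-- γ'₀: minimum size of a TED-set not containing `e` (∞ if none exists). -/
noncomputable def g0 (G : SimpleGraph V) (e : Sym2 V) : ℕ∞ :=
  sInf {n : ℕ∞ | ∃ F : Set (Sym2 V), IsTEDS G F ∧ e ∉ F ∧ F.Finite ∧ (F.ncard : ℕ∞) = n}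

/-- γ'_{1̄}: minimum size of an edge dominating set `F` with `e ∈ F` such that `e` is the
unique isolated edge of `F` (∞ if none exists). -/
noncomputable def g1bar (G : SimpleGraph V) (e : Sym2 V) : ℕ∞ :=
  sInf {n : ℕ∞ | ∃ F : Set (Sym2 V), IsEDS G F ∧ e ∈ F ∧
    (∀ f ∈ F, ¬ eAdj e f) ∧ (∀ f ∈ F, f ≠ e → ∃ f' ∈ F, eAdj f f') ∧
    F.Finite ∧ (F.ncard : ℕ∞) = n}

/-- γ'_{0̄}: minimum size of a TED-set of `G − e` no edge of which is adjacent to `e`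
(∞ if none exists). -/
noncomputable def g0bar (G : SimpleGraph V) (e : Sym2 V) : ℕ∞ :=
  sInf {n : ℕ∞ | ∃ F : Set (Sym2 V), IsTEDS (G.deleteEdges {e}) F ∧
    (∀ f ∈ F, ¬ eAdj e f) ∧ F.Finite ∧ (F.ncard : ℕ∞) = n}

lemma eAdj_symm {e f : Sym2 V} (h : eAdj e f) : eAdj f e :=
  ⟨h.1.symm, h.2.imp fun v hv => ⟨hv.2, hv.1⟩⟩

theorem stmt14 {V : Type*} [Fintype V] (T : SimpleGraph V) (hT : T.IsTree)
    (e : Sym2 V) (he : e ∈ T.edgeSet)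
    (h1 : ∃ F : Set (Sym2 V), IsTEDS T F ∧ e ∈ F)
    (h0 : ∃ F : Set (Sym2 V), IsTEDS T F ∧ e ∉ F)
    (h1b : ∃ F : Set (Sym2 V), IsEDS T F ∧ e ∈ F ∧
      (∀ f ∈ F, ¬ eAdj e f) ∧ (∀ f ∈ F, f ≠ e → ∃ f' ∈ F, eAdj f f'))
    (h0b : ∃ F : Set (Sym2 V), IsTEDS (T.deleteEdges {e}) F ∧ ∀ f ∈ F, ¬ eAdj e f) :
    g1 T e ≤ g0 T e + 1 ∧ g1 T e ≤ g1bar T e + 1 ∧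
    g1 T e ≤ g0bar T e + 2 ∧ g1bar T e ≤ g0bar T e + 1 := by
  classical
  -- an edge f0 adjacent to e
  obtain ⟨F1, hF1, _⟩ := h1
  obtain ⟨f0, hf0F, hf0adj⟩ := hF1.2 e he
  have hf0edge : f0 ∈ T.edgeSet := hF1.1 hf0F
  have hf0ne : f0 ≠ e := fun h => hf0adj.1 h.symm
  -- bound g1 by any witness
  have hg1le : ∀ F : Set (Sym2 V), IsTEDS T F → e ∈ F → g1 T e ≤ (F.ncard : ℕ∞) :=
    fun F h he' => sInf_le ⟨F, h, he', F.toFinite, rfl⟩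
  have hg1ble : ∀ F : Set (Sym2 V), IsEDS T F → e ∈ F → (∀ f ∈ F, ¬ eAdj e f) →
      (∀ f ∈ F, f ≠ e → ∃ f' ∈ F, eAdj f f') → g1bar T e ≤ (F.ncard : ℕ∞) :=
    fun F h he' h3 h4 => sInf_le ⟨F, h, he', h3, h4, F.toFinite, rfl⟩
  -- minimizer for g0
  obtain ⟨F0, hF0, heF0, _, hc0⟩ :
      ∃ F : Set (Sym2 V), IsTEDS T F ∧ e ∉ F ∧ F.Finite ∧ (F.ncard : ℕ∞) = g0 T e := by
    obtain ⟨F, hF, heF⟩ := h0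
    have hm : g0 T e ∈ {n : ℕ∞ | ∃ F : Set (Sym2 V), IsTEDS T F ∧ e ∉ F ∧ F.Finite ∧
        (F.ncard : ℕ∞) = n} := csInf_mem ⟨_, F, hF, heF, F.toFinite, rfl⟩
    exact hm
  -- minimizer for g1bar
  obtain ⟨Fb1, hFb1, heFb1, hFb1iso, hFb1tot, _, hcb1⟩ :
      ∃ F : Set (Sym2 V), IsEDS T F ∧ e ∈ F ∧ (∀ f ∈ F, ¬ eAdj e f) ∧
        (∀ f ∈ F, f ≠ e → ∃ f' ∈ F, eAdj f f') ∧ F.Finite ∧ (F.ncard : ℕ∞) = g1bar T e := by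
    obtain ⟨F, hF, heF, h3, h4⟩ := h1b
    have hm : g1bar T e ∈ {n : ℕ∞ | ∃ F : Set (Sym2 V), IsEDS T F ∧ e ∈ F ∧
        (∀ f ∈ F, ¬ eAdj e f) ∧ (∀ f ∈ F, f ≠ e → ∃ f' ∈ F, eAdj f f') ∧ F.Finite ∧
        (F.ncard : ℕ∞) = n} := csInf_mem ⟨_, F, hF, heF, h3, h4, F.toFinite, rfl⟩
    exact hm
  -- minimizer for g0bar
  obtain ⟨Fb0, hFb0, hFb0n, _, hcb0⟩ :
      ∃ F : Set (Sym2 V), IsTEDS (T.deleteEdges {e}) F ∧ (∀ f ∈ F, ¬ eAdj e f) ∧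
        F.Finite ∧ (F.ncard : ℕ∞) = g0bar T e := by
    obtain ⟨F, hF, hFn⟩ := h0b
    have hm : g0bar T e ∈ {n : ℕ∞ | ∃ F : Set (Sym2 V), IsTEDS (T.deleteEdges {e}) F ∧
        (∀ f ∈ F, ¬ eAdj e f) ∧ F.Finite ∧ (F.ncard : ℕ∞) = n} :=
      csInf_mem ⟨_, F, hF, hFn, F.toFinite, rfl⟩
    exact hm
  have hFb0sub : ∀ f ∈ Fb0, f ∈ T.edgeSet ∧ f ≠ e := by
    intro f hf
    have := hFb0.1 hf
    rw [SimpleGraph.edgeSet_deleteEdges, Set.mem_diff] at this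
    exact ⟨this.1, by simpa using this.2⟩
  have heFb0 : e ∉ Fb0 := fun h => (hFb0sub e h).2 rfl
  have hf0Fb0 : f0 ∉ Fb0 := fun h => hFb0n f0 h hf0adj
  refine ⟨?_, ?_, ?_, ?_⟩
  · -- g1 ≤ g0 + 1
    have hT1 : IsTEDS T (insert e F0) := by
      refine ⟨Set.insert_subset he hF0.1, fun g hg => ?_⟩
      obtain ⟨f, hf, hadj⟩ := hF0.2 g hg
      exact ⟨f, Set.mem_insert_of_mem _ hf, hadj⟩
    calc g1 T e ≤ ((insert e F0).ncard : ℕ∞) := hg1le _ hT1 (Set.mem_insert _ _)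
      _ ≤ (F0.ncard : ℕ∞) + 1 := by exact_mod_cast Set.ncard_insert_le e F0
      _ = g0 T e + 1 := by rw [hc0]
  · -- g1 ≤ g1bar + 1
    have hf0nF : f0 ∉ Fb1 := fun h => hFb1iso f0 h hf0adj
    have hT1 : IsTEDS T (insert f0 Fb1) := by
      refine ⟨Set.insert_subset hf0edge hFb1.1, fun g hg => ?_⟩
      by_cases hge : g = e
      · exact ⟨f0, Set.mem_insert _ _, hge ▸ hf0adj⟩
      · by_cases hgF : g ∈ Fb1
        · obtain ⟨f', hf', hadj⟩ := hFb1tot g hgF hge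
          exact ⟨f', Set.mem_insert_of_mem _ hf', hadj⟩
        · obtain ⟨f', hf', hadj⟩ := hFb1.2 g hg hgF
          exact ⟨f', Set.mem_insert_of_mem _ hf', hadj⟩
    calc g1 T e ≤ ((insert f0 Fb1).ncard : ℕ∞) :=
          hg1le _ hT1 (Set.mem_insert_of_mem _ heFb1)
      _ ≤ (Fb1.ncard : ℕ∞) + 1 := by exact_mod_cast Set.ncard_insert_le f0 Fb1
      _ = g1bar T e + 1 := by rw [hcb1]
  · -- g1 ≤ g0bar + 2
    have hT1 : IsTEDS T (insert e (insert f0 Fb0)) := by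
      refine ⟨?_, fun g hg => ?_⟩
      · exact Set.insert_subset he (Set.insert_subset hf0edge fun f hf => (hFb0sub f hf).1)
      · by_cases hge : g = e
        · exact ⟨f0, Set.mem_insert_of_mem _ (Set.mem_insert _ _), hge ▸ hf0adj⟩
        · by_cases hgf0 : g = f0
          · exact ⟨e, Set.mem_insert _ _, hgf0 ▸ eAdj_symm hf0adj⟩
          · have hg' : g ∈ (T.deleteEdges {e}).edgeSet := by
              rw [SimpleGraph.edgeSet_deleteEdges]
              exact ⟨hg, by simpa using hge⟩
            obtain ⟨f', hf', hadj⟩ := hFb0.2 g hg'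
            exact ⟨f', Set.mem_insert_of_mem _ (Set.mem_insert_of_mem _ hf'), hadj⟩
    calc g1 T e ≤ ((insert e (insert f0 Fb0)).ncard : ℕ∞) :=
          hg1le _ hT1 (Set.mem_insert _ _)
      _ ≤ ((insert f0 Fb0).ncard : ℕ∞) + 1 := by
          exact_mod_cast Set.ncard_insert_le e (insert f0 Fb0)
      _ ≤ ((Fb0.ncard : ℕ∞) + 1) + 1 := by
          gcongr
          exact_mod_cast Set.ncard_insert_le f0 Fb0
      _ = g0bar T e + 2 := by rw [hcb0]; ring
  · -- g1bar ≤ g0bar + 1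
    have hE : IsEDS T (insert e Fb0) := by
      refine ⟨Set.insert_subset he fun f hf => (hFb0sub f hf).1, fun g hg hgn => ?_⟩
      have hge : g ≠ e := fun h => hgn (h ▸ Set.mem_insert _ _)
      have hg' : g ∈ (T.deleteEdges {e}).edgeSet := by
        rw [SimpleGraph.edgeSet_deleteEdges]
        exact ⟨hg, by simpa using hge⟩
      obtain ⟨f', hf', hadj⟩ := hFb0.2 g hg'
      exact ⟨f', Set.mem_insert_of_mem _ hf', hadj⟩
    have h3 : ∀ f ∈ insert e Fb0, ¬ eAdj e f := by
      intro f hf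
      rcases hf with rfl | hf
      · exact fun h => h.1 rfl
      · exact hFb0n f hf
    have h4 : ∀ f ∈ insert e Fb0, f ≠ e → ∃ f' ∈ insert e Fb0, eAdj f f' := by
      intro f hf hfe
      rcases hf with rfl | hf
      · exact absurd rfl hfe
      · obtain ⟨f', hf', hadj⟩ := hFb0.2 f (hFb0.1 hf)
        exact ⟨f', Set.mem_insert_of_mem _ hf', hadj⟩
    calc g1bar T e ≤ ((insert e Fb0).ncard : ℕ∞) :=
          hg1ble _ hE (Set.mem_insert _ _) h3 h4
      _ ≤ (Fb0.ncard : ℕ∞) + 1 := by exact_mod_cast Set.ncard_insert_le e Fb0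
      _ = g0bar T e + 1 := by rw [hcb0]
end

section
/- Let T be a rooted tree, e⁰ a non-leaf edge with children neighbor edges e¹,…,e^q, and T⁰,…,T^q the corresponding subtrees (T^j is the component of T after removing all of e⁰,e¹,…,e^q except e^j that contains e^j). Then γ'_{0̄}(T, e⁰) = γ'_{0̄}(T⁰, e⁰) + Σ_{j=1}^q γ'₀(T^j, e^j). -/
open SimpleGraph

variable {V : Type*}

/-- The connected component of `H` containing the vertex `v`, as a graph on the same
vertex type (all edges of `H` both of whose endpoints are reachable from `v`). -/
def compG (H : SimpleGraph V) (v : V) : SimpleGraph V where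
  Adj a b := H.Adj a b ∧ H.Reachable v a
  symm := ⟨fun a b h => ⟨h.1.symm, h.2.trans h.1.reachable⟩⟩
  loopless := ⟨fun a h => H.loopless.irrefl a h.1⟩

lemma compG_adj {H : SimpleGraph V} {v a b : V} :
    (compG H v).Adj a b ↔ H.Adj a b ∧ H.Reachable v a := Iff.rfl

lemma aux_reach_of_mem_support {G : SimpleGraph V} {a b x : V} (w : G.Walk a b)
    (hx : x ∈ w.support) : G.Reachable a x := by
  rw [SimpleGraph.Walk.mem_support_iff_exists_append] at hx
  obtain ⟨q, r, rfl⟩ := hx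
  exact ⟨q⟩

lemma aux_classify {G : SimpleGraph V} {t : V} {Q : V → Prop}
    (hbase : ∀ x, G.Adj t x → Q x)
    (hstep : ∀ x y, G.Adj x y → x ≠ t → y ≠ t → Q x → Q y)
    {v : V} (h : G.Reachable v t) : v = t ∨ Q v := by
  obtain ⟨w⟩ := h
  suffices H : ∀ (a b : V) (w : G.Walk a b), b = t → a = t ∨ Q a from H v t w rfl
  intro a b w
  induction w with
  | nil => exact fun h => Or.inl h
  | @cons a x b hax w' ih =>
    intro hbt
    by_cases hxt : x = t
    · exact Or.inr (hbase a (hxt ▸ hax.symm))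
    · by_cases hat : a = t
      · exact Or.inl hat
      · exact Or.inr (hstep x a hax.symm hxt hat ((ih hbt).resolve_left hxt))

lemma aux_tree_disjoint [DecidableEq V] {T H : SimpleGraph V} (hT : T.IsTree) (hle : H ≤ T)
    {u a b : V} (ha : T.Adj u a) (hb : T.Adj u b) (hab : a ≠ b)
    (hua : ¬ H.Reachable a u) {v : V}
    (h1 : H.Reachable a v) (h2 : H.Reachable b v) : False := by
  obtain ⟨w⟩ := h1.trans h2.symm
  have hedges : ∀ e ∈ w.edges, e ∈ T.edgeSet := fun e he =>
    SimpleGraph.edgeSet_mono hle (w.edges_subset_edgeSet he)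
  have hu : u ∉ (w.transfer T hedges).support := by
    rw [SimpleGraph.Walk.support_transfer]
    intro hmem
    exact hua (aux_reach_of_mem_support w hmem)
  have hp0 : (SimpleGraph.Walk.cons ha.symm (SimpleGraph.Walk.cons hb SimpleGraph.Walk.nil)).IsPath := by
    simp [SimpleGraph.Walk.isPath_def, ha.ne', hb.ne', hb.ne, hab]
  have hPeq := hT.IsAcyclic.path_unique ⟨_, hp0⟩ (w.transfer T hedges).toPath
  apply hu
  have hmem : u ∈ ((w.transfer T hedges).toPath : T.Walk a b).support := by
    rw [← hPeq]; simp
  exact SimpleGraph.Walk.support_toPath_subset _ hmem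

lemma aux_ncard {α : Type*} {q : ℕ} (F0 : Set α) (Fc : Fin q → Set α)
    (h0 : F0.Finite) (hc : ∀ j, (Fc j).Finite)
    (hd0 : ∀ j, Disjoint F0 (Fc j))
    (hdc : ∀ i j, i ≠ j → Disjoint (Fc i) (Fc j)) :
    (F0 ∪ ⋃ j, Fc j).ncard = F0.ncard + ∑ j, (Fc j).ncard := by
  classical
  rw [Set.ncard_union_eq (Set.disjoint_iUnion_right.2 hd0) h0 (Set.finite_iUnion hc)]
  congr 1
  have h1 : (⋃ j, Fc j : Set α) = ((Finset.univ.biUnion fun j => (hc j).toFinset : Finset α) : Set α) := by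
    ext x; simp [Set.Finite.mem_toFinset]
  rw [h1, Set.ncard_coe_finset, Finset.card_biUnion ?_]
  · exact Finset.sum_congr rfl fun j _ => (Set.ncard_eq_toFinset_card _ (hc j)).symm
  · intro i _ j _ hij
    simp only [Finset.disjoint_left, Set.Finite.mem_toFinset]
    exact fun a ha hb => Set.disjoint_left.1 (hdc i j hij) ha hb

lemma aux_g0bar_le {G : SimpleGraph V} {e : Sym2 V} {F : Set (Sym2 V)}
    (h1 : IsTEDS (G.deleteEdges {e}) F) (h2 : ∀ f ∈ F, ¬ eAdj e f) (h3 : F.Finite) :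
    g0bar G e ≤ (F.ncard : ℕ∞) :=
  sInf_le ⟨F, h1, h2, h3, rfl⟩

lemma aux_g0_le {G : SimpleGraph V} {e : Sym2 V} {F : Set (Sym2 V)}
    (h1 : IsTEDS G F) (h2 : e ∉ F) (h3 : F.Finite) :
    g0 G e ≤ (F.ncard : ℕ∞) :=
  sInf_le ⟨F, h1, h2, h3, rfl⟩

lemma aux_g0bar_attain {G : SimpleGraph V} {e : Sym2 V} (h : g0bar G e ≠ ⊤) :
    ∃ F : Set (Sym2 V), IsTEDS (G.deleteEdges {e}) F ∧ (∀ f ∈ F, ¬ eAdj e f) ∧ F.Finite ∧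
      (F.ncard : ℕ∞) = g0bar G e := by
  have hne : {n : ℕ∞ | ∃ F : Set (Sym2 V), IsTEDS (G.deleteEdges {e}) F ∧
      (∀ f ∈ F, ¬ eAdj e f) ∧ F.Finite ∧ (F.ncard : ℕ∞) = n}.Nonempty := by
    by_contra hcon
    rw [Set.not_nonempty_iff_eq_empty] at hcon
    apply h
    unfold g0bar
    rw [hcon, sInf_empty]
  obtain ⟨F, h1, h2, h3, h4⟩ := csInf_mem hne
  exact ⟨F, h1, h2, h3, h4⟩

lemma aux_g0_attain {G : SimpleGraph V} {e : Sym2 V} (h : g0 G e ≠ ⊤) :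
    ∃ F : Set (Sym2 V), IsTEDS G F ∧ e ∉ F ∧ F.Finite ∧ (F.ncard : ℕ∞) = g0 G e := by
  have hne : {n : ℕ∞ | ∃ F : Set (Sym2 V), IsTEDS G F ∧ e ∉ F ∧ F.Finite ∧
      (F.ncard : ℕ∞) = n}.Nonempty := by
    by_contra hcon
    rw [Set.not_nonempty_iff_eq_empty] at hcon
    apply h
    unfold g0
    rw [hcon, sInf_empty]
  obtain ⟨F, h1, h2, h3, h4⟩ := csInf_mem hne
  exact ⟨F, h1, h2, h3, h4⟩

theorem stmt15
    {V : Type*} [Fintype V] [DecidableEq V] (T : SimpleGraph V) [DecidableRel T.Adj]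
    (hT : T.IsTree) (r : V) (hr : T.degree r = 1)
    (p u : V) (hpu : T.Adj p u) (hdown : T.dist r p + 1 = T.dist r u)
    (hnonleaf : 2 ≤ T.degree p ∧ 2 ≤ T.degree u)
    (q : ℕ) (hq : 1 ≤ q) (c : Fin q → V) (hcinj : Function.Injective c)
    (hcp : ∀ j, c j ≠ p)
    (hnbr : ∀ x : V, T.Adj u x ↔ (x = p ∨ ∃ j : Fin q, x = c j)) :
    g0bar T s(p, u) =
      g0bar (compG (T.deleteEdges (Set.range fun j : Fin q => s(u, c j))) u) s(p, u) +
      ∑ j : Fin q,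
        g0 (compG (T.deleteEdges (((Set.range fun i : Fin q => s(u, c i)) ∪ {s(p, u)}) \ {s(u, c j)})) (c j))
          s(u, c j) := by
  classical
  set e0 : Sym2 V := s(p, u) with he0
  set E : Set (Sym2 V) := Set.range fun j : Fin q => s(u, c j) with hE
  set U : Set (Sym2 V) := E ∪ {e0} with hU
  set H : SimpleGraph V := T.deleteEdges U with hH
  set G0 : SimpleGraph V := compG (T.deleteEdges E) u with hG0
  set DJ : Fin q → Set (Sym2 V) := fun j => U \ {s(u, c j)} with hDJ
  set GJ : Fin q → SimpleGraph V := fun j => compG (T.deleteEdges (DJ j)) (c j) with hGJ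
  show g0bar T e0 = g0bar G0 e0 + ∑ j : Fin q, g0 (GJ j) s(u, c j)
  -- ===== basic facts =====
  have hpu' : T.Adj u p := hpu.symm
  have hpne : p ≠ u := hpu.ne
  have hcadj : ∀ j, T.Adj u (c j) := fun j => (hnbr (c j)).2 (Or.inr ⟨j, rfl⟩)
  have hcne : ∀ j, c j ≠ u := fun j => (hcadj j).ne'
  have hce0 : ∀ j, s(u, c j) ≠ e0 := by
    intro j h
    rw [he0, Sym2.eq_iff] at h
    rcases h with ⟨h1, _⟩ | ⟨_, h2⟩
    · exact hpne h1.symm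
    · exact hcp j h2
  have hcinj' : ∀ i j : Fin q, s(u, c i) = s(u, c j) → i = j := by
    intro i j h
    rw [Sym2.congr_right] at h
    exact hcinj h
  have hupE : ∀ j, s(u, c j) ∈ E := by
    intro j; rw [hE]; exact ⟨j, rfl⟩
  have hmemU : ∀ f ∈ U, u ∈ f := by
    intro f hf
    rw [hU] at hf
    rcases hf with hf | hf
    · rw [hE] at hf; obtain ⟨j, rfl⟩ := hf; exact Sym2.mem_iff.2 (Or.inl rfl)
    · rw [Set.mem_singleton_iff] at hf; subst hf; rw [he0]; exact Sym2.mem_iff.2 (Or.inr rfl)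
  have hnotU : ∀ a b : V, a ≠ u → b ≠ u → s(a, b) ∉ U := by
    intro a b ha hb hf
    rcases Sym2.mem_iff.1 (hmemU _ hf) with h | h
    exacts [ha h.symm, hb h.symm]
  have he0U : e0 ∈ U := by rw [hU]; exact Or.inr rfl
  have hEU : E ⊆ U := by rw [hU]; exact Set.subset_union_left
  have hDJU : ∀ j, DJ j ⊆ U := by intro j; rw [hDJ]; exact Set.diff_subset
  have he0DJ : ∀ j, e0 ∈ DJ j := by
    intro j
    rw [hDJ]
    exact ⟨he0U, fun h => hce0 j (Set.mem_singleton_iff.1 h).symm⟩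
  have hEDJ : ∀ i j : Fin q, i ≠ j → s(u, c i) ∈ DJ j := by
    intro i j hij
    rw [hDJ]
    exact ⟨hEU (hupE i), fun h => hij (hcinj' i j (Set.mem_singleton_iff.1 h))⟩
  have hejDJ : ∀ j, s(u, c j) ∉ DJ j := by
    intro j h
    rw [hDJ] at h
    exact h.2 rfl
  have hsupE : s(u, p) = e0 := Sym2.eq_swap.trans he0.symm
  -- ===== graph facts =====
  have hHT : H ≤ T := by rw [hH]; exact deleteEdges_le _
  have hH_adj : ∀ {a b : V}, T.Adj a b → a ≠ u → b ≠ u → H.Adj a b := by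
    intro a b h ha hb
    rw [hH, deleteEdges_adj]
    exact ⟨h, hnotU a b ha hb⟩
  have hHE : H ≤ T.deleteEdges E := by rw [hH]; exact deleteEdges_anti hEU
  have hHDJ : ∀ j, H ≤ T.deleteEdges (DJ j) := by
    intro j; rw [hH]; exact deleteEdges_anti (hDJU j)
  have hHu : ∀ x, ¬ H.Adj u x := by
    intro x hx
    rw [hH, deleteEdges_adj] at hx
    obtain ⟨hx1, hx2⟩ := hx
    rcases (hnbr x).1 hx1 with rfl | ⟨j, rfl⟩
    · exact hx2 (hsupE ▸ he0U)
    · exact hx2 (hEU (hupE j))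
  have hnr : ∀ x, x ≠ u → ¬ H.Reachable x u := by
    intro x hx hr
    obtain ⟨w⟩ := hr.symm
    cases w with
    | nil => exact hx rfl
    | cons h' _ => exact hHu _ h'
  have keyPC : ∀ (j : Fin q) (v : V), H.Reachable p v → H.Reachable (c j) v → False := by
    intro j v h1 h2
    exact aux_tree_disjoint hT hHT hpu' (hcadj j) (fun h => hcp j h.symm) (hnr p hpne) h1 h2
  have keyCC : ∀ (i j : Fin q), i ≠ j → ∀ v : V, H.Reachable (c i) v → H.Reachable (c j) v → False := by
    intro i j hij v h1 h2
    exact aux_tree_disjoint hT hHT (hcadj i) (hcadj j) (fun h => hij (hcinj h)) (hnr _ (hcne i)) h1 h2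
  -- ===== cover =====
  have cover : ∀ v : V, v = u ∨ H.Reachable p v ∨ ∃ j, H.Reachable (c j) v := by
    intro v
    refine aux_classify (Q := fun x => H.Reachable p x ∨ ∃ j, H.Reachable (c j) x) ?_ ?_
      (hT.isConnected.preconnected v u)
    · intro x hx
      rcases (hnbr x).1 hx with rfl | ⟨j, rfl⟩
      · exact Or.inl (Reachable.refl _)
      · exact Or.inr ⟨j, Reachable.refl _⟩
    · intro x y hxy hx hy hQ
      have hAdj := hH_adj hxy hx hy
      rcases hQ with h | ⟨j, h⟩
      · exact Or.inl (h.trans hAdj.reachable)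
      · exact Or.inr ⟨j, h.trans hAdj.reachable⟩
  -- ===== reach0 =====
  have reach0 : ∀ v, (T.deleteEdges E).Reachable u v ↔ (v = u ∨ H.Reachable p v) := by
    intro v
    constructor
    · intro h
      refine aux_classify (Q := fun x => H.Reachable p x) ?_ ?_ h.symm
      · intro x hx
        rw [deleteEdges_adj] at hx
        rcases (hnbr x).1 hx.1 with rfl | ⟨j, rfl⟩
        · exact Reachable.refl _
        · exact absurd (hupE j) hx.2
      · intro x y hxy hx hy hQ
        exact hQ.trans (hH_adj ((T.deleteEdges_le E) hxy) hx hy).reachable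
    · rintro (rfl | h)
      · exact Reachable.refl _
      · have hadj : (T.deleteEdges E).Adj u p := by
          rw [deleteEdges_adj]
          refine ⟨hpu', fun hmem => ?_⟩
          rw [hE] at hmem
          obtain ⟨j, hj⟩ := hmem
          rw [Sym2.congr_right] at hj
          exact hcp j hj
        exact hadj.reachable.trans (h.mono hHE)
  -- ===== reachJ =====
  have reachJ : ∀ (j : Fin q) (v : V),
      (T.deleteEdges (DJ j)).Reachable (c j) v ↔ (v = u ∨ H.Reachable (c j) v) := by
    intro j v
    constructor
    · intro h
      have hcl := aux_classify (Q := fun x => x = u ∨ H.Reachable (c j) x) ?_ ?_ h.symm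
      · rcases hcl with rfl | hcl
        · exact Or.inr (Reachable.refl _)
        · exact hcl
      · intro x hx
        rw [deleteEdges_adj] at hx
        by_cases hxu : x = u
        · exact Or.inl hxu
        · exact Or.inr (hH_adj hx.1 (hcne j) hxu).reachable
      · intro x y hxy hxc hyc hQ
        by_cases hyu : y = u
        · exact Or.inl hyu
        rcases hQ with rfl | hQ
        · exfalso
          rw [deleteEdges_adj] at hxy
          rcases (hnbr y).1 hxy.1 with rfl | ⟨i, rfl⟩
          · exact hxy.2 (hsupE ▸ he0DJ j)
          · have hij : i ≠ j := fun h => hyc (by rw [h])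
            exact hxy.2 (hEDJ i j hij)
        · have hxu : x ≠ u := by rintro rfl; exact hnr _ (hcne j) hQ
          exact Or.inr (hQ.trans (hH_adj ((T.deleteEdges_le _) hxy) hxu hyu).reachable)
    · rintro (rfl | h)
      · refine (Adj.reachable ?_).symm
        rw [deleteEdges_adj]
        refine ⟨hcadj j, ?_⟩
        exact hejDJ j
      · exact h.mono (hHDJ j)
  -- ===== adjacency characterizations =====
  have adjG0 : ∀ a b : V, G0.Adj a b ↔ T.Adj a b ∧ s(a, b) ∉ E ∧ (a = u ∨ H.Reachable p a) := by
    intro a b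
    rw [hG0, compG_adj, deleteEdges_adj]
    constructor
    · rintro ⟨⟨h1, h2⟩, h3⟩
      exact ⟨h1, h2, (reach0 a).1 h3⟩
    · rintro ⟨h1, h2, h3⟩
      exact ⟨⟨h1, h2⟩, (reach0 a).2 h3⟩
  have adjGJ : ∀ (j : Fin q) (a b : V),
      (GJ j).Adj a b ↔ T.Adj a b ∧ s(a, b) ∉ DJ j ∧ (a = u ∨ H.Reachable (c j) a) := by
    intro j a b
    rw [hGJ]
    show (compG (T.deleteEdges (DJ j)) (c j)).Adj a b ↔ _
    rw [compG_adj, deleteEdges_adj]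
    constructor
    · rintro ⟨⟨h1, h2⟩, h3⟩
      exact ⟨h1, h2, (reachJ j a).1 h3⟩
    · rintro ⟨h1, h2, h3⟩
      exact ⟨⟨h1, h2⟩, (reachJ j a).2 h3⟩
  -- ===== edge-set characterizations =====
  have edgeG0 : ∀ f : Sym2 V, f ∈ G0.edgeSet ↔
      f ∈ T.edgeSet ∧ f ∉ E ∧ ∀ a ∈ f, (a = u ∨ H.Reachable p a) := by
    intro f
    induction f using Sym2.ind with
    | _ a b =>
      rw [mem_edgeSet, mem_edgeSet, adjG0]
      constructor
      · rintro ⟨h1, h2, h3⟩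
        refine ⟨h1, h2, ?_⟩
        intro x hx
        rcases Sym2.mem_iff.1 hx with rfl | rfl
        · exact h3
        · rcases h3 with rfl | h3
          · rcases (hnbr x).1 h1 with rfl | ⟨j, rfl⟩
            · exact Or.inr (Reachable.refl _)
            · exact absurd (hupE j) h2
          · by_cases hbu : x = u
            · exact Or.inl hbu
            · have hau : a ≠ u := by rintro rfl; exact hnr p hpne h3
              exact Or.inr (h3.trans (hH_adj h1 hau hbu).reachable)
      · rintro ⟨h1, h2, h3⟩
        exact ⟨h1, h2, h3 a (Sym2.mem_iff.2 (Or.inl rfl))⟩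
  have edgeGJ : ∀ (j : Fin q) (f : Sym2 V), f ∈ (GJ j).edgeSet ↔
      f ∈ T.edgeSet ∧ f ∉ DJ j ∧ ∀ a ∈ f, (a = u ∨ H.Reachable (c j) a) := by
    intro j f
    induction f using Sym2.ind with
    | _ a b =>
      rw [mem_edgeSet, mem_edgeSet, adjGJ]
      constructor
      · rintro ⟨h1, h2, h3⟩
        refine ⟨h1, h2, ?_⟩
        intro x hx
        rcases Sym2.mem_iff.1 hx with rfl | rfl
        · exact h3
        · rcases h3 with rfl | h3
          · rcases (hnbr x).1 h1 with rfl | ⟨i, rfl⟩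
            · exact absurd (hsupE ▸ he0DJ j) h2
            · by_cases hij : i = j
              · subst hij; exact Or.inr (Reachable.refl _)
              · exact absurd (hEDJ i j hij) h2
          · by_cases hbu : x = u
            · exact Or.inl hbu
            · have hau : a ≠ u := by rintro rfl; exact hnr _ (hcne j) h3
              exact Or.inr (h3.trans (hH_adj h1 hau hbu).reachable)
      · rintro ⟨h1, h2, h3⟩
        exact ⟨h1, h2, h3 a (Sym2.mem_iff.2 (Or.inl rfl))⟩
  -- ===== eAdj helpers =====
  have noAdj : ∀ f : Sym2 V, f ≠ e0 → ¬ eAdj e0 f → p ∉ f ∧ u ∉ f := by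
    intro f h1 h2
    constructor
    · intro hm
      exact h2 ⟨Ne.symm h1, p, by rw [he0]; exact Sym2.mem_iff.2 (Or.inl rfl), hm⟩
    · intro hm
      exact h2 ⟨Ne.symm h1, u, by rw [he0]; exact Sym2.mem_iff.2 (Or.inr rfl), hm⟩
  have noAdj' : ∀ f : Sym2 V, p ∉ f → u ∉ f → ¬ eAdj e0 f := by
    rintro f hp hu ⟨_, v, hv1, hv2⟩
    rw [he0, Sym2.mem_iff] at hv1
    rcases hv1 with rfl | rfl
    exacts [hp hv2, hu hv2]
  have hue0 : u ∈ e0 := by rw [he0]; exact Sym2.mem_iff.2 (Or.inr rfl)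
  have huej : ∀ j, u ∈ s(u, c j) := fun j => Sym2.mem_iff.2 (Or.inl rfl)
  -- ===== split =====
  have split : ∀ F : Set (Sym2 V), IsTEDS (T.deleteEdges {e0}) F → (∀ f ∈ F, ¬ eAdj e0 f) →
      F.Finite →
      ∃ (F0 : Set (Sym2 V)) (Fc : Fin q → Set (Sym2 V)),
        (IsTEDS (G0.deleteEdges {e0}) F0 ∧ (∀ f ∈ F0, ¬ eAdj e0 f) ∧ F0.Finite) ∧
        (∀ j, IsTEDS (GJ j) (Fc j) ∧ s(u, c j) ∉ Fc j ∧ (Fc j).Finite) ∧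
        F.ncard = F0.ncard + ∑ j, (Fc j).ncard := by
    intro F hF hFadj hFfin
    have hmem : ∀ f ∈ F, f ∈ T.edgeSet ∧ u ∉ f ∧ p ∉ f := by
      intro f hf
      have h1 := hF.1 hf
      rw [edgeSet_deleteEdges] at h1
      obtain ⟨hpf, huf⟩ := noAdj f (by simpa using h1.2) (hFadj f hf)
      exact ⟨h1.1, huf, hpf⟩
    have hclass : ∀ f ∈ F,
        (∀ a ∈ f, H.Reachable p a) ∨ ∃ j, ∀ a ∈ f, H.Reachable (c j) a := by
      intro f
      induction f using Sym2.ind with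
      | _ a b =>
        intro hf
        obtain ⟨hT', huf, _⟩ := hmem _ hf
        have hau : a ≠ u := fun h => huf (Sym2.mem_iff.2 (Or.inl h.symm))
        have hbu : b ≠ u := fun h => huf (Sym2.mem_iff.2 (Or.inr h.symm))
        have hAdj : H.Adj a b := hH_adj ((mem_edgeSet _).1 hT') hau hbu
        rcases cover a with rfl | hra | ⟨j, hra⟩
        · exact absurd rfl hau
        · left
          intro x hx
          rcases Sym2.mem_iff.1 hx with rfl | rfl
          exacts [hra, hra.trans hAdj.reachable]
        · right
          refine ⟨j, fun x hx => ?_⟩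
          rcases Sym2.mem_iff.1 hx with rfl | rfl
          exacts [hra, hra.trans hAdj.reachable]
    refine ⟨{f ∈ F | ∀ a ∈ f, H.Reachable p a},
      fun j => {f ∈ F | ∀ a ∈ f, H.Reachable (c j) a}, ⟨⟨?_, ?_⟩, ?_, ?_⟩, ?_, ?_⟩
    · -- F0 ⊆ edges of G0 - e0
      rintro f ⟨hfF, hcl⟩
      obtain ⟨hT', huf, _⟩ := hmem f hfF
      rw [edgeSet_deleteEdges]
      refine ⟨(edgeG0 f).2 ⟨hT', fun hfe => huf (hmemU f (hEU hfe)), fun a ha => Or.inr (hcl a ha)⟩, ?_⟩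
      intro h
      rw [Set.mem_singleton_iff] at h
      exact huf (h ▸ hue0)
    · -- F0 dominates G0 - e0
      intro g hg
      rw [edgeSet_deleteEdges] at hg
      obtain ⟨hg1, hg2⟩ := hg
      rw [Set.mem_singleton_iff] at hg2
      have hgT : g ∈ (T.deleteEdges {e0}).edgeSet := by
        rw [edgeSet_deleteEdges]
        exact ⟨((edgeG0 g).1 hg1).1, by simpa using hg2⟩
      obtain ⟨f, hfF, hfad⟩ := hF.2 g hgT
      refine ⟨f, ⟨hfF, ?_⟩, hfad⟩
      obtain ⟨hne, v, hvg, hvf⟩ := hfad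
      have hvp : H.Reachable p v := by
        rcases ((edgeG0 g).1 hg1).2.2 v hvg with rfl | h
        · exact absurd hvf ((hmem f hfF).2.1)
        · exact h
      rcases hclass f hfF with hcl | ⟨j, hcl⟩
      · exact hcl
      · exact (keyPC j v hvp (hcl v hvf)).elim
    · exact fun f hf => hFadj f hf.1
    · exact hFfin.subset (Set.sep_subset _ _)
    · -- per-j properties
      intro j
      refine ⟨⟨?_, ?_⟩, ?_, ?_⟩
      · rintro f ⟨hfF, hcl⟩
        obtain ⟨hT', huf, _⟩ := hmem f hfF
        exact (edgeGJ j f).2 ⟨hT', fun hd => huf (hmemU f (hDJU j hd)),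
          fun a ha => Or.inr (hcl a ha)⟩
      · intro g hg
        obtain ⟨hg1, hg2, hg3⟩ := (edgeGJ j g).1 hg
        have hgT : g ∈ (T.deleteEdges {e0}).edgeSet := by
          rw [edgeSet_deleteEdges]
          refine ⟨hg1, ?_⟩
          intro h
          rw [Set.mem_singleton_iff] at h
          exact hg2 (h ▸ he0DJ j)
        obtain ⟨f, hfF, hfad⟩ := hF.2 g hgT
        refine ⟨f, ⟨hfF, ?_⟩, hfad⟩
        obtain ⟨hne, v, hvg, hvf⟩ := hfad
        have hvc : H.Reachable (c j) v := by
          rcases hg3 v hvg with rfl | h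
          · exact absurd hvf ((hmem f hfF).2.1)
          · exact h
        rcases hclass f hfF with hcl | ⟨i, hcl⟩
        · exact (keyPC j v (hcl v hvf) hvc).elim
        · by_cases hij : i = j
          · subst hij; exact hcl
          · exact (keyCC i j hij v (hcl v hvf) hvc).elim
      · intro h
        exact (hmem _ h.1).2.1 (huej j)
      · exact hFfin.subset (Set.sep_subset _ _)
    · -- cardinality
      have hFeq : F = {f ∈ F | ∀ a ∈ f, H.Reachable p a} ∪
          ⋃ j, {f ∈ F | ∀ a ∈ f, H.Reachable (c j) a} := by
        apply Set.Subset.antisymm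
        · intro f hf
          rcases hclass f hf with h | ⟨j, h⟩
          · exact Or.inl ⟨hf, h⟩
          · exact Or.inr (Set.mem_iUnion.2 ⟨j, hf, h⟩)
        · intro f hf
          rcases hf with h | h
          · exact h.1
          · obtain ⟨j, hj⟩ := Set.mem_iUnion.1 h
            exact hj.1
      conv_lhs => rw [hFeq]
      refine aux_ncard _ _ (hFfin.subset (Set.sep_subset _ _))
        (fun j => hFfin.subset (Set.sep_subset _ _)) ?_ ?_
      · intro j
        rw [Set.disjoint_left]
        rintro f ⟨hfF, h1⟩ ⟨_, h2⟩
        exact keyPC j _ (h1 _ (Sym2.out_fst_mem f)) (h2 _ (Sym2.out_fst_mem f))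
      · intro i j hij
        rw [Set.disjoint_left]
        rintro f ⟨hfF, h1⟩ ⟨_, h2⟩
        exact keyCC i j hij _ (h1 _ (Sym2.out_fst_mem f)) (h2 _ (Sym2.out_fst_mem f))
  -- ===== merge =====
  have merge : ∀ (F0 : Set (Sym2 V)) (Fc : Fin q → Set (Sym2 V)),
      IsTEDS (G0.deleteEdges {e0}) F0 → (∀ f ∈ F0, ¬ eAdj e0 f) → F0.Finite →
      (∀ j, IsTEDS (GJ j) (Fc j)) → (∀ j, s(u, c j) ∉ Fc j) → (∀ j, (Fc j).Finite) →
      ∃ F : Set (Sym2 V), IsTEDS (T.deleteEdges {e0}) F ∧ (∀ f ∈ F, ¬ eAdj e0 f) ∧ F.Finite ∧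
        F.ncard = F0.ncard + ∑ j, (Fc j).ncard := by
    intro F0 Fc h0 h0adj h0fin hJ hJnot hJfin
    have hm0 : ∀ f ∈ F0, (f ∈ T.edgeSet ∧ u ∉ f ∧ p ∉ f) ∧ ∀ a ∈ f, H.Reachable p a := by
      intro f hf
      have h1 := h0.1 hf
      rw [edgeSet_deleteEdges] at h1
      have hne : f ≠ e0 := by simpa using h1.2
      obtain ⟨hpf, huf⟩ := noAdj f hne (h0adj f hf)
      obtain ⟨hTe, _, hcl⟩ := (edgeG0 f).1 h1.1
      exact ⟨⟨hTe, huf, hpf⟩, fun a ha => (hcl a ha).resolve_left (fun h => huf (h ▸ ha))⟩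
    have hmJ : ∀ (j : Fin q), ∀ f ∈ Fc j,
        (f ∈ T.edgeSet ∧ u ∉ f ∧ p ∉ f) ∧ ∀ a ∈ f, H.Reachable (c j) a := by
      intro j f hf
      obtain ⟨hTe, hDJ', hcl⟩ := (edgeGJ j f).1 ((hJ j).1 hf)
      have huf : u ∉ f := by
        intro hu
        obtain ⟨x, rfl⟩ := Sym2.mem_iff_exists.1 hu
        have hadj := (mem_edgeSet _).1 hTe
        rcases (hnbr x).1 hadj with rfl | ⟨i, rfl⟩
        · exact hDJ' (hsupE ▸ he0DJ j)
        · by_cases hij : i = j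
          · exact hJnot j (hij ▸ hf)
          · exact hDJ' (hEDJ i j hij)
      have hcl' : ∀ a ∈ f, H.Reachable (c j) a :=
        fun a ha => (hcl a ha).resolve_left (fun h => huf (h ▸ ha))
      have hpf : p ∉ f := fun hp => keyPC j p (Reachable.refl p) (hcl' p hp)
      exact ⟨⟨hTe, huf, hpf⟩, hcl'⟩
    refine ⟨F0 ∪ ⋃ j, Fc j, ⟨?_, ?_⟩, ?_, ?_, ?_⟩
    · -- subset
      intro f hf
      rw [edgeSet_deleteEdges]
      have hbase : f ∈ T.edgeSet ∧ u ∉ f ∧ p ∉ f := by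
        rcases hf with h | h
        · exact (hm0 f h).1
        · obtain ⟨j, hj⟩ := Set.mem_iUnion.1 h
          exact (hmJ j f hj).1
      refine ⟨hbase.1, ?_⟩
      intro h
      rw [Set.mem_singleton_iff] at h
      exact hbase.2.1 (h ▸ hue0)
    · -- domination
      intro g
      induction g using Sym2.ind with
      | _ a b =>
        intro hg
        rw [edgeSet_deleteEdges] at hg
        obtain ⟨hgT, hge0⟩ := hg
        rw [Set.mem_singleton_iff] at hge0
        have hadj : T.Adj a b := (mem_edgeSet _).1 hgT
        have claim : ∀ x : V, T.Adj u x → x ≠ p → ∃ f ∈ F0 ∪ ⋃ j, Fc j, eAdj s(u, x) f := by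
          intro x hx hxp
          rcases (hnbr x).1 hx with rfl | ⟨j, rfl⟩
          · exact absurd rfl hxp
          · have hmm : s(u, c j) ∈ (GJ j).edgeSet := by
              refine (edgeGJ j _).2 ⟨(mem_edgeSet _).2 hx, hejDJ j, fun a ha => ?_⟩
              rcases Sym2.mem_iff.1 ha with rfl | rfl
              exacts [Or.inl rfl, Or.inr (Reachable.refl _)]
            obtain ⟨f, hfj, hfad⟩ := (hJ j).2 _ hmm
            exact ⟨f, Or.inr (Set.mem_iUnion.2 ⟨j, hfj⟩), hfad⟩
        by_cases hau : a = u
        · have h2 : s(a, b) = s(u, b) := by rw [hau]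
          rw [h2] at hge0 ⊢
          refine claim b (by rw [← hau]; exact hadj) ?_
          rintro rfl
          exact hge0 hsupE
        · by_cases hbu : b = u
          · have h2 : s(a, b) = s(u, a) := by rw [hbu]; exact Sym2.eq_swap
            rw [h2] at hge0 ⊢
            refine claim a (by rw [← hbu]; exact hadj.symm) ?_
            rintro rfl
            exact hge0 hsupE
          · have hHadj : H.Adj a b := hH_adj hadj hau hbu
            rcases cover a with rfl | hra | ⟨j, hra⟩
            · exact absurd rfl hau
            · have hmm : s(a, b) ∈ (G0.deleteEdges {e0}).edgeSet := by
                rw [edgeSet_deleteEdges]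
                refine ⟨(edgeG0 _).2 ⟨hgT, fun hE' => ?_, fun x hx => ?_⟩, by simpa using hge0⟩
                · rcases Sym2.mem_iff.1 (hmemU _ (hEU hE')) with h | h
                  exacts [hau h.symm, hbu h.symm]
                · rcases Sym2.mem_iff.1 hx with rfl | rfl
                  exacts [Or.inr hra, Or.inr (hra.trans hHadj.reachable)]
              obtain ⟨f, hf0, hfad⟩ := h0.2 _ hmm
              exact ⟨f, Or.inl hf0, hfad⟩
            · have hmm : s(a, b) ∈ (GJ j).edgeSet := by
                refine (edgeGJ j _).2 ⟨hgT, fun hD => ?_, fun x hx => ?_⟩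
                · rcases Sym2.mem_iff.1 (hmemU _ (hDJU j hD)) with h | h
                  exacts [hau h.symm, hbu h.symm]
                · rcases Sym2.mem_iff.1 hx with rfl | rfl
                  exacts [Or.inr hra, Or.inr (hra.trans hHadj.reachable)]
              obtain ⟨f, hfj, hfad⟩ := (hJ j).2 _ hmm
              exact ⟨f, Or.inr (Set.mem_iUnion.2 ⟨j, hfj⟩), hfad⟩
    · -- no edge adjacent to e0
      intro f hf
      have hbase : u ∉ f ∧ p ∉ f := by
        rcases hf with h | h
        · exact (hm0 f h).1.2
        · obtain ⟨j, hj⟩ := Set.mem_iUnion.1 h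
          exact (hmJ j f hj).1.2
      exact noAdj' f hbase.2 hbase.1
    · exact h0fin.union (Set.finite_iUnion hJfin)
    · refine aux_ncard F0 Fc h0fin hJfin ?_ ?_
      · intro j
        rw [Set.disjoint_left]
        intro f h1 h2
        exact keyPC j _ ((hm0 f h1).2 _ (Sym2.out_fst_mem f)) ((hmJ j f h2).2 _ (Sym2.out_fst_mem f))
      · intro i j hij
        rw [Set.disjoint_left]
        intro f h1 h2
        exact keyCC i j hij _ ((hmJ i f h1).2 _ (Sym2.out_fst_mem f)) ((hmJ j f h2).2 _ (Sym2.out_fst_mem f))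
  -- ===== final assembly =====
  refine le_antisymm ?_ ?_
  · by_cases hA : g0bar G0 e0 = ⊤
    · rw [hA, top_add]
      exact le_top
    by_cases hB : ∀ j, g0 (GJ j) s(u, c j) ≠ ⊤
    · obtain ⟨F0, h01, h02, h03, h04⟩ := aux_g0bar_attain hA
      have hBj : ∀ j, ∃ Fj : Set (Sym2 V), IsTEDS (GJ j) Fj ∧ s(u, c j) ∉ Fj ∧ Fj.Finite ∧
          ((Fj.ncard : ℕ∞) = g0 (GJ j) s(u, c j)) := fun j => aux_g0_attain (hB j)
      choose Fc hc1 hc2 hc3 hc4 using hBj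
      obtain ⟨F, hF1, hF2, hF3, hFcard⟩ := merge F0 Fc h01 h02 h03 hc1 hc2 hc3
      refine (aux_g0bar_le hF1 hF2 hF3).trans (le_of_eq ?_)
      rw [hFcard]
      push_cast
      rw [h04]
      congr 1
      exact Finset.sum_congr rfl fun j _ => hc4 j
    · push_neg at hB
      obtain ⟨j, hj⟩ := hB
      have hsum : ∑ j, g0 (GJ j) s(u, c j) = ⊤ := by
        refine le_antisymm le_top ?_
        calc (⊤ : ℕ∞) = g0 (GJ j) s(u, c j) := hj.symm
          _ ≤ ∑ j, g0 (GJ j) s(u, c j) :=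
            Finset.single_le_sum (f := fun j => g0 (GJ j) s(u, c j))
              (fun i _ => zero_le) (Finset.mem_univ j)
      rw [hsum, add_top]
      exact le_top
  · refine le_sInf ?_
    rintro n ⟨F, hF1, hF2, hF3, rfl⟩
    obtain ⟨F0, Fc, ⟨h01, h02, h03⟩, hJs, hcard⟩ := split F hF1 hF2 hF3
    have l0 : g0bar G0 e0 ≤ (F0.ncard : ℕ∞) := aux_g0bar_le h01 h02 h03
    have lj : ∀ j, g0 (GJ j) s(u, c j) ≤ ((Fc j).ncard : ℕ∞) :=
      fun j => aux_g0_le (hJs j).1 (hJs j).2.1 (hJs j).2.2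
    refine (add_le_add l0 (Finset.sum_le_sum fun j _ => lj j)).trans (le_of_eq ?_)
    rw [hcard]
    push_cast
    ring
end

section
/- Let T be a rooted tree, e⁰ a non-leaf edge with children neighbor edges e¹,…,e^q and subtrees T⁰,…,T^q as above. Then γ'_{1̄}(T, e⁰) = γ'_{1̄}(T⁰, e⁰) + Σ_{j=1}^q min{γ'₀(T^j, e^j), γ'_{0̄}(T^j, e^j)}. -/
open SimpleGraph

variable {V : Type*}

lemma mem_support_of_mem_edges' {G : SimpleGraph V} {a b u : V} (w : G.Walk a b)
    {e : Sym2 V} (he : e ∈ w.edges) (hu : u ∈ e) : u ∈ w.support := by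
  induction e with
  | h x y =>
    rcases Sym2.mem_iff.1 hu with rfl | rfl
    · exact w.fst_mem_support_of_mem_edges he
    · exact w.snd_mem_support_of_mem_edges he

lemma reachable_deleteEdges_of_avoid {G : SimpleGraph V} {S : Set (Sym2 V)} {u a b : V}
    (hS : ∀ e ∈ S, u ∈ e) (w : G.Walk a b) (hu : u ∉ w.support) :
    (G.deleteEdges S).Reachable a b := by
  refine ⟨w.transfer _ fun e he => ?_⟩
  rw [edgeSet_deleteEdges]
  exact ⟨w.edges_subset_edgeSet he, fun hmem => hu (mem_support_of_mem_edges' w he (hS e hmem))⟩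

lemma tree_sep [DecidableEq V] {T : SimpleGraph V} (hT : T.IsTree) {u a b : V} {S : Set (Sym2 V)}
    (h1 : T.Adj u a) (h2 : T.Adj u b) (hab : a ≠ b) (hS : s(u, a) ∈ S) :
    ¬ (T.deleteEdges S).Reachable a b := by
  rintro ⟨w⟩
  have hw : w.bypass.IsPath := w.bypass_isPath
  have hedges : ∀ e ∈ w.bypass.edges, e ∈ (T.deleteEdges S).edgeSet := fun e he =>
    w.bypass.edges_subset_edgeSet he
  have hTe : ∀ e ∈ w.bypass.edges, e ∈ T.edgeSet := fun e he => by
    have := hedges e he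
    rw [edgeSet_deleteEdges] at this
    exact this.1
  set w' : T.Walk a b := w.bypass.transfer T hTe with hw'def
  have hw' : w'.IsPath := hw.transfer _
  have hP : (Walk.cons h1.symm (Walk.cons h2 Walk.nil) : T.Walk a b).IsPath := by
    simp [Walk.isPath_def, hab, h1.ne', h2.ne', h2.ne]
  have huniq := hT.IsAcyclic.path_unique ⟨w', hw'⟩ ⟨_, hP⟩
  have hEdges : w'.edges = [s(a, u), s(u, b)] := by
    rw [Subtype.ext_iff] at huniq
    simp only at huniq
    rw [huniq]
    simp
  have hmem : s(a, u) ∈ w.bypass.edges := by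
    have : s(a, u) ∈ w'.edges := by rw [hEdges]; simp
    rwa [hw'def, Walk.edges_transfer] at this
  have := hedges _ hmem
  rw [edgeSet_deleteEdges] at this
  exact this.2 (by rwa [Sym2.eq_swap])

lemma reach_isolated {G : SimpleGraph V} {u x : V} (h : ∀ y, ¬ G.Adj u y)
    (hr : G.Reachable u x) : x = u := by
  obtain ⟨w⟩ := hr
  cases w with
  | nil => rfl
  | cons h' _ => exact absurd h' (h _)

lemma reach_pendant [DecidableEq V] {G : SimpleGraph V} {u v x : V}
    (hnbr : ∀ y, G.Adj u y → y = v)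
    (hr : G.Reachable u x) : x = u ∨ ∃ w : G.Walk v x, u ∉ w.support := by
  obtain ⟨w⟩ := hr
  have hw := w.bypass_isPath
  set w0 := w.bypass with hw0
  clear_value w0
  cases w0 with
  | nil => exact Or.inl rfl
  | cons h' w' =>
    rename_i y
    obtain rfl := hnbr _ h'
    rw [Walk.cons_isPath_iff] at hw
    exact Or.inr ⟨w', hw.2⟩

lemma pendant_not_internal [DecidableEq V] {G : SimpleGraph V} {u v a x : V}
    (hnbr : ∀ y, G.Adj u y → y = v) {w : G.Walk a x} (hw : w.IsPath)
    (hu : u ∈ w.support) (hau : a ≠ u) (hxu : x ≠ u) : False := by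
  -- v occurs both in `takeUntil` and in the tail of `dropUntil`, contradicting nodup
  have htake : (w.takeUntil u hu).IsPath := hw.takeUntil hu
  have hdrop : (w.dropUntil u hu).IsPath := hw.dropUntil hu
  -- v in dropUntil support tail
  have hvd : v ∈ (w.dropUntil u hu).support.tail := by
    set d := w.dropUntil u hu with hd
    clear_value d
    cases d with
    | nil => exact absurd rfl hxu.symm
    | cons h' d' =>
      obtain rfl := hnbr _ h'
      simp
  -- v in takeUntil support
  have hvt : v ∈ (w.takeUntil u hu).support := by
    have hrev : ((w.takeUntil u hu).reverse).IsPath := htake.reverse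
    set t := (w.takeUntil u hu).reverse with ht
    have : v ∈ t.support := by
      clear_value t
      cases t with
      | nil => exact absurd rfl hau.symm
      | cons h' t' =>
        obtain rfl := hnbr _ h'
        simp
    rw [ht, Walk.support_reverse, List.mem_reverse] at this
    exact this
  have hnodup := hw.support_nodup
  rw [← w.take_spec hu, Walk.support_append] at hnodup
  exact (List.disjoint_of_nodup_append hnodup) hvt hvd

lemma ncard_biUnion_disj {α ι : Type*} (s : Finset ι) (B : ι → Set α)
    (hB : ∀ i, (B i).Finite)
    (hd : ∀ i ∈ s, ∀ j ∈ s, i ≠ j → Disjoint (B i) (B j)) :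
    (⋃ i ∈ s, B i).ncard = ∑ i ∈ s, (B i).ncard := by
  classical
  induction s using Finset.induction with
  | empty => simp
  | @insert a s ha ih =>
    rw [Finset.set_biUnion_insert, Finset.sum_insert ha]
    have hdisj : Disjoint (B a) (⋃ i ∈ s, B i) := by
      rw [Set.disjoint_iUnion_right]
      intro i
      rw [Set.disjoint_iUnion_right]
      intro hi
      exact hd a (Finset.mem_insert_self a s) i (Finset.mem_insert_of_mem hi)
        (fun h => ha (h ▸ hi))
    rw [Set.ncard_union_eq hdisj (hB a) (Set.Finite.biUnion s.finite_toSet fun i _ => hB i)]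
    rw [ih fun i hi j hj hij => hd i (Finset.mem_insert_of_mem hi) j (Finset.mem_insert_of_mem hj) hij]

lemma ncard_union_iUnion_fin {α : Type*} {q : ℕ} (A : Set α) (B : Fin q → Set α)
    (hA : A.Finite) (hB : ∀ j, (B j).Finite)
    (hAB : ∀ j, Disjoint A (B j)) (hBB : ∀ i j, i ≠ j → Disjoint (B i) (B j)) :
    (A ∪ ⋃ j, B j).ncard = A.ncard + ∑ j, (B j).ncard := by
  have h1 : (⋃ j, B j) = ⋃ j ∈ Finset.univ, B j := by simp
  have hd2 : Disjoint A (⋃ j ∈ Finset.univ, B j) := by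
    rw [Set.disjoint_iUnion_right]; intro i; rw [Set.disjoint_iUnion_right]; intro _
    exact hAB i
  rw [h1]
  rw [Set.ncard_union_eq hd2 hA (Set.Finite.biUnion Finset.univ.finite_toSet fun i _ => hB i),
    ncard_biUnion_disj Finset.univ B hB fun i _ j _ hij => hBB i j hij]
theorem stmt16
    {V : Type*} [Fintype V] [DecidableEq V] (T : SimpleGraph V) [DecidableRel T.Adj]
    (hT : T.IsTree) (r : V) (hr : T.degree r = 1)
    (p u : V) (hpu : T.Adj p u) (hdown : T.dist r p + 1 = T.dist r u)
    (hnonleaf : 2 ≤ T.degree p ∧ 2 ≤ T.degree u)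
    (q : ℕ) (hq : 1 ≤ q) (c : Fin q → V) (hcinj : Function.Injective c)
    (hcp : ∀ j, c j ≠ p)
    (hnbr : ∀ x : V, T.Adj u x ↔ (x = p ∨ ∃ j : Fin q, x = c j)) :
    g1bar T s(p, u) =
      g1bar (compG (T.deleteEdges (Set.range fun j : Fin q => s(u, c j))) u) s(p, u) +
      ∑ j : Fin q,
        min
          (g0 (compG (T.deleteEdges (((Set.range fun i : Fin q => s(u, c i)) ∪ {s(p, u)}) \ {s(u, c j)})) (c j))
            s(u, c j))
          (g0bar (compG (T.deleteEdges (((Set.range fun i : Fin q => s(u, c i)) ∪ {s(p, u)}) \ {s(u, c j)})) (c j))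
            s(u, c j)) := by
  classical
  set E := (Set.range fun j : Fin q => s(u, c j)) with hEdef
  set e0 := s(p, u) with he0def
  set H0 := T.deleteEdges E with hH0def
  set G0 := compG H0 u with hG0def
  set ej : Fin q → Sym2 V := fun j => s(u, c j) with hejdef
  set HHj : Fin q → SimpleGraph V := fun j => T.deleteEdges ((E ∪ {e0}) \ {s(u, c j)}) with hHjdef
  set GG : Fin q → SimpleGraph V := fun j => compG (HHj j) (c j) with hGGdef
  set Hall := T.deleteEdges (E ∪ {e0}) with hHalldef
  set Sp := {x | Hall.Reachable p x} with hSpdef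
  set SS : Fin q → Set V := fun j => {x | Hall.Reachable (c j) x} with hSSdef
  show g1bar T e0 = g1bar G0 e0 + ∑ j, min (g0 (GG j) (ej j)) (g0bar (GG j) (ej j))
  -- basic facts
  have hup : u ≠ p := hpu.ne'
  have hadjc : ∀ j, T.Adj u (c j) := fun j => (hnbr (c j)).2 (Or.inr ⟨j, rfl⟩)
  have hadjup : T.Adj u p := (hnbr p).2 (Or.inl rfl)
  have hcu : ∀ j, c j ≠ u := fun j => (hadjc j).ne'
  have he0E : e0 ∉ E := by
    rintro ⟨j, hj⟩
    rw [he0def, Sym2.eq_iff] at hj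
    rcases hj with ⟨h1, h2⟩ | ⟨h1, h2⟩
    · exact hup h1
    · exact hcp j h2
  have hmemE : ∀ e ∈ E, u ∈ e := by rintro e ⟨j, rfl⟩; simp
  have hmemE0 : ∀ e ∈ E ∪ {e0}, u ∈ e := by
    rintro e (he | he)
    · exact hmemE e he
    · rw [Set.mem_singleton_iff] at he; subst he; rw [he0def]; simp
  have hejE : ∀ j, ej j ∈ E := fun j => ⟨j, rfl⟩
  have hne0j : ∀ j, e0 ≠ ej j := by
    intro j h
    exact he0E (h ▸ hejE j)
  -- neighbor facts
  have hH0nbr : ∀ y, H0.Adj u y → y = p := by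
    intro y hy
    rw [hH0def, deleteEdges_adj] at hy
    rcases (hnbr y).1 hy.1 with hyp | ⟨j, hyp⟩
    · exact hyp
    · exact absurd (hyp ▸ hejE j) hy.2
  have hH0adjup : H0.Adj u p := by
    rw [hH0def, deleteEdges_adj]
    refine ⟨hadjup, fun hmem => he0E ?_⟩
    rwa [he0def, Sym2.eq_swap]
  have hHjnbr : ∀ j y, (HHj j).Adj u y → y = c j := by
    intro j y hy
    rw [hHjdef] at hy
    simp only [deleteEdges_adj, Set.mem_diff, Set.mem_singleton_iff, not_and, not_not] at hy
    rcases (hnbr y).1 hy.1 with hyp | ⟨i, hyp⟩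
    · exfalso
      rw [hyp] at hy
      have h1 : s(u, p) ∈ E ∪ {e0} :=
        Set.mem_union_right _ (Set.mem_singleton_iff.2 (by rw [he0def, Sym2.eq_swap]))
      have h2 := hy.2 h1
      rw [Sym2.congr_right] at h2
      exact hcp j h2.symm
    · rw [hyp] at hy ⊢
      have h1 : s(u, c i) ∈ E ∪ {e0} := Set.mem_union_left _ (hejE i)
      have h2 := hy.2 h1
      rw [Sym2.congr_right] at h2
      rw [hcinj h2]
  have hHjadj : ∀ j, (HHj j).Adj u (c j) := by
    intro j
    rw [hHjdef]
    simp only [deleteEdges_adj, Set.mem_diff, Set.mem_singleton_iff, not_and, not_not]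
    exact ⟨hadjc j, by simp⟩
  have hHallnbr : ∀ y, ¬ Hall.Adj u y := by
    intro y hy
    rw [hHalldef, deleteEdges_adj] at hy
    rcases (hnbr y).1 hy.1 with hyp | ⟨j, hyp⟩
    · exact hy.2 (Set.mem_union_right _ (Set.mem_singleton_iff.2
        (by rw [hyp, he0def, Sym2.eq_swap])))
    · exact hy.2 (Set.mem_union_left _ (by rw [hyp]; exact hejE j))
  -- monotonicity
  have hHallH0 : Hall ≤ H0 := by
    rw [hHalldef, hH0def]; exact T.deleteEdges_anti Set.subset_union_left
  have hHallHj : ∀ j, Hall ≤ HHj j := by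
    intro j
    rw [hHalldef, hHjdef]; exact T.deleteEdges_anti Set.diff_subset
  have hH0T : H0 ≤ T := by rw [hH0def]; exact T.deleteEdges_le E
  have hHjT : ∀ j, HHj j ≤ T := by intro j; rw [hHjdef]; exact T.deleteEdges_le _
  have hG0T : G0 ≤ T := by
    intro a b h
    exact hH0T h.1
  have hGGT : ∀ j, GG j ≤ T := by
    intro j a b h
    exact hHjT j h.1
  -- separations
  have hsep : ∀ j, ¬ Hall.Reachable (c j) p := by
    intro j
    rw [hHalldef]
    exact tree_sep hT (hadjc j) hadjup (hcp j) (Set.mem_union_left _ (hejE j))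
  have hsepij : ∀ i j, i ≠ j → ¬ Hall.Reachable (c i) (c j) := by
    intro i j hij
    rw [hHalldef]
    exact tree_sep hT (hadjc i) (hadjc j) (fun h => hij (hcinj h)) (Set.mem_union_left _ (hejE i))
  have hupSp : u ∉ Sp := by
    intro h
    rw [hSpdef] at h
    exact hup (reach_isolated hHallnbr h.symm).symm
  have huSS : ∀ j, u ∉ SS j := by
    intro j h
    rw [hSSdef] at h
    exact (hcu j) (reach_isolated hHallnbr h.symm)
  have hpSp : p ∈ Sp := by rw [hSpdef]; exact Set.mem_setOf.2 (Reachable.refl p)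
  have hcSS : ∀ j, c j ∈ SS j := by
    intro j; rw [hSSdef]; exact Set.mem_setOf.2 (Reachable.refl (c j))
  have hpSS : ∀ j, p ∉ SS j := by
    intro j h
    rw [hSSdef] at h
    exact hsep j h
  have hcSp : ∀ j, c j ∉ Sp := by
    intro j h
    rw [hSpdef] at h
    exact hsep j h.symm
  have hcSSij : ∀ i j, c i ∈ SS j → i = j := by
    intro i j h
    by_contra hij
    rw [hSSdef] at h
    exact hsepij i j hij h.symm
  have hSpSSdisj : ∀ j x, x ∈ Sp → x ∈ SS j → False := by
    intro j x h1 h2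
    rw [hSpdef] at h1; rw [hSSdef] at h2
    exact hsep j (h2.trans h1.symm)
  have hSSijdisj : ∀ i j, i ≠ j → ∀ x, x ∈ SS i → x ∈ SS j → False := by
    intro i j hij x h1 h2
    rw [hSSdef] at h1 h2
    exact hsepij i j hij (h1.trans h2.symm)
  -- monotone conversions
  have hmono0 : ∀ a b : V, (H0.deleteEdges (E ∪ {e0})).Reachable a b → Hall.Reachable a b := by
    intro a b h
    refine Reachable.mono ?_ h
    intro x y hxy
    rw [deleteEdges_adj, hH0def, deleteEdges_adj] at hxy
    rw [hHalldef, deleteEdges_adj]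
    exact ⟨hxy.1.1, hxy.2⟩
  have hmonoj : ∀ j, ∀ a b : V, ((HHj j).deleteEdges (E ∪ {e0})).Reachable a b →
      Hall.Reachable a b := by
    intro j a b h
    refine Reachable.mono ?_ h
    intro x y hxy
    rw [deleteEdges_adj, hHjdef] at hxy
    simp only [deleteEdges_adj] at hxy
    rw [hHalldef, deleteEdges_adj]
    exact ⟨hxy.1.1, hxy.2⟩
  -- reach characterizations
  have hreach0 : ∀ x, H0.Reachable u x ↔ (x = u ∨ x ∈ Sp) := by
    intro x
    constructor
    · intro h
      rcases reach_pendant hH0nbr h with rfl | ⟨w, hw⟩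
      · exact Or.inl rfl
      · refine Or.inr ?_
        rw [hSpdef]
        exact Set.mem_setOf.2 (hmono0 p x (reachable_deleteEdges_of_avoid hmemE0 w hw))
    · rintro (rfl | h)
      · exact Reachable.refl _
      · rw [hSpdef] at h
        exact (hH0adjup.reachable).trans (Reachable.mono hHallH0 h)
  have hreachj : ∀ j x, (HHj j).Reachable (c j) x ↔ (x = u ∨ x ∈ SS j) := by
    intro j x
    constructor
    · intro h
      by_cases hxu : x = u
      · exact Or.inl hxu
      · refine Or.inr ?_
        obtain ⟨w⟩ := h
        have hwp := w.bypass_isPath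
        by_cases hu : u ∈ w.bypass.support
        · exact (pendant_not_internal (hHjnbr j) hwp hu (hcu j) hxu).elim
        · rw [hSSdef]
          exact Set.mem_setOf.2
            (hmonoj j _ _ (reachable_deleteEdges_of_avoid hmemE0 w.bypass hu))
    · rintro (rfl | h)
      · exact (hHjadj j).reachable.symm
      · rw [hSSdef] at h
        exact Reachable.mono (hHallHj j) h
  -- edge characterizations
  have hG0adj : ∀ a b, G0.Adj a b ↔ H0.Adj a b ∧ H0.Reachable u a := by
    intro a b; rw [hG0def]; exact Iff.rfl
  have hGGadj : ∀ j a b, (GG j).Adj a b ↔ (HHj j).Adj a b ∧ (HHj j).Reachable (c j) a := by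
    intro j a b; rw [hGGdef]; exact Iff.rfl
  have hG0E : ∀ f, f ∈ G0.edgeSet ↔ (f = e0 ∨ (f ∈ T.edgeSet ∧ ∀ v ∈ f, v ∈ Sp)) := by
    intro f
    induction f with
    | h a b =>
      rw [mem_edgeSet, hG0adj]
      constructor
      · rintro ⟨hab, hra⟩
        have hrb : H0.Reachable u b := hra.trans hab.reachable
        rcases (hreach0 a).1 hra with hau | haSp
        · left
          rw [hau, hH0nbr b (hau ▸ hab), he0def]
          exact Sym2.eq_swap
        · rcases (hreach0 b).1 hrb with hbu | hbSp
          · left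
            have hap : a = p := hH0nbr a (hbu ▸ hab.symm)
            rw [hap, hbu, he0def]
          · right
            refine ⟨(mem_edgeSet _).2 (hH0T hab), ?_⟩
            intro v hv
            rcases Sym2.mem_iff.1 hv with rfl | rfl
            · exact haSp
            · exact hbSp
      · rintro (hf | ⟨hfT, hfS⟩)
        · rw [he0def, Sym2.eq_iff] at hf
          rcases hf with ⟨ha, hb⟩ | ⟨ha, hb⟩
          · rw [ha, hb]
            exact ⟨hH0adjup.symm, hH0adjup.reachable⟩
          · rw [ha, hb]
            exact ⟨hH0adjup, Reachable.refl u⟩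
        · have ha : a ∈ Sp := hfS a (Sym2.mem_mk_left a b)
          have hb : b ∈ Sp := hfS b (Sym2.mem_mk_right a b)
          have hTadj : T.Adj a b := (mem_edgeSet _).1 hfT
          have hnotE : s(a, b) ∉ E := by
            intro hmem
            rcases Sym2.mem_iff.1 (hmemE _ hmem) with h | h
            · exact hupSp (h ▸ ha)
            · exact hupSp (h ▸ hb)
          refine ⟨?_, (hreach0 a).2 (Or.inr ha)⟩
          rw [hH0def, deleteEdges_adj]
          exact ⟨hTadj, hnotE⟩
  have hGjE : ∀ j f, f ∈ (GG j).edgeSet ↔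
      (f = ej j ∨ (f ∈ T.edgeSet ∧ ∀ v ∈ f, v ∈ SS j)) := by
    intro j f
    induction f with
    | h a b =>
      rw [mem_edgeSet, hGGadj]
      constructor
      · rintro ⟨hab, hra⟩
        have hrb : (HHj j).Reachable (c j) b := hra.trans hab.reachable
        rcases (hreachj j a).1 hra with hau | haS
        · left
          rw [hau, hHjnbr j b (hau ▸ hab), hejdef]
        · rcases (hreachj j b).1 hrb with hbu | hbS
          · left
            have hac : a = c j := hHjnbr j a (hbu ▸ hab.symm)
            rw [hac, hbu, hejdef]
            exact Sym2.eq_swap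
          · right
            refine ⟨(mem_edgeSet _).2 (hHjT j hab), ?_⟩
            intro v hv
            rcases Sym2.mem_iff.1 hv with rfl | rfl
            · exact haS
            · exact hbS
      · rintro (hf | ⟨hfT, hfS⟩)
        · have hf' : s(a, b) = s(u, c j) := hf
          rw [Sym2.eq_iff] at hf'
          rcases hf' with ⟨ha, hb⟩ | ⟨ha, hb⟩
          · rw [ha, hb]
            exact ⟨hHjadj j, (hHjadj j).reachable.symm⟩
          · rw [ha, hb]
            exact ⟨(hHjadj j).symm, Reachable.refl _⟩
        · have ha : a ∈ SS j := hfS a (Sym2.mem_mk_left a b)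
          have hb : b ∈ SS j := hfS b (Sym2.mem_mk_right a b)
          have hTadj : T.Adj a b := (mem_edgeSet _).1 hfT
          have hnotE : s(a, b) ∉ (E ∪ {e0}) \ {s(u, c j)} := by
            intro hmem
            rcases Sym2.mem_iff.1 (hmemE0 _ hmem.1) with h | h
            · exact huSS j (h ▸ ha)
            · exact huSS j (h ▸ hb)
          refine ⟨?_, (hreachj j a).2 (Or.inr ha)⟩
          rw [hHjdef]
          simp only [deleteEdges_adj]
          exact ⟨hTadj, hnotE⟩
  -- coverage
  have hcover : ∀ a, a ≠ u → (a ∈ Sp ∨ ∃ j, a ∈ SS j) := by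
    intro a hau
    obtain ⟨w⟩ := hT.isConnected.preconnected u a
    have hwp := w.bypass_isPath
    set w0 := w.bypass with hw0
    clear_value w0
    cases w0 with
    | nil => exact absurd rfl hau
    | cons h' w' =>
      rename_i y
      rw [Walk.cons_isPath_iff] at hwp
      have hreach : Hall.Reachable y a := by
        rw [hHalldef]
        exact reachable_deleteEdges_of_avoid hmemE0 w' hwp.2
      rcases (hnbr y).1 h' with hyp | ⟨j, hyp⟩
      · left
        rw [hSpdef]
        exact Set.mem_setOf.2 (by rw [← hyp]; exact hreach)
      · right
        exact ⟨j, by rw [hSSdef]; exact Set.mem_setOf.2 (by rw [← hyp]; exact hreach)⟩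
  -- classification
  have hclassp : ∀ a b, T.Adj a b → a ∈ Sp → s(a, b) ∈ G0.edgeSet := by
    intro a b hab ha
    by_cases hbu : b = u
    · rcases (hnbr a).1 (hbu ▸ hab.symm) with hap | ⟨j, haj⟩
      · exact (hG0E _).2 (Or.inl (by rw [hap, hbu, he0def]))
      · exact absurd (haj ▸ ha) (hcSp j)
    · have hau : a ≠ u := fun h => hupSp (h ▸ ha)
      have hnot : s(a, b) ∉ E ∪ {e0} := by
        intro hmem
        rcases Sym2.mem_iff.1 (hmemE0 _ hmem) with h | h
        · exact hau h.symm
        · exact hbu h.symm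
      have hb : b ∈ Sp := by
        rw [hSpdef] at ha ⊢
        exact Set.mem_setOf.2 ((Set.mem_setOf.1 ha).trans
          (Adj.reachable (by rw [hHalldef, deleteEdges_adj]; exact ⟨hab, hnot⟩)))
      refine (hG0E _).2 (Or.inr ⟨(mem_edgeSet _).2 hab, ?_⟩)
      intro v hv
      rcases Sym2.mem_iff.1 hv with rfl | rfl
      · exact ha
      · exact hb
  have hclassj : ∀ j a b, T.Adj a b → a ∈ SS j → s(a, b) ∈ (GG j).edgeSet := by
    intro j a b hab ha
    by_cases hbu : b = u
    · rcases (hnbr a).1 (hbu ▸ hab.symm) with hap | ⟨i, hai⟩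
      · exact absurd (hap ▸ ha) (hpSS j)
      · have : i = j := hcSSij i j (hai ▸ ha)
        refine (hGjE j _).2 (Or.inl ?_)
        rw [hai, hbu, ← this, hejdef]
        exact Sym2.eq_swap
    · have hau : a ≠ u := fun h => huSS j (h ▸ ha)
      have hnot : s(a, b) ∉ E ∪ {e0} := by
        intro hmem
        rcases Sym2.mem_iff.1 (hmemE0 _ hmem) with h | h
        · exact hau h.symm
        · exact hbu h.symm
      have hb : b ∈ SS j := by
        rw [hSSdef] at ha ⊢
        exact Set.mem_setOf.2 ((Set.mem_setOf.1 ha).trans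
          (Adj.reachable (by rw [hHalldef, deleteEdges_adj]; exact ⟨hab, hnot⟩)))
      refine (hGjE j _).2 (Or.inr ⟨(mem_edgeSet _).2 hab, ?_⟩)
      intro v hv
      rcases Sym2.mem_iff.1 hv with rfl | rfl
      · exact ha
      · exact hb
  have hclassp' : ∀ f ∈ T.edgeSet, ∀ v ∈ f, v ∈ Sp → f ∈ G0.edgeSet := by
    intro f
    induction f with
    | h a b =>
      intro hfT v hv hvS
      rcases Sym2.mem_iff.1 hv with rfl | rfl
      · exact hclassp v b ((mem_edgeSet _).1 hfT) hvS
      · rw [Sym2.eq_swap]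
        exact hclassp v a ((mem_edgeSet _).1 hfT).symm hvS
  have hclassj' : ∀ j, ∀ f ∈ T.edgeSet, ∀ v ∈ f, v ∈ SS j → f ∈ (GG j).edgeSet := by
    intro j f
    induction f with
    | h a b =>
      intro hfT v hv hvS
      rcases Sym2.mem_iff.1 hv with rfl | rfl
      · exact hclassj j v b ((mem_edgeSet _).1 hfT) hvS
      · rw [Sym2.eq_swap]
        exact hclassj j v a ((mem_edgeSet _).1 hfT).symm hvS
  -- partition
  have he0G0 : e0 ∈ G0.edgeSet := (hG0E e0).2 (Or.inl rfl)
  have hejGG : ∀ j, ej j ∈ (GG j).edgeSet := fun j => (hGjE j (ej j)).2 (Or.inl rfl)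
  have hpart : T.edgeSet = G0.edgeSet ∪ ⋃ j, (GG j).edgeSet := by
    apply Set.Subset.antisymm
    · intro f hf
      revert hf
      refine Sym2.ind (fun a b => ?_) f
      intro hf
      have hab : T.Adj a b := (mem_edgeSet _).1 hf
      by_cases hau : a = u
      · rcases (hnbr b).1 (hau ▸ hab) with hbp | ⟨j, hbj⟩
        · exact Set.mem_union_left _ ((hG0E _).2 (Or.inl (by rw [hau, hbp, he0def]; exact Sym2.eq_swap)))
        · refine Set.mem_union_right _ (Set.mem_iUnion.2 ⟨j, ?_⟩)
          exact (hGjE j _).2 (Or.inl (by rw [hau, hbj, hejdef]))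
      · by_cases hbu : b = u
        · rcases (hnbr a).1 (hbu ▸ hab.symm) with hap | ⟨j, haj⟩
          · exact Set.mem_union_left _ ((hG0E _).2 (Or.inl (by rw [hap, hbu, he0def])))
          · refine Set.mem_union_right _ (Set.mem_iUnion.2 ⟨j, ?_⟩)
            exact (hGjE j _).2 (Or.inl (by rw [haj, hbu, hejdef]; exact Sym2.eq_swap))
        · rcases hcover a hau with ha | ⟨j, ha⟩
          · exact Set.mem_union_left _ (hclassp a b hab ha)
          · exact Set.mem_union_right _ (Set.mem_iUnion.2 ⟨j, hclassj j a b hab ha⟩)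
    · intro f hf
      rcases hf with hf | hf
      · exact edgeSet_mono hG0T hf
      · obtain ⟨j, hf⟩ := Set.mem_iUnion.1 hf
        exact edgeSet_mono (hGGT j) hf
  -- disjointness
  have hmeme0 : ∀ v ∈ e0, v = p ∨ v = u := by
    intro v hv
    rw [he0def] at hv
    exact Sym2.mem_iff.1 hv
  have hdisj0 : ∀ j, Disjoint G0.edgeSet ((GG j).edgeSet) := by
    intro j
    rw [Set.disjoint_left]
    intro f h0 hj
    rcases (hG0E f).1 h0 with rfl | ⟨hfT, hS⟩
    · rcases (hGjE j e0).1 hj with h | ⟨_, hS⟩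
      · exact hne0j j h
      · exact hpSS j (hS p (by rw [he0def]; exact Sym2.mem_mk_left p u))
    · rcases (hGjE j f).1 hj with rfl | ⟨_, hS'⟩
      · exact hupSp (hS u (by rw [hejdef]; exact Sym2.mem_mk_left u (c j)))
      · exact hSpSSdisj j _ (hS _ (Sym2.out_fst_mem f)) (hS' _ (Sym2.out_fst_mem f))
  have hdisjij : ∀ i j, i ≠ j → Disjoint ((GG i).edgeSet) ((GG j).edgeSet) := by
    intro i j hij
    rw [Set.disjoint_left]
    intro f hi hj
    rcases (hGjE i f).1 hi with rfl | ⟨_, hS⟩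
    · rcases (hGjE j (ej i)).1 hj with h | ⟨_, hS⟩
      · have : s(u, c i) = s(u, c j) := h
        rw [Sym2.congr_right] at this
        exact hij (hcinj this)
      · exact huSS j (hS u (by rw [hejdef]; exact Sym2.mem_mk_left u (c i)))
    · rcases (hGjE j f).1 hj with rfl | ⟨_, hS'⟩
      · exact huSS i (hS u (by rw [hejdef]; exact Sym2.mem_mk_left u (c j)))
      · exact hSSijdisj i j hij _ (hS _ (Sym2.out_fst_mem f)) (hS' _ (Sym2.out_fst_mem f))
  have hg1barT : g1bar T e0 = sInf {n : ℕ∞ | ∃ F : Set (Sym2 V), IsEDS T F ∧ e0 ∈ F ∧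
      (∀ f ∈ F, ¬ eAdj e0 f) ∧ (∀ f ∈ F, f ≠ e0 → ∃ f' ∈ F, eAdj f f') ∧
      F.Finite ∧ (F.ncard : ℕ∞) = n} := rfl
  refine le_antisymm ?_ ?_
  · -- LHS ≤ RHS
    by_cases h0top : g1bar G0 e0 = ⊤
    · rw [h0top, top_add]; exact le_top
    by_cases hjtop' : ∃ j, min (g0 (GG j) (ej j)) (g0bar (GG j) (ej j)) = ⊤
    · obtain ⟨j, hj⟩ := hjtop'
      have htop : (⊤ : ℕ∞) ≤ ∑ j, min (g0 (GG j) (ej j)) (g0bar (GG j) (ej j)) := by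
        rw [← hj]
        exact Finset.single_le_sum (f := fun j => min (g0 (GG j) (ej j)) (g0bar (GG j) (ej j)))
          (fun i _ => zero_le) (Finset.mem_univ j)
      rw [top_le_iff] at htop
      rw [htop, add_top]
      exact le_top
    push_neg at hjtop'
    have hg1barG0 : g1bar G0 e0 = sInf {n : ℕ∞ | ∃ F : Set (Sym2 V), IsEDS G0 F ∧ e0 ∈ F ∧
        (∀ f ∈ F, ¬ eAdj e0 f) ∧ (∀ f ∈ F, f ≠ e0 → ∃ f' ∈ F, eAdj f f') ∧
        F.Finite ∧ (F.ncard : ℕ∞) = n} := rfl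
    have hne0 : {n : ℕ∞ | ∃ F : Set (Sym2 V), IsEDS G0 F ∧ e0 ∈ F ∧
        (∀ f ∈ F, ¬ eAdj e0 f) ∧ (∀ f ∈ F, f ≠ e0 → ∃ f' ∈ F, eAdj f f') ∧
        F.Finite ∧ (F.ncard : ℕ∞) = n}.Nonempty := by
      by_contra h
      rw [Set.not_nonempty_iff_eq_empty] at h
      rw [hg1barG0, h, sInf_empty] at h0top
      exact h0top rfl
    have hmem0 := csInf_mem hne0
    rw [← hg1barG0] at hmem0
    obtain ⟨F0, hF0eds, he0F0, hF0nadj, hF0nbr, hF0fin, hF0card⟩ := hmem0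
    have hFFex : ∀ j, ∃ Fj : Set (Sym2 V), Fj ⊆ (GG j).edgeSet ∧ ej j ∉ Fj ∧
        (∀ f ∈ (GG j).edgeSet, f ≠ ej j → ∃ g ∈ Fj, eAdj f g) ∧
        (∀ f ∈ Fj, ∃ g ∈ Fj, eAdj f g) ∧
        ((Fj.ncard : ℕ∞) = min (g0 (GG j) (ej j)) (g0bar (GG j) (ej j))) := by
      intro j
      rcases le_total (g0 (GG j) (ej j)) (g0bar (GG j) (ej j)) with hle | hle
      · rw [min_eq_left hle]
        have hnetop : g0 (GG j) (ej j) ≠ ⊤ := by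
          intro h
          exact hjtop' j (by rw [min_eq_left hle, h])
        have hg0eq : g0 (GG j) (ej j) = sInf {n : ℕ∞ | ∃ F : Set (Sym2 V),
            IsTEDS (GG j) F ∧ ej j ∉ F ∧ F.Finite ∧ (F.ncard : ℕ∞) = n} := rfl
        have hne' : {n : ℕ∞ | ∃ F : Set (Sym2 V),
            IsTEDS (GG j) F ∧ ej j ∉ F ∧ F.Finite ∧ (F.ncard : ℕ∞) = n}.Nonempty := by
          by_contra h
          rw [Set.not_nonempty_iff_eq_empty] at h
          rw [hg0eq, h, sInf_empty] at hnetop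
          exact hnetop rfl
        have hmem' := csInf_mem hne'
        rw [← hg0eq] at hmem'
        obtain ⟨Fj, ⟨hsub, hdom⟩, hnotin, hfin, hcard⟩ := hmem'
        exact ⟨Fj, hsub, hnotin, fun f hf _ => hdom f hf, fun f hf => hdom f (hsub hf), hcard⟩
      · rw [min_eq_right hle]
        have hnetop : g0bar (GG j) (ej j) ≠ ⊤ := by
          intro h
          exact hjtop' j (by rw [min_eq_right hle, h])
        have hg0eq : g0bar (GG j) (ej j) = sInf {n : ℕ∞ | ∃ F : Set (Sym2 V),
            IsTEDS ((GG j).deleteEdges {ej j}) F ∧ (∀ f ∈ F, ¬ eAdj (ej j) f) ∧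
            F.Finite ∧ (F.ncard : ℕ∞) = n} := rfl
        have hne' : {n : ℕ∞ | ∃ F : Set (Sym2 V),
            IsTEDS ((GG j).deleteEdges {ej j}) F ∧ (∀ f ∈ F, ¬ eAdj (ej j) f) ∧
            F.Finite ∧ (F.ncard : ℕ∞) = n}.Nonempty := by
          by_contra h
          rw [Set.not_nonempty_iff_eq_empty] at h
          rw [hg0eq, h, sInf_empty] at hnetop
          exact hnetop rfl
        have hmem' := csInf_mem hne'
        rw [← hg0eq] at hmem'
        obtain ⟨Fj, ⟨hsub, hdom⟩, hnadj, hfin, hcard⟩ := hmem'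
        have hsub' : Fj ⊆ (GG j).edgeSet := by
          intro f hf
          have := hsub hf
          rw [edgeSet_deleteEdges] at this
          exact this.1
        have hnotin : ej j ∉ Fj := by
          intro h
          have := hsub h
          rw [edgeSet_deleteEdges] at this
          exact this.2 rfl
        refine ⟨Fj, hsub', hnotin, ?_, fun f hf => hdom f (hsub hf), hcard⟩
        intro f hf hfe
        refine hdom f ?_
        rw [edgeSet_deleteEdges]
        exact ⟨hf, by simpa using hfe⟩
    choose FFc hFsubc hFnotinc hFdomc hFselfc hFcardc using hFFex
    have hFFS' : ∀ j, ∀ f ∈ FFc j, ∀ v ∈ f, v ∈ SS j := by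
      intro j f hf
      rcases (hGjE j f).1 (hFsubc j hf) with h | h
      · exact absurd (h ▸ hf) (hFnotinc j)
      · exact h.2
    have hFFnadj : ∀ j, ∀ f ∈ FFc j, ¬ eAdj e0 f := by
      rintro j f hf ⟨hne, v, hv0, hvf⟩
      rcases hmeme0 v hv0 with rfl | rfl
      · exact hpSS j (hFFS' j f hf _ hvf)
      · exact huSS j (hFFS' j f hf _ hvf)
    have hadje0ej : ∀ j, eAdj (ej j) e0 := by
      intro j
      refine ⟨(hne0j j).symm, u, ?_, ?_⟩
      · rw [hejdef]; exact Sym2.mem_mk_left u (c j)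
      · rw [he0def]; exact Sym2.mem_mk_right p u
    have hFmem : ((F0 ∪ ⋃ j, FFc j).ncard : ℕ∞) ∈ {n : ℕ∞ | ∃ F : Set (Sym2 V),
        IsEDS T F ∧ e0 ∈ F ∧ (∀ f ∈ F, ¬ eAdj e0 f) ∧
        (∀ f ∈ F, f ≠ e0 → ∃ f' ∈ F, eAdj f f') ∧ F.Finite ∧ (F.ncard : ℕ∞) = n} := by
      refine ⟨F0 ∪ ⋃ j, FFc j, ⟨?_, ?_⟩, Or.inl he0F0, ?_, ?_, Set.toFinite _, rfl⟩
      · rintro f (hf | hf)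
        · exact edgeSet_mono hG0T (hF0eds.1 hf)
        · obtain ⟨j, hf⟩ := Set.mem_iUnion.1 hf
          exact edgeSet_mono (hGGT j) (hFsubc j hf)
      · intro f hfT hfF
        have hf0 : f ∉ F0 := fun h => hfF (Or.inl h)
        have hfj : ∀ j, f ∉ FFc j := fun j h => hfF (Or.inr (Set.mem_iUnion.2 ⟨j, h⟩))
        rw [hpart] at hfT
        rcases hfT with hf | hf
        · obtain ⟨g, hg, hadj⟩ := hF0eds.2 f hf (hf0)
          exact ⟨g, Or.inl hg, hadj⟩
        · obtain ⟨j, hf⟩ := Set.mem_iUnion.1 hf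
          by_cases hfe : f = ej j
          · refine ⟨e0, Or.inl he0F0, ?_⟩
            rw [hfe]
            exact hadje0ej j
          · obtain ⟨g, hg, hadj⟩ := hFdomc j f hf hfe
            exact ⟨g, Or.inr (Set.mem_iUnion.2 ⟨j, hg⟩), hadj⟩
      · rintro f (hf | hf)
        · exact hF0nadj f hf
        · obtain ⟨j, hf⟩ := Set.mem_iUnion.1 hf
          exact hFFnadj j f hf
      · rintro f (hf | hf) hfe
        · obtain ⟨g, hg, hadj⟩ := hF0nbr f hf hfe
          exact ⟨g, Or.inl hg, hadj⟩
        · obtain ⟨j, hf⟩ := Set.mem_iUnion.1 hf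
          obtain ⟨g, hg, hadj⟩ := hFselfc j f hf
          exact ⟨g, Or.inr (Set.mem_iUnion.2 ⟨j, hg⟩), hadj⟩
    have hcards : (F0 ∪ ⋃ j, FFc j).ncard = F0.ncard + ∑ j, (FFc j).ncard :=
      ncard_union_iUnion_fin F0 FFc (Set.toFinite _) (fun j => Set.toFinite _)
        (fun j => Set.disjoint_of_subset hF0eds.1 (hFsubc j) (hdisj0 j))
        (fun i j hij => Set.disjoint_of_subset (hFsubc i) (hFsubc j) (hdisjij i j hij))
    rw [hg1barT]
    refine le_trans (sInf_le hFmem) (le_of_eq ?_)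
    calc ((F0 ∪ ⋃ j, FFc j).ncard : ℕ∞) = (F0.ncard : ℕ∞) + ∑ j, ((FFc j).ncard : ℕ∞) := by
          rw [hcards]; push_cast; ring
      _ = g1bar G0 e0 + ∑ j, min (g0 (GG j) (ej j)) (g0bar (GG j) (ej j)) := by
          rw [hF0card]
          exact congrArg (g1bar G0 e0 + ·) (Finset.sum_congr rfl fun j _ => hFcardc j)

  · -- RHS ≤ LHS
    by_cases hLtop : g1bar T e0 = ⊤
    · rw [hLtop]; exact le_top
    have hne : {n : ℕ∞ | ∃ F : Set (Sym2 V), IsEDS T F ∧ e0 ∈ F ∧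
        (∀ f ∈ F, ¬ eAdj e0 f) ∧ (∀ f ∈ F, f ≠ e0 → ∃ f' ∈ F, eAdj f f') ∧
        F.Finite ∧ (F.ncard : ℕ∞) = n}.Nonempty := by
      by_contra h
      rw [Set.not_nonempty_iff_eq_empty] at h
      rw [hg1barT, h, sInf_empty] at hLtop
      exact hLtop rfl
    have hmem := csInf_mem hne
    rw [← hg1barT] at hmem
    obtain ⟨F, hFeds, he0F, hFnadj, hFnbr, hFfin, hFcard⟩ := hmem
    set F0 := F ∩ G0.edgeSet with hF0def
    set FF : Fin q → Set (Sym2 V) := fun j => F ∩ (GG j).edgeSet with hFFdef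
    have hFsub : F ⊆ G0.edgeSet ∪ ⋃ j, (GG j).edgeSet := by rw [← hpart]; exact hFeds.1
    have hFsplit : F = F0 ∪ ⋃ j, FF j := by
      ext f
      constructor
      · intro hf
        rcases hFsub hf with h | h
        · exact Or.inl ⟨hf, h⟩
        · obtain ⟨j, hj⟩ := Set.mem_iUnion.1 h
          exact Or.inr (Set.mem_iUnion.2 ⟨j, hf, hj⟩)
      · rintro (h | h)
        · exact h.1
        · obtain ⟨j, hj⟩ := Set.mem_iUnion.1 h
          exact hj.1
    have hcardsplit : F.ncard = F0.ncard + ∑ j, (FF j).ncard := by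
      rw [hFsplit]
      exact ncard_union_iUnion_fin F0 FF (Set.toFinite _) (fun j => Set.toFinite _)
        (fun j => Set.disjoint_of_subset Set.inter_subset_right Set.inter_subset_right
          (hdisj0 j))
        (fun i j hij => Set.disjoint_of_subset Set.inter_subset_right Set.inter_subset_right
          (hdisjij i j hij))
    have hejF : ∀ j, ej j ∉ F := by
      intro j hj
      exact hFnadj _ hj ⟨hne0j j, u, (by rw [he0def]; exact Sym2.mem_mk_right p u),
        (by rw [hejdef]; exact Sym2.mem_mk_left u (c j))⟩
    have he0F0 : e0 ∈ F0 := ⟨he0F, he0G0⟩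
    have hF0Sp : ∀ f ∈ F0, f ≠ e0 → ∀ v ∈ f, v ∈ Sp := by
      intro f hf hfe
      rcases (hG0E f).1 hf.2 with h | h
      · exact absurd h hfe
      · exact h.2
    have hFFS : ∀ j, ∀ f ∈ FF j, ∀ v ∈ f, v ∈ SS j := by
      intro j f hf
      rcases (hGjE j f).1 hf.2 with h | h
      · exact absurd (h ▸ hf.1) (hejF j)
      · exact h.2
    have hwit0 : ∀ f, (∀ v ∈ f, v ∈ Sp) → ∀ g ∈ F, eAdj f g → g ∈ F0 := by
      rintro f hfS g hg ⟨hne, v, hvf, hvg⟩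
      exact ⟨hg, hclassp' g (hFeds.1 hg) v hvg (hfS v hvf)⟩
    have hwitj : ∀ j f, (∀ v ∈ f, v ∈ SS j) → ∀ g ∈ F, eAdj f g → g ∈ FF j := by
      rintro j f hfS g hg ⟨hne, v, hvf, hvg⟩
      exact ⟨hg, hclassj' j g (hFeds.1 hg) v hvg (hfS v hvf)⟩
    have hF0le : g1bar G0 e0 ≤ (F0.ncard : ℕ∞) := by
      refine sInf_le ?_
      refine ⟨F0, ⟨Set.inter_subset_right, ?_⟩, he0F0, fun f hf => hFnadj f hf.1, ?_,
        Set.toFinite _, rfl⟩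
      · intro f hfG0 hfn
        have hfF : f ∉ F := fun h => hfn ⟨h, hfG0⟩
        have hfe : f ≠ e0 := fun h => hfF (h ▸ he0F)
        have hfS : ∀ v ∈ f, v ∈ Sp := by
          rcases (hG0E f).1 hfG0 with h | h
          · exact absurd h hfe
          · exact h.2
        obtain ⟨g, hgF, hadj⟩ := hFeds.2 f (edgeSet_mono hG0T hfG0) hfF
        exact ⟨g, hwit0 f hfS g hgF hadj, hadj⟩
      · intro f hf hfe
        obtain ⟨g, hgF, hadj⟩ := hFnbr f hf.1 hfe
        exact ⟨g, hwit0 f (hF0Sp f hf hfe) g hgF hadj, hadj⟩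
    have hFFle : ∀ j, min (g0 (GG j) (ej j)) (g0bar (GG j) (ej j)) ≤ ((FF j).ncard : ℕ∞) := by
      intro j
      have hsubj : FF j ⊆ (GG j).edgeSet := Set.inter_subset_right
      have hejFF : ej j ∉ FF j := fun h => hejF j h.1
      have hdomj : ∀ f ∈ (GG j).edgeSet, f ≠ ej j → ∃ g ∈ FF j, eAdj f g := by
        intro f hfG hfe
        have hfS : ∀ v ∈ f, v ∈ SS j := by
          rcases (hGjE j f).1 hfG with h | h
          · exact absurd h hfe
          · exact h.2
        by_cases hfF : f ∈ F
        · have hfe0 : f ≠ e0 := by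
            intro h
            exact hpSS j (hfS p (by rw [h, he0def]; exact Sym2.mem_mk_left p u))
          obtain ⟨g, hgF, hadj⟩ := hFnbr f hfF hfe0
          exact ⟨g, hwitj j f hfS g hgF hadj, hadj⟩
        · obtain ⟨g, hgF, hadj⟩ := hFeds.2 f (edgeSet_mono (hGGT j) hfG) hfF
          exact ⟨g, hwitj j f hfS g hgF hadj, hadj⟩
      by_cases hadjej : ∃ g ∈ FF j, eAdj (ej j) g
      · refine le_trans (min_le_left _ _) (sInf_le ?_)
        refine ⟨FF j, ⟨hsubj, ?_⟩, hejFF, Set.toFinite _, rfl⟩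
        intro f hfG
        by_cases hfe : f = ej j
        · rw [hfe]
          exact hadjej
        · exact hdomj f hfG hfe
      · refine le_trans (min_le_right _ _) (sInf_le ?_)
        refine ⟨FF j, ⟨?_, ?_⟩, ?_, Set.toFinite _, rfl⟩
        · intro f hf
          rw [edgeSet_deleteEdges]
          refine ⟨hsubj hf, fun h => ?_⟩
          rw [Set.mem_singleton_iff] at h
          exact hejFF (h ▸ hf)
        · intro f hfG
          rw [edgeSet_deleteEdges] at hfG
          exact hdomj f hfG.1 (by simpa using hfG.2)
        · intro g hg h
          exact hadjej ⟨g, hg, h⟩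
    calc g1bar G0 e0 + ∑ j, min (g0 (GG j) (ej j)) (g0bar (GG j) (ej j))
        ≤ (F0.ncard : ℕ∞) + ∑ j, ((FF j).ncard : ℕ∞) :=
          add_le_add hF0le (Finset.sum_le_sum fun j _ => hFFle j)
      _ = (F.ncard : ℕ∞) := by rw [hcardsplit]; push_cast; ring
      _ = g1bar T e0 := hFcard
end

section
/- Let e be a leaf edge of a tree T. Then there exists a total edge dominating set of T containing e if and only if T ≠ K₂; and there exists a total edge dominating set of T not containing e if and only if T has at least 3 edges. -/
open SimpleGraph

variable {V : Type*}

lemma walkClosed (T : SimpleGraph V) {S : Set V}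
    (hS : ∀ x ∈ S, ∀ y, T.Adj x y → y ∈ S) :
    ∀ {a c : V}, T.Walk a c → a ∈ S → c ∈ S := by
  intro a c w
  induction w with
  | nil => exact id
  | cons h' p ih => intro ha; exact ih (hS _ ha _ h')

lemma endpoint_in (T : SimpleGraph V) (hpre : T.Preconnected) {S : Set V}
    (hS : ∀ x ∈ S, ∀ y, T.Adj x y → y ∈ S) {u : V} (hu : u ∈ S)
    {f : Sym2 V} (hf : f ∈ T.edgeSet) : ∀ x ∈ f, x ∈ S := by
  induction f using Sym2.ind with
  | _ c d =>
    rw [SimpleGraph.mem_edgeSet] at hf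
    have hc : c ∈ S := by
      obtain ⟨w⟩ := hpre u c
      exact walkClosed T hS w hu
    have hd : d ∈ S := hS c hc d hf
    intro x hx
    rcases Sym2.mem_iff.mp hx with rfl | rfl <;> assumption

/-- every edge of a connected graph with two distinct edges has an adjacent edge -/
lemma lemD {V : Type*} (T : SimpleGraph V) (hpre : T.Preconnected)
    {f₀ f₁ : Sym2 V} (h₀ : f₀ ∈ T.edgeSet) (h₁ : f₁ ∈ T.edgeSet) (h01 : f₀ ≠ f₁) :
    ∀ g ∈ T.edgeSet, ∃ f ∈ T.edgeSet, eAdj g f := by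
  intro g hg
  induction g using Sym2.ind with
  | _ a b =>
    rw [SimpleGraph.mem_edgeSet] at hg
    by_cases ha : ∃ x, T.Adj a x ∧ x ≠ b
    · obtain ⟨x, hx, hxb⟩ := ha
      refine ⟨s(a, x), T.mem_edgeSet.mpr hx, ?_, a, by simp, by simp⟩
      simp only [Ne, Sym2.eq_iff]
      rintro (⟨-, rfl⟩ | ⟨rfl, rfl⟩)
      · exact hxb rfl
      · exact hg.ne rfl
    · by_cases hb : ∃ x, T.Adj b x ∧ x ≠ a
      · obtain ⟨x, hx, hxa⟩ := hb
        refine ⟨s(b, x), T.mem_edgeSet.mpr hx, ?_, b, by simp, by simp⟩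
        simp only [Ne, Sym2.eq_iff]
        rintro (⟨rfl, rfl⟩ | ⟨rfl, -⟩)
        · exact hg.ne rfl
        · exact hxa rfl
      · exfalso
        push_neg at ha hb
        have hS : ∀ x ∈ ({a, b} : Set V), ∀ y, T.Adj x y → y ∈ ({a, b} : Set V) := by
          rintro x (rfl | rfl) y hy
          · exact Or.inr (ha y hy)
          · exact Or.inl (hb y hy)
        have hsub : T.edgeSet ⊆ {s(a, b)} := by
          intro f hf
          have hend := endpoint_in T hpre hS (Set.mem_insert a {b}) hf
          induction f using Sym2.ind with
          | _ c d =>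
            rw [SimpleGraph.mem_edgeSet] at hf
            rcases hend c (by simp) with rfl | rfl <;>
              rcases hend d (by simp) with rfl | rfl <;>
              simp_all [Sym2.eq_swap, hf.ne]
        exact h01 ((hsub h₀).trans (hsub h₁).symm)

lemma eAdj_def {e f : Sym2 V} : eAdj e f ↔ e ≠ f ∧ ∃ v, v ∈ e ∧ v ∈ f := Iff.rfl

theorem key {V : Type*} [Fintype V] [DecidableEq V] (T : SimpleGraph V) [DecidableRel T.Adj]
    (hT : T.IsTree) (u v : V) (huv : T.Adj u v) (hv : T.degree v = 1) :
    ((∃ F : Set (Sym2 V), IsTEDS T F ∧ s(u, v) ∈ F) ↔ T.edgeSet ≠ {s(u, v)}) ∧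
    ((∃ F : Set (Sym2 V), IsTEDS T F ∧ s(u, v) ∉ F) ↔ 3 ≤ T.edgeSet.ncard) := by
  have hpre : T.Preconnected := hT.isConnected.preconnected
  have he : s(u, v) ∈ T.edgeSet := T.mem_edgeSet.mpr huv
  have hNv : ∀ x, T.Adj v x → x = u := by
    intro x hx
    have h1 : (T.neighborFinset v).card ≤ 1 := hv.le
    exact Finset.card_le_one.mp h1 x (by simpa using hx) u (by simpa using huv.symm)
  have lemB : T.edgeSet ≠ {s(u, v)} → ∃ w, T.Adj u w ∧ w ≠ v := by
    intro hne
    by_contra h'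
    push_neg at h'
    apply hne
    apply Set.eq_of_subset_of_subset _ (Set.singleton_subset_iff.mpr he)
    intro f hf
    have hS : ∀ x ∈ ({u, v} : Set V), ∀ y, T.Adj x y → y ∈ ({u, v} : Set V) := by
      rintro x (rfl | rfl) y hy
      · exact Or.inr (h' y hy)
      · exact Or.inl (hNv y hy)
    have hend := endpoint_in T hpre hS (Set.mem_insert u {v}) hf
    induction f using Sym2.ind with
    | _ c d =>
      rw [SimpleGraph.mem_edgeSet] at hf
      rcases hend c (by simp) with rfl | rfl <;>
        rcases hend d (by simp) with rfl | rfl <;>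
        simp_all [Sym2.eq_swap, hf.ne]
  have lemC : ∀ w, T.Adj u w → w ≠ v → 3 ≤ T.edgeSet.ncard →
      (∃ x, T.Adj u x ∧ x ≠ v ∧ x ≠ w) ∨ (∃ x, T.Adj w x ∧ x ≠ u) := by
    intro w huw hwv h3
    by_contra h'
    push_neg at h'
    obtain ⟨h1, h2⟩ := h'
    have hS : ∀ x ∈ ({u, v, w} : Set V), ∀ y, T.Adj x y → y ∈ ({u, v, w} : Set V) := by
      rintro x (rfl | rfl | rfl) y hy
      · by_cases hyv : y = v
        · exact Or.inr (Or.inl hyv)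
        · exact Or.inr (Or.inr (h1 y hy hyv))
      · exact Or.inl (hNv y hy)
      · exact Or.inl (h2 y hy)
    have hsub : T.edgeSet ⊆ {s(u, v), s(u, w)} := by
      intro f hf
      have hend := endpoint_in T hpre hS (show u ∈ ({u, v, w} : Set V) by simp) hf
      induction f using Sym2.ind with
      | _ c d =>
        rw [SimpleGraph.mem_edgeSet] at hf
        rcases hend c (by simp) with rfl | rfl | rfl <;>
          rcases hend d (by simp) with rfl | rfl | rfl <;>
          first
            | exact absurd rfl hf.ne
            | exact absurd (hNv _ hf) huw.ne'
            | exact absurd (h2 _ hf) huv.ne'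
            | simp [Sym2.eq_swap]
    have h2' : T.edgeSet.ncard ≤ 2 :=
      le_trans (Set.ncard_le_ncard hsub (Set.toFinite _))
        (le_trans (Set.ncard_insert_le _ _) (by simp))
    omega
  constructor
  · constructor
    · rintro ⟨F, hF, heF⟩ h
      obtain ⟨f, hfF, hef⟩ := hF.2 _ he
      obtain ⟨hne, -⟩ := eAdj_def.mp hef
      have : f = s(u, v) := by
        have := hF.1 hfF
        rwa [h, Set.mem_singleton_iff] at this
      exact hne this.symm
    · intro hne
      have hss : {s(u, v)} ⊂ T.edgeSet :=
        (Set.singleton_subset_iff.mpr he).ssubset_of_ne (Ne.symm hne)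
      obtain ⟨f, hf, hfe⟩ := Set.exists_of_ssubset hss
      exact ⟨T.edgeSet, ⟨subset_rfl,
        lemD T hpre he hf (fun h => hfe (by rw [← h]; rfl))⟩, he⟩
  · constructor
    · rintro ⟨F, hF, heF⟩
      obtain ⟨f, hfF, hef⟩ := hF.2 _ he
      obtain ⟨f', hf'F, hff'⟩ := hF.2 f (hF.1 hfF)
      have h1 : s(u, v) ≠ f := (eAdj_def.mp hef).1
      have h2 : f ≠ f' := (eAdj_def.mp hff').1
      have h3 : s(u, v) ≠ f' := fun h => heF (h ▸ hf'F)
      have hsub : ({s(u, v), f, f'} : Set (Sym2 V)) ⊆ T.edgeSet := by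
        intro x hx
        rcases hx with rfl | rfl | rfl
        exacts [he, hF.1 hfF, hF.1 hf'F]
      calc (3 : ℕ) = ({s(u, v), f, f'} : Set (Sym2 V)).ncard := by
            rw [Set.ncard_insert_of_notMem (by simp [h1, h3]),
              Set.ncard_insert_of_notMem (by simp [h2]), Set.ncard_singleton]
        _ ≤ T.edgeSet.ncard := Set.ncard_le_ncard hsub (Set.toFinite _)
    · intro h3
      have hne : T.edgeSet ≠ {s(u, v)} := by
        intro h
        rw [h, Set.ncard_singleton] at h3
        omega
      obtain ⟨w0, hw0, hw0v⟩ := lemB hne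
      have hg0 : s(u, w0) ∈ T.edgeSet := T.mem_edgeSet.mpr hw0
      have hne0 : s(u, v) ≠ s(u, w0) := by
        simp [Sym2.eq_iff, Ne.symm hw0v, huv.ne']
      have key2 : ∀ w, T.Adj u w → w ≠ v →
          ∃ f ∈ T.edgeSet \ {s(u, v)}, eAdj s(u, w) f := by
        intro w huw hwv
        rcases lemC w huw hwv h3 with ⟨x, hux, hxv, hxw⟩ | ⟨x, hwx, hxu⟩
        · refine ⟨s(u, x), ⟨T.mem_edgeSet.mpr hux, ?_⟩, ?_, u, by simp, by simp⟩
          · simp [Sym2.eq_iff, hxv, huv.ne]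
          · simp [Sym2.eq_iff, Ne.symm hxw, huw.ne']
        · refine ⟨s(w, x), ⟨T.mem_edgeSet.mpr hwx, ?_⟩, ?_, w, by simp, by simp⟩
          · simp [Sym2.eq_iff, huw.ne', hwv]
          · simp [Sym2.eq_iff, huw.ne, Ne.symm hxu]
      refine ⟨T.edgeSet \ {s(u, v)}, ⟨Set.diff_subset, ?_⟩, by simp⟩
      intro g hg
      by_cases hge : g = s(u, v)
      · subst hge
        exact ⟨s(u, w0), ⟨hg0, by simpa using hne0.symm⟩, hne0, u, by simp, by simp⟩
      · by_cases hug : u ∈ g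
        · obtain ⟨w, rfl⟩ := Sym2.mem_iff_exists.mp hug
          have hwv : w ≠ v := fun h => hge (by rw [h])
          exact key2 w (T.mem_edgeSet.mp hg) hwv
        · have hvg : v ∉ g := by
            intro hvg
            obtain ⟨b, rfl⟩ := Sym2.mem_iff_exists.mp hvg
            have hb : b = u := hNv b (T.mem_edgeSet.mp hg)
            subst hb
            exact hge (Sym2.eq_swap)
          obtain ⟨f, hf, hgf⟩ := lemD T hpre he hg0 hne0 g hg
          have hfe : f ≠ s(u, v) := by
            rintro rfl
            obtain ⟨-, z, hz1, hz2⟩ := eAdj_def.mp hgf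
            rcases Sym2.mem_iff.mp hz2 with rfl | rfl
            exacts [hug hz1, hvg hz1]
          exact ⟨f, ⟨hf, by simpa using hfe⟩, hgf⟩

theorem stmt17 {V : Type*} [Fintype V] [DecidableEq V] (T : SimpleGraph V) [DecidableRel T.Adj]
    (hT : T.IsTree) (e : Sym2 V) (he : e ∈ T.edgeSet)
    (hleaf : ∃ v ∈ e, T.degree v = 1) :
    ((∃ F : Set (Sym2 V), IsTEDS T F ∧ e ∈ F) ↔ T.edgeSet ≠ {e}) ∧
    ((∃ F : Set (Sym2 V), IsTEDS T F ∧ e ∉ F) ↔ 3 ≤ T.edgeSet.ncard) := by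
  obtain ⟨x, hx, hdx⟩ := hleaf
  revert he hx
  induction e using Sym2.ind with
  | _ p q =>
    intro he hx
    rcases Sym2.mem_iff.mp hx with rfl | rfl
    · rw [SimpleGraph.mem_edgeSet] at he
      rw [Sym2.eq_swap]
      exact key T hT q x he.symm hdx
    · rw [SimpleGraph.mem_edgeSet] at he
      exact key T hT p x he hdx
end
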